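/- arXiv:2103.01942 — 12 statements merged into one kernel-verified Lean document; each statement's English description precedes it below -/
import Mathlib

section
/- For every ε ≤ 1/32 and every ε-expander G on n vertices (i.e., a graph in which there is an edge between every two disjoint vertex sets of size at least εn), there exists an induced subgraph of G on at least n/2 vertices such that every vertex set X of size at most n/16 in this subgraph has at least 2|X| neighbors outside X (within the subgraph). -/
open Classical in
/-- external neighbourhood of `X` inside `S` (vertices of `S` outside `X`
adjacent to some vertex of `X`). -/
noncomputable def extN {V : Type*} [Fintype V] [DecidableEq V] (G : SimpleGraph V)
    (S X : Finset V) : Finset V :=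
  S.filter (fun v => v ∉ X ∧ ∃ x ∈ X, G.Adj x v)

lemma extN_spec {V : Type*} [Fintype V] [DecidableEq V] (G : SimpleGraph V)
    (S X : Finset V) (v : V) :
    v ∈ extN G S X ↔ v ∈ S ∧ v ∉ X ∧ ∃ x ∈ X, G.Adj x v := by
  classical
  simp [extN]

lemma auxlem {V : Type*} [Fintype V] [DecidableEq V] (n : ℕ)
    (hn : Fintype.card V = n) (ε : ℝ) (hε : ε ≤ 1 / 32) (G : SimpleGraph V)
    (hexp : ∀ A B : Finset V, Disjoint A B → ε * n ≤ A.card → ε * n ≤ B.card →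
      ∃ a ∈ A, ∃ b ∈ B, G.Adj a b) :
    ∀ fuel : ℕ, ∀ W : Finset V, n - W.card ≤ fuel →
      (W.card : ℝ) ≤ n / 16 →
      (extN G Finset.univ W).card ≤ 2 * W.card →
      ∃ S : Finset V, (n : ℝ) / 2 ≤ S.card ∧
        ∀ X : Finset V, X ⊆ S → (X.card : ℝ) ≤ n / 16 →
          2 * X.card ≤ (extN G S X).card := by
  intro fuel
  induction fuel with
  | zero =>
    intro W hfuel hW _
    -- here W.card ≥ n and W.card ≤ n/16, so n = 0
    have hcard : W.card ≤ n := by rw [← hn]; exact Finset.card_le_univ W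
    have hWn : n ≤ W.card := by omega
    have hn0 : n = 0 := by
      have : (n : ℝ) ≤ (W.card : ℝ) := by exact_mod_cast hWn
      have : (n : ℝ) ≤ 0 := by linarith
      exact_mod_cast le_antisymm this (by positivity)
    refine ⟨∅, by simp [hn0], ?_⟩
    intro X hX _
    have : X = ∅ := Finset.subset_empty.mp hX
    simp [this]
  | succ fuel ih =>
    intro W hfuel hW hNW
    by_cases hgood : ∀ X : Finset V, X ⊆ Wᶜ → (X.card : ℝ) ≤ n / 16 →
        2 * X.card ≤ (extN G Wᶜ X).card
    · refine ⟨Wᶜ, ?_, hgood⟩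
      have hcard : W.card ≤ n := by rw [← hn]; exact Finset.card_le_univ W
      have : Wᶜ.card = n - W.card := by rw [Finset.card_compl, hn]
      have hcast : (Wᶜ.card : ℝ) = (n : ℝ) - W.card := by
        rw [this, Nat.cast_sub hcard]
      rw [hcast]
      have hn16 : (n : ℝ) / 16 ≤ n / 2 := by
        have : (0:ℝ) ≤ n := by positivity
        linarith
      linarith
    · push_neg at hgood
      obtain ⟨X, hXsub, hX16, hXbad⟩ := hgood
      have hXne : 1 ≤ X.card := by
        by_contra h
        have : X.card = 0 := by omega
        rw [this] at hXbad; omega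
      have hdisj : Disjoint W X := by
        rw [Finset.disjoint_left]
        intro a haW haX
        exact (Finset.mem_compl.mp (hXsub haX)) haW
      have hcardU : (W ∪ X).card = W.card + X.card := Finset.card_union_of_disjoint hdisj
      -- neighbourhood of the union
      have hsub : extN G Finset.univ (W ∪ X) ⊆
          (extN G Finset.univ W \ X) ∪ extN G Wᶜ X := by
        intro v hv
        rw [extN_spec] at hv
        obtain ⟨-, hvnot, x, hx, hadj⟩ := hv
        rw [Finset.mem_union] at hx hvnot ⊢
        push_neg at hvnot
        rcases hx with hx | hx
        · left
          rw [Finset.mem_sdiff, extN_spec]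
          exact ⟨⟨Finset.mem_univ v, hvnot.1, x, hx, hadj⟩, hvnot.2⟩
        · right
          rw [extN_spec]
          exact ⟨Finset.mem_compl.mpr hvnot.1, hvnot.2, x, hx, hadj⟩
      have hNU : (extN G Finset.univ (W ∪ X)).card ≤ 2 * (W ∪ X).card := by
        calc (extN G Finset.univ (W ∪ X)).card
            ≤ ((extN G Finset.univ W \ X) ∪ extN G Wᶜ X).card := Finset.card_le_card hsub
          _ ≤ (extN G Finset.univ W \ X).card + (extN G Wᶜ X).card :=
              Finset.card_union_le _ _
          _ ≤ (extN G Finset.univ W).card + (extN G Wᶜ X).card := by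
              gcongr; exact Finset.sdiff_subset
          _ ≤ 2 * (W ∪ X).card := by rw [hcardU]; omega
      by_cases h16 : ((W ∪ X).card : ℝ) ≤ n / 16
      · exact ih (W ∪ X) (by omega) h16 hNU
      · -- contradiction with expansion
        exfalso
        push_neg at h16
        set W' := W ∪ X with hW'
        set B := (W' ∪ extN G Finset.univ W')ᶜ with hB
        have hn0 : (0:ℝ) ≤ n := by positivity
        have hεn : ε * n ≤ n / 32 := by nlinarith
        have hA : ε * n ≤ W'.card := by
          have : (n:ℝ)/32 ≤ n/16 := by linarith
          linarith
        -- lower bound on B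
        have hcardB : B.card = n - (W' ∪ extN G Finset.univ W').card := by
          rw [hB, Finset.card_compl, hn]
        have hUcard : (W' ∪ extN G Finset.univ W').card ≤ W'.card + 2 * W'.card := by
          calc (W' ∪ extN G Finset.univ W').card
              ≤ W'.card + (extN G Finset.univ W').card := Finset.card_union_le _ _
            _ ≤ W'.card + 2 * W'.card := by omega
        have hUn : (W' ∪ extN G Finset.univ W').card ≤ n := by
          rw [← hn]; exact Finset.card_le_univ _
        have hW'8 : (W'.card : ℝ) ≤ n / 8 := by
          have : ((W'.card : ℕ) : ℝ) = (W.card : ℝ) + X.card := by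
            rw [hW', hcardU]; push_cast; ring
          rw [this]; linarith
        have hBcast : ((n : ℝ) - 3 * W'.card) ≤ B.card := by
          have h1 : ((W' ∪ extN G Finset.univ W').card : ℝ) ≤ 3 * W'.card := by
            exact_mod_cast le_trans hUcard (by omega)
          have h2 : (B.card : ℝ) = (n : ℝ) - (W' ∪ extN G Finset.univ W').card := by
            rw [hcardB, Nat.cast_sub hUn]
          linarith
        have hBbound : ε * n ≤ B.card := by
          have : (n:ℝ)/32 ≤ (n:ℝ) - 3 * (n/8) := by linarith
          linarith
        have hdisjAB : Disjoint W' B := by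
          rw [Finset.disjoint_left]
          intro a haW' haB
          rw [hB, Finset.mem_compl, Finset.mem_union] at haB
          exact haB (Or.inl haW')
        obtain ⟨a, ha, b, hb, hadj⟩ := hexp W' B hdisjAB hA hBbound
        rw [hB, Finset.mem_compl, Finset.mem_union] at hb
        push_neg at hb
        exact hb.2 ((extN_spec G Finset.univ W' b).mpr
          ⟨Finset.mem_univ b, hb.1, a, ha, hadj⟩)

/-- Every ε-expander (ε ≤ 1/32) on n vertices contains an induced
subgraph on at least n/2 vertices in which every vertex set X of size at most
n/16 has at least 2|X| neighbours outside X (within the subgraph). -/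
theorem stmt0 {V : Type*} [Fintype V] [DecidableEq V] (n : ℕ)
    (hn : Fintype.card V = n) (ε : ℝ) (hε : ε ≤ 1 / 32) (G : SimpleGraph V)
    (hexp : ∀ A B : Finset V, Disjoint A B → ε * n ≤ A.card → ε * n ≤ B.card →
      ∃ a ∈ A, ∃ b ∈ B, G.Adj a b) :
    ∃ S : Finset V, (n : ℝ) / 2 ≤ S.card ∧
      ∀ X : Finset V, X ⊆ S → (X.card : ℝ) ≤ n / 16 →
        2 * X.card ≤ ({v : V | v ∈ S ∧ v ∉ X ∧ ∃ x ∈ X, G.Adj x v} : Set V).ncard := by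
  have hE : extN G Finset.univ (∅ : Finset V) = ∅ := by
    ext v; rw [extN_spec]; simp
  obtain ⟨S, hS, hSgood⟩ := auxlem n hn ε hε G hexp n ∅ (by simp) (by simp; positivity)
    (by rw [hE]; simp)
  refine ⟨S, hS, ?_⟩
  intro X hX hX16
  have hset : ({v : V | v ∈ S ∧ v ∉ X ∧ ∃ x ∈ X, G.Adj x v} : Set V)
      = ↑(extN G S X) := by
    ext v
    simp only [Set.mem_setOf_eq, Finset.mem_coe, extN_spec]
  rw [hset, Set.ncard_coe_finset]
  exact hSgood X hX hX16
end

section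
/- Let d ≥ 2 and ε ≤ 1/(8d). Let G be a bipartite graph with parts X₁, X₂ of size n each, such that for every A₁ ⊆ X₁ and A₂ ⊆ X₂ with |A₁| ≥ εn and |A₂| ≥ εn there is an edge between A₁ and A₂. Then G contains an induced subgraph G' on at least n vertices such that every vertex set X of G' with |X| ≤ n/(4d) satisfies |N_{G'}(X)| ≥ d|X|. -/
open Finset

/-- The (outer) boundary of `Y` inside `S₀` in the graph `G`. -/
noncomputable def bnd {V : Type*} [DecidableEq V] (G : SimpleGraph V)
    (S₀ Y : Finset V) : Finset V :=
  @Finset.filter _ (fun v => v ∉ Y ∧ ∃ x ∈ Y, G.Adj x v) (Classical.decPred _) S₀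

lemma mem_bnd {V : Type*} [DecidableEq V] {G : SimpleGraph V} {S₀ Y : Finset V}
    {v : V} : v ∈ bnd G S₀ Y ↔ v ∈ S₀ ∧ v ∉ Y ∧ ∃ x ∈ Y, G.Adj x v := by
  simp [bnd, Finset.mem_filter]

lemma bnd_empty {V : Type*} [DecidableEq V] (G : SimpleGraph V) (S₀ : Finset V) :
    bnd G S₀ ∅ = ∅ := by
  ext v; simp [mem_bnd]

/-- A balanced bipartite ε-expander (ε ≤ 1/(8d)) with parts of
size n contains an induced subgraph on at least n vertices in which each
vertex set X with |X| ≤ n/(4d) has at least d|X| neighbours outside X. -/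
theorem stmt1 {V : Type*} [Fintype V] [DecidableEq V] (n d : ℕ) (hd : 2 ≤ d)
    (ε : ℝ) (hε : ε ≤ 1 / (8 * d)) (G : SimpleGraph V) (X₁ X₂ : Finset V)
    (hdisj : Disjoint X₁ X₂) (hcard1 : X₁.card = n) (hcard2 : X₂.card = n)
    (hbip : ∀ u v, G.Adj u v → (u ∈ X₁ ∧ v ∈ X₂) ∨ (u ∈ X₂ ∧ v ∈ X₁))
    (hexp : ∀ A₁ ⊆ X₁, ∀ A₂ ⊆ X₂, ε * n ≤ A₁.card → ε * n ≤ A₂.card →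
      ∃ a ∈ A₁, ∃ b ∈ A₂, G.Adj a b) :
    ∃ S : Finset V, S ⊆ X₁ ∪ X₂ ∧ n ≤ S.card ∧
      ∀ X : Finset V, X ⊆ S → (X.card : ℝ) ≤ n / (4 * d) →
        d * X.card ≤ ({v : V | v ∈ S ∧ v ∉ X ∧ ∃ x ∈ X, G.Adj x v} : Set V).ncard := by
  classical
  set S₀ : Finset V := X₁ ∪ X₂ with hS₀def
  have hd2 : (2:ℝ) ≤ (d:ℝ) := by exact_mod_cast hd
  have hd0 : (0:ℝ) < (d:ℝ) := by linarith
  have hn0 : (0:ℝ) ≤ (n:ℝ) := by positivity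
  have hcardS₀ : S₀.card = 2 * n := by
    rw [hS₀def, Finset.card_union_of_disjoint hdisj, hcard1, hcard2]; ring
  -- the "bad set" predicate
  set Bad : Finset V → Prop := fun Y =>
    Y ⊆ S₀ ∧ ((Y.card : ℝ) ≤ n / (2 * d)) ∧ ((bnd G S₀ Y).card < d * Y.card)
    with hBaddef
  -- Lemma A: any bad set is in fact small
  have hA : ∀ Y : Finset V, Bad Y → (Y.card : ℝ) ≤ n / (4 * d) := by
    intro Y hY
    obtain ⟨hYsub, hY2, hYB⟩ := hY
    by_contra hcon
    push_neg at hcon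
    -- split Y into its two parts
    have hsplitset : (Y ∩ X₁) ∪ (Y ∩ X₂) = Y := by
      rw [← Finset.inter_union_distrib_left]
      exact Finset.inter_eq_left.2 hYsub
    have hsplit : (Y ∩ X₁).card + (Y ∩ X₂).card = Y.card := by
      rw [← Finset.card_union_of_disjoint
        (hdisj.mono Finset.inter_subset_right Finset.inter_subset_right), hsplitset]
    have hsplitR : ((Y ∩ X₁).card : ℝ) + ((Y ∩ X₂).card : ℝ) = (Y.card : ℝ) := by
      exact_mod_cast hsplit
    have hYBR : ((bnd G S₀ Y).card : ℝ) ≤ (d : ℝ) * Y.card := by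
      have : ((bnd G S₀ Y).card : ℝ) < ((d * Y.card : ℕ) : ℝ) := by exact_mod_cast hYB
      push_cast at this; linarith
    have hBn2 : ((bnd G S₀ Y).card : ℝ) ≤ (n:ℝ) / 2 := by
      have h1 : (d:ℝ) * Y.card ≤ (d:ℝ) * (n / (2*d)) :=
        mul_le_mul_of_nonneg_left hY2 (le_of_lt hd0)
      have h2 : (d:ℝ) * ((n:ℝ) / (2*d)) = n / 2 := by
        field_simp
      linarith
    have hY4n : (Y.card : ℝ) ≤ (n:ℝ) / 4 := by
      have : (n:ℝ) / (2*d) ≤ n / 4 :=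
        div_le_div_of_nonneg_left hn0 (by norm_num) (by linarith)
      linarith
    have hεn : ε * n ≤ (n:ℝ) / (8*d) := by
      have := mul_le_mul_of_nonneg_right hε hn0
      calc ε * n ≤ 1 / (8*d) * n := this
        _ = (n:ℝ) / (8*d) := by ring
    have h48 : (n:ℝ) / (4*d) = 2 * ((n:ℝ) / (8*d)) := by ring
    have hεquarter : ε * n ≤ (n:ℝ) / 4 := by
      have : (n:ℝ) / (8*d) ≤ n / 16 :=
        div_le_div_of_nonneg_left hn0 (by norm_num) (by linarith)
      linarith
    by_cases h1 : ε * n ≤ ((Y ∩ X₁).card : ℝ)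
    · -- A₁ = Y ∩ X₁, A₂ = X₂ \ (Y ∪ bnd)
      have hA2card : ε * n ≤ ((X₂ \ (Y ∪ bnd G S₀ Y)).card : ℝ) := by
        have hle : X₂.card ≤ (X₂ \ (Y ∪ bnd G S₀ Y)).card + (Y ∪ bnd G S₀ Y).card :=
          Finset.card_le_card_sdiff_add_card
        have hle2 : (Y ∪ bnd G S₀ Y).card ≤ Y.card + (bnd G S₀ Y).card :=
          Finset.card_union_le _ _
        have hR : (n:ℝ) ≤ ((X₂ \ (Y ∪ bnd G S₀ Y)).card : ℝ)
            + (Y.card : ℝ) + ((bnd G S₀ Y).card : ℝ) := by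
          rw [← hcard2]; exact_mod_cast le_trans hle (by omega)
        linarith
      obtain ⟨a, ha, b, hb, hab⟩ := hexp (Y ∩ X₁) Finset.inter_subset_right
        (X₂ \ (Y ∪ bnd G S₀ Y)) (Finset.sdiff_subset) h1 hA2card
      rw [Finset.mem_sdiff, Finset.mem_union] at hb
      push_neg at hb
      exact hb.2.2 (mem_bnd.2 ⟨Finset.mem_union_right _ hb.1, hb.2.1,
        a, Finset.mem_of_mem_inter_left ha, hab⟩)
    · push_neg at h1
      have h2 : ε * n ≤ ((Y ∩ X₂).card : ℝ) := by linarith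
      have hA1card : ε * n ≤ ((X₁ \ (Y ∪ bnd G S₀ Y)).card : ℝ) := by
        have hle : X₁.card ≤ (X₁ \ (Y ∪ bnd G S₀ Y)).card + (Y ∪ bnd G S₀ Y).card :=
          Finset.card_le_card_sdiff_add_card
        have hle2 : (Y ∪ bnd G S₀ Y).card ≤ Y.card + (bnd G S₀ Y).card :=
          Finset.card_union_le _ _
        have hR : (n:ℝ) ≤ ((X₁ \ (Y ∪ bnd G S₀ Y)).card : ℝ)
            + (Y.card : ℝ) + ((bnd G S₀ Y).card : ℝ) := by
          rw [← hcard1]; exact_mod_cast le_trans hle (by omega)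
        linarith
      obtain ⟨a, ha, b, hb, hab⟩ := hexp (X₁ \ (Y ∪ bnd G S₀ Y)) (Finset.sdiff_subset)
        (Y ∩ X₂) Finset.inter_subset_right hA1card h2
      rw [Finset.mem_sdiff, Finset.mem_union] at ha
      push_neg at ha
      exact ha.2.2 (mem_bnd.2 ⟨Finset.mem_union_left _ ha.1, ha.2.1,
        b, Finset.mem_of_mem_inter_left hb, hab.symm⟩)
  -- choose a maximal element of the family of bad sets (together with ∅)
  set F : Finset (Finset V) := S₀.powerset.filter (fun Y => Bad Y ∨ Y = ∅) with hFdef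
  have hFne : F.Nonempty := ⟨∅, by simp [hFdef]⟩
  obtain ⟨Y, hYF, hYmax⟩ := F.exists_maximal hFne
  rw [hFdef, Finset.mem_filter, Finset.mem_powerset] at hYF
  obtain ⟨hYsub, hYprop⟩ := hYF
  have hY4 : (Y.card : ℝ) ≤ (n:ℝ) / (4*d) := by
    rcases hYprop with h | h
    · exact hA Y h
    · rw [h]; simp; positivity
  have hYB_le : (bnd G S₀ Y).card ≤ d * Y.card := by
    rcases hYprop with h | h
    · exact le_of_lt h.2.2
    · rw [h, bnd_empty]; simp
  set S : Finset V := S₀ \ (Y ∪ bnd G S₀ Y) with hSdef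
  have hSsub : S ⊆ S₀ := Finset.sdiff_subset
  -- cardinality of S
  have hY4' : (Y.card : ℝ) * (4*d) ≤ n := by
    rwa [← le_div_iff₀ (by positivity)]
  have hScard : n ≤ S.card := by
    have hle : S₀.card ≤ S.card + (Y ∪ bnd G S₀ Y).card :=
      Finset.card_le_card_sdiff_add_card
    have hle2 : (Y ∪ bnd G S₀ Y).card ≤ Y.card + d * Y.card := by
      calc (Y ∪ bnd G S₀ Y).card ≤ Y.card + (bnd G S₀ Y).card := Finset.card_union_le _ _
        _ ≤ Y.card + d * Y.card := by omega
    have hR : 2 * (n:ℝ) ≤ (S.card : ℝ) + (Y.card : ℝ) + (d:ℝ) * Y.card := by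
      have : (S₀.card : ℝ) ≤ (S.card : ℝ) + ((Y.card : ℝ) + (d:ℝ) * Y.card) := by
        exact_mod_cast le_trans hle (by omega)
      rw [hcardS₀] at this; push_cast at this; linarith
    have hYnn : (0:ℝ) ≤ (Y.card : ℝ) := by positivity
    have key : (Y.card : ℝ) + (d:ℝ) * Y.card ≤ n := by
      nlinarith [mul_nonneg (show (0:ℝ) ≤ 3*(d:ℝ) - 1 by linarith) hYnn]
    have : (n:ℝ) ≤ (S.card : ℝ) := by linarith
    exact_mod_cast this
  refine ⟨S, hSsub, hScard, ?_⟩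
  intro X hXS hX4
  set T : Finset V := S.filter (fun v => v ∉ X ∧ ∃ x ∈ X, G.Adj x v) with hTdef
  have hset : ({v : V | v ∈ S ∧ v ∉ X ∧ ∃ x ∈ X, G.Adj x v} : Set V) = ↑T := by
    ext v; simp [hTdef, Finset.mem_filter]
  rw [hset, Set.ncard_coe_finset]
  by_contra hcon
  push_neg at hcon
  -- X is nonempty
  have hXne : X.Nonempty := by
    rw [Finset.nonempty_iff_ne_empty]
    intro h; rw [h] at hcon; simp at hcon
  -- X is disjoint from Y
  have hdisjYX : Disjoint Y X := by
    have : Disjoint X (Y ∪ bnd G S₀ Y) :=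
      Finset.disjoint_of_subset_left hXS Finset.sdiff_disjoint
    exact (Finset.disjoint_union_right.1 this).1.symm
  have hcardY' : (Y ∪ X).card = Y.card + X.card := Finset.card_union_of_disjoint hdisjYX
  -- the boundary of Y ∪ X is contained in bnd Y ∪ T
  have hbndsub : bnd G S₀ (Y ∪ X) ⊆ bnd G S₀ Y ∪ T := by
    intro v hv
    rw [mem_bnd] at hv
    obtain ⟨hvS₀, hvnYX, x, hx, hadj⟩ := hv
    rw [Finset.mem_union] at hvnYX hx
    push_neg at hvnYX
    rcases hx with hx | hx
    · exact Finset.mem_union_left _ (mem_bnd.2 ⟨hvS₀, hvnYX.1, x, hx, hadj⟩)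
    · by_cases hvb : v ∈ bnd G S₀ Y
      · exact Finset.mem_union_left _ hvb
      · refine Finset.mem_union_right _ ?_
        rw [hTdef, Finset.mem_filter]
        refine ⟨?_, hvnYX.2, x, hx, hadj⟩
        refine Finset.mem_sdiff.2 ⟨hvS₀, fun h => ?_⟩
        rcases Finset.mem_union.1 h with h | h
        · exact hvnYX.1 h
        · exact hvb h
  -- Y ∪ X is bad
  have hBadY' : Bad (Y ∪ X) := by
    refine ⟨Finset.union_subset hYsub (hXS.trans hSsub), ?_, ?_⟩
    · rw [hcardY']
      push_cast
      have : (n:ℝ)/(4*d) + (n:ℝ)/(4*d) = n/(2*d) := by ring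
      linarith
    · have h1 : (bnd G S₀ (Y ∪ X)).card ≤ (bnd G S₀ Y).card + T.card :=
        le_trans (Finset.card_le_card hbndsub) (Finset.card_union_le _ _)
      have hX0 : 0 < X.card := Finset.card_pos.2 hXne
      rw [hcardY']
      calc (bnd G S₀ (Y ∪ X)).card ≤ (bnd G S₀ Y).card + T.card := h1
        _ < d * Y.card + d * X.card := by
            have := hcon
            have hd1 : 1 ≤ d := by omega
            omega
        _ = d * (Y.card + X.card) := by ring
  -- contradiction with maximality of Y
  have hY'F : Y ∪ X ∈ F := by
    rw [hFdef, Finset.mem_filter, Finset.mem_powerset]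
    exact ⟨Finset.union_subset hYsub (hXS.trans hSsub), Or.inl hBadY'⟩
  refine (fun h' => not_subset_of_ssubset h' (hYmax hY'F (subset_of_ssubset h'))) ?_
  refine Finset.ssubset_iff_subset_ne.2 ⟨Finset.subset_union_left, ?_⟩
  intro h
  obtain ⟨x, hx⟩ := hXne
  have : x ∈ Y := h ▸ Finset.mem_union_right _ hx
  exact (Finset.disjoint_right.1 hdisjYX hx) this
end

section
/- Let G be a graph on n vertices. Suppose A ⊆ V(G) is a set that is maximal (with respect to inclusion) among sets satisfying |A| ≤ m and |N_G(A)| < d|A|, for given parameters m ≥ 1, d ≥ 2. Then the induced subgraph G' = G \ (A ∪ N_G(A)) is (m/2, d)-expanding, i.e., every B ⊆ V(G') with |B| ≤ m/2 and |A| + |B| ≤ m satisfies |N_{G'}(B)| ≥ d|B|. -/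
/-- The (outside) neighbourhood of a set of vertices. -/
def nset {V : Type*} (G : SimpleGraph V) (A : Set V) : Set V :=
  {v | v ∉ A ∧ ∃ x ∈ A, G.Adj x v}

/-- If A is maximal (w.r.t. inclusion) among vertex sets with
|A| ≤ m and |N(A)| < d|A|, then G' = G \ (A ∪ N(A)) is (m/2, d)-expanding:
every B ⊆ V(G') with |B| ≤ m/2 and |A| + |B| ≤ m satisfies |N_{G'}(B)| ≥ d|B|. -/
theorem stmt2 {V : Type*} [Fintype V] [DecidableEq V] (m d : ℕ) (hm : 1 ≤ m)
    (hd : 2 ≤ d) (G : SimpleGraph V) (A : Finset V)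
    (hA1 : A.card ≤ m) (hA2 : (nset G ↑A).ncard < d * A.card)
    (hmax : ∀ A' : Finset V, A ⊆ A' → A'.card ≤ m →
      (nset G ↑A').ncard < d * A'.card → A' = A) :
    ∀ B : Finset V, (↑B : Set V) ⊆ Set.univ \ (↑A ∪ nset G ↑A) →
      2 * B.card ≤ m → A.card + B.card ≤ m →
      d * B.card ≤
        ({v : V | v ∈ Set.univ \ (↑A ∪ nset G ↑A) ∧ v ∉ B ∧ ∃ x ∈ B, G.Adj x v} : Set V).ncard := by
  intro B hB hB2 hB3
  by_contra hcon
  push_neg at hcon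
  -- B is disjoint from A
  have hdisj : ∀ b ∈ B, b ∉ A := by
    intro b hb hbA
    have := hB (by exact_mod_cast hb)
    exact this.2 (Or.inl hbA)
  have hdisjN : ∀ b ∈ B, b ∉ nset G (↑A : Set V) := by
    intro b hb hbN
    have := hB (by exact_mod_cast hb)
    exact this.2 (Or.inr hbN)
  set N' : Set V := {v : V | v ∈ Set.univ \ ((↑A : Set V) ∪ nset G ↑A) ∧ v ∉ B ∧ ∃ x ∈ B, G.Adj x v}
  -- key inclusion
  have hsub : nset G (↑(A ∪ B) : Set V) ⊆ nset G (↑A : Set V) ∪ N' := by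
    intro v hv
    obtain ⟨hvnot, x, hx, hadj⟩ := hv
    simp only [Finset.coe_union, Set.mem_union] at hvnot hx
    push_neg at hvnot
    by_cases hvN : v ∈ nset G (↑A : Set V)
    · exact Or.inl hvN
    · refine Or.inr ⟨⟨trivial, ?_⟩, ?_, ?_⟩
      · rintro (h | h)
        · exact hvnot.1 h
        · exact hvN h
      · exact hvnot.2
      · rcases hx with hxA | hxB
        · exact absurd ⟨hvnot.1, x, hxA, hadj⟩ hvN
        · exact ⟨x, hxB, hadj⟩
  have hcardun : (A ∪ B).card = A.card + B.card := by
    rw [Finset.card_union_of_disjoint]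
    exact Finset.disjoint_left.mpr (fun a ha hb => hdisj a hb ha)
  have hkey : (nset G (↑(A ∪ B) : Set V)).ncard < d * (A ∪ B).card := by
    calc (nset G (↑(A ∪ B) : Set V)).ncard
        ≤ (nset G (↑A : Set V) ∪ N').ncard := Set.ncard_le_ncard hsub (Set.toFinite _)
      _ ≤ (nset G (↑A : Set V)).ncard + N'.ncard :=
          Set.ncard_union_le _ _
      _ < d * A.card + d * B.card := by omega
      _ = d * (A ∪ B).card := by rw [hcardun]; ring
  have heq := hmax (A ∪ B) (Finset.subset_union_left) (by omega) hkey
  -- then B ⊆ A, contradicting disjointness unless B empty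
  have hBempty : B = ∅ := by
    by_contra hne
    obtain ⟨b, hb⟩ := Finset.nonempty_iff_ne_empty.mpr hne
    have : b ∈ A := heq ▸ Finset.mem_union_right A hb
    exact hdisj b hb this
  rw [hBempty] at hcon
  simp at hcon
end

section
/- Let G be an ε-expander on N vertices and let F be a subgraph of G on at least N/2 vertices such that every X ⊆ V(F) with |X| ≤ N/16 satisfies |N_F(X)| ≥ 2|X|, where ε ≤ 1/16. Let k, t be positive integers. Then the graph G' on V(F), in which two vertices are adjacent when their distance in F is at most k/t (and which thus is the (k/t)-th power of F), is a 2^{-k/(3t)}-expander, provided 2^{k/(3t)} · N/16 ≥ N, i.e., k/(3t) ≥ 4. -/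
open Classical

private noncomputable def grow {V : Type*} [Fintype V] [DecidableEq V]
    (F : SimpleGraph V) (S A : Finset V) : ℕ → Finset V
  | 0 => A
  | (i+1) =>
      grow F S A i ∪
        S.filter (fun v => v ∉ grow F S A i ∧ ∃ x ∈ grow F S A i, F.Adj x v)

private lemma grow_subset_S {V : Type*} [Fintype V] [DecidableEq V]
    (F : SimpleGraph V) (S A : Finset V) (hA : A ⊆ S) :
    ∀ i, grow F S A i ⊆ S := by
  intro i
  induction i with
  | zero => exact hA
  | succ i ih =>
    simp only [grow]
    exact Finset.union_subset ih (Finset.filter_subset _ _)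

private lemma grow_walk {V : Type*} [Fintype V] [DecidableEq V]
    (F : SimpleGraph V) (S A : Finset V) :
    ∀ i, ∀ v ∈ grow F S A i, ∃ a ∈ A, ∃ p : F.Walk a v, p.length ≤ i := by
  intro i
  induction i with
  | zero =>
    intro v hv
    exact ⟨v, hv, SimpleGraph.Walk.nil, by simp⟩
  | succ i ih =>
    intro v hv
    simp only [grow, Finset.mem_union, Finset.mem_filter] at hv
    rcases hv with hv | ⟨-, -, x, hx, hadj⟩
    · obtain ⟨a, ha, p, hp⟩ := ih v hv
      exact ⟨a, ha, p, hp.trans (Nat.le_succ i)⟩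
    · obtain ⟨a, ha, p, hp⟩ := ih x hx
      refine ⟨a, ha, p.append (SimpleGraph.Walk.cons hadj SimpleGraph.Walk.nil), ?_⟩
      simp only [SimpleGraph.Walk.length_append, SimpleGraph.Walk.length_cons,
        SimpleGraph.Walk.length_nil]
      omega

private lemma grow_card {V : Type*} [Fintype V] [DecidableEq V] (N : ℕ)
    (F : SimpleGraph V) (S A : Finset V) (hA : A ⊆ S)
    (hexpF : ∀ X : Finset V, X ⊆ S → 16 * X.card ≤ N →
      2 * X.card ≤ ({v : V | v ∈ S ∧ v ∉ X ∧ ∃ x ∈ X, F.Adj x v} : Set V).ncard) :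
    ∀ i, N < 16 * (grow F S A i).card ∨ 2 ^ i * A.card ≤ (grow F S A i).card := by
  intro i
  induction i with
  | zero => right; simp [grow]
  | succ i ih =>
    by_cases hbig : N < 16 * (grow F S A i).card
    · left
      have hsub : grow F S A i ⊆ grow F S A (i + 1) := by
        simp only [grow]; exact Finset.subset_union_left
      have := Finset.card_le_card hsub
      omega
    · push_neg at hbig
      right
      have hXS : grow F S A i ⊆ S := grow_subset_S F S A hA i
      have hexp := hexpF (grow F S A i) hXS hbig
      have hset : ({v : V | v ∈ S ∧ v ∉ grow F S A i ∧ ∃ x ∈ grow F S A i, F.Adj x v} : Set V)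
          = ↑(S.filter (fun v => v ∉ grow F S A i ∧ ∃ x ∈ grow F S A i, F.Adj x v)) := by
        ext v; simp [Finset.mem_filter]
      rw [hset, Set.ncard_coe_finset] at hexp
      have hdisj : Disjoint (grow F S A i)
          (S.filter (fun v => v ∉ grow F S A i ∧ ∃ x ∈ grow F S A i, F.Adj x v)) := by
        rw [Finset.disjoint_right]
        intro v hv
        simp only [Finset.mem_filter] at hv
        exact hv.2.1
      have hcard : (grow F S A (i + 1)).card = (grow F S A i).card +
          (S.filter (fun v => v ∉ grow F S A i ∧ ∃ x ∈ grow F S A i, F.Adj x v)).card := by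
        simp only [grow]
        rw [Finset.card_union_of_disjoint hdisj]
      rcases ih with h | h
      · omega
      · have : 2 ^ (i + 1) * A.card = 2 * (2 ^ i * A.card) := by ring
        omega

/-- Let G be an ε-expander (ε ≤ 1/16) on N vertices, and F ⊆ G a
subgraph on a vertex set S with |S| ≥ N/2 such that every X ⊆ S with
|X| ≤ N/16 satisfies |N_F(X)| ≥ 2|X|.  If k/(3t) ≥ 4 (i.e. 12t ≤ k), then for
every two disjoint sets A, B ⊆ S of size at least 2^{-k/(3t)}|S| there is an
edge of G^k between A and B (i.e. the power of F on S is a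
2^{-k/(3t)}-expander, with the connecting edge taken in G^k). -/
theorem stmt4 {V : Type*} [Fintype V] [DecidableEq V] (N k t : ℕ) (ht : 1 ≤ t)
    (hk : 12 * t ≤ k) (hN : Fintype.card V = N) (ε : ℝ) (hε : ε ≤ 1 / 16)
    (G F : SimpleGraph V) (S : Finset V) (hFG : F ≤ G)
    (hFS : ∀ u v, F.Adj u v → u ∈ S ∧ v ∈ S)
    (hScard : (N : ℝ) / 2 ≤ S.card)
    (hexpG : ∀ A B : Finset V, Disjoint A B → ε * N ≤ A.card → ε * N ≤ B.card →
      ∃ a ∈ A, ∃ b ∈ B, G.Adj a b)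
    (hexpF : ∀ X : Finset V, X ⊆ S → 16 * X.card ≤ N →
      2 * X.card ≤ ({v : V | v ∈ S ∧ v ∉ X ∧ ∃ x ∈ X, F.Adj x v} : Set V).ncard) :
    ∀ A B : Finset V, A ⊆ S → B ⊆ S → Disjoint A B →
      (2 : ℝ) ^ (-(k : ℝ) / (3 * t)) * S.card ≤ A.card →
      (2 : ℝ) ^ (-(k : ℝ) / (3 * t)) * S.card ≤ B.card →
      ∃ a ∈ A, ∃ b ∈ B, a ≠ b ∧ G.Reachable a b ∧ G.dist a b ≤ k := by
  intro A B hAS hBS hAB hAcard hBcard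
  -- rule out N = 0
  rcases Nat.eq_zero_or_pos N with hN0 | hNpos
  · exfalso
    obtain ⟨a, ha, -⟩ := hexpG ∅ ∅ (Finset.disjoint_empty_left ∅)
      (by simp [hN0]) (by simp [hN0])
    simp at ha
  -- the radius
  set r : ℕ := k / (3 * t) with hr
  have h3t : 0 < 3 * t := by omega
  have hrk : 2 * r + 1 ≤ k := by
    have h1 : r * (3 * t) ≤ k := Nat.div_mul_le_self k (3 * t)
    have h1' : 3 * r ≤ r * (3 * t) := by
      calc 3 * r = r * 3 := by ring
        _ ≤ r * (3 * t) := Nat.mul_le_mul_left r (by omega)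
    have h2 : 4 ≤ r := (Nat.le_div_iff_mul_le h3t).mpr (by omega)
    omega
  have hk3t : k < 3 * t * (r + 1) := by
    have h1 := Nat.div_add_mod k (3 * t)
    have h2 : k % (3 * t) < 3 * t := Nat.mod_lt _ h3t
    calc k = 3 * t * r + k % (3 * t) := by rw [hr]; omega
      _ < 3 * t * r + 3 * t := by omega
      _ = 3 * t * (r + 1) := by ring
  have hrm : (k : ℝ) / (3 * t) < r + 1 := by
    have ht' : (0 : ℝ) < 3 * (t : ℝ) := by positivity
    rw [div_lt_iff₀ ht']
    calc (k : ℝ) < ((3 * t * (r + 1) : ℕ) : ℝ) := by exact_mod_cast hk3t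
      _ = ((r : ℝ) + 1) * (3 * (t : ℝ)) := by push_cast; ring
  -- ball sizes reach ε N
  have hNR : (0 : ℝ) < N := by exact_mod_cast hNpos
  have key : ∀ C : Finset V, C ⊆ S →
      (2 : ℝ) ^ (-(k : ℝ) / (3 * t)) * S.card ≤ C.card →
      ε * N ≤ (grow F S C r).card := by
    intro C hCS hCcard
    rcases grow_card N F S C hCS hexpF r with h | h
    · have h' : (N : ℝ) < 16 * (grow F S C r).card := by exact_mod_cast h
      nlinarith
    · have h2 : (2 : ℝ) ^ r * C.card ≤ (grow F S C r).card := by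
        exact_mod_cast h
      have hC0 : (2 : ℝ) ^ r * ((2 : ℝ) ^ (-(k : ℝ) / (3 * t)) * S.card)
          ≤ (2 : ℝ) ^ r * C.card :=
        mul_le_mul_of_nonneg_left hCcard (by positivity)
      have hpow : (N : ℝ) / 4 ≤ (2 : ℝ) ^ r * ((2 : ℝ) ^ (-(k : ℝ) / (3 * t)) * S.card) := by
        have e1 : (2 : ℝ) ^ r * (2 : ℝ) ^ (-(k : ℝ) / (3 * t))
            = (2 : ℝ) ^ ((r : ℝ) + (-(k : ℝ) / (3 * t))) := by
          rw [Real.rpow_add (by norm_num : (0:ℝ) < 2), Real.rpow_natCast]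
        have e2 : (2 : ℝ) ^ ((-1 : ℝ)) ≤ (2 : ℝ) ^ ((r : ℝ) + (-(k : ℝ) / (3 * t))) := by
          apply (Real.rpow_le_rpow_left_iff (by norm_num : (1:ℝ) < 2)).mpr
          have hneg : -(k : ℝ) / (3 * t) = -((k : ℝ) / (3 * t)) := by ring
          rw [hneg]
          have : ((3 : ℝ) * t) = 3 * (t : ℝ) := by push_cast; ring
          rw [this]
          linarith [hrm]
        have e3 : (2 : ℝ) ^ ((-1 : ℝ)) = 1 / 2 := by
          rw [Real.rpow_neg (by norm_num : (0:ℝ) ≤ 2), Real.rpow_one]; norm_num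
        have hS0 : (0 : ℝ) ≤ S.card := by positivity
        calc (N : ℝ) / 4 = (1 / 2) * ((N : ℝ) / 2) := by ring
          _ ≤ (1 / 2) * S.card := by linarith
          _ ≤ (2 : ℝ) ^ ((r : ℝ) + (-(k : ℝ) / (3 * t))) * S.card := by
              rw [← e3]; exact mul_le_mul_of_nonneg_right e2 hS0
          _ = (2 : ℝ) ^ r * ((2 : ℝ) ^ (-(k : ℝ) / (3 * t)) * S.card) := by
              rw [← mul_assoc, e1]
      have hεN : ε * N ≤ (N : ℝ) / 4 := by nlinarith
      linarith
  have hAr := key A hAS hAcard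
  have hBr := key B hBS hBcard
  by_cases hdisj : Disjoint (grow F S A r) (grow F S B r)
  · obtain ⟨a', ha', b', hb', hadj⟩ := hexpG _ _ hdisj hAr hBr
    obtain ⟨a, ha, pa, hpa⟩ := grow_walk F S A r a' ha'
    obtain ⟨b, hb, pb, hpb⟩ := grow_walk F S B r b' hb'
    have hw : ∃ w : G.Walk a b, w.length ≤ k := by
      refine ⟨((pa.mapLe hFG).append
        (SimpleGraph.Walk.cons hadj SimpleGraph.Walk.nil)).append (pb.mapLe hFG).reverse, ?_⟩
      simp only [SimpleGraph.Walk.mapLe, SimpleGraph.Walk.length_append,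
        SimpleGraph.Walk.length_reverse, SimpleGraph.Walk.length_cons,
        SimpleGraph.Walk.length_nil, SimpleGraph.Walk.length_map]
      omega
    obtain ⟨w, hwlen⟩ := hw
    exact ⟨a, ha, b, hb, fun h => Finset.disjoint_left.mp hAB ha (h ▸ hb), ⟨w⟩,
      (SimpleGraph.dist_le w).trans hwlen⟩
  · rw [Finset.not_disjoint_iff] at hdisj
    obtain ⟨v, hvA, hvB⟩ := hdisj
    obtain ⟨a, ha, pa, hpa⟩ := grow_walk F S A r v hvA
    obtain ⟨b, hb, pb, hpb⟩ := grow_walk F S B r v hvB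
    have hw : ∃ w : G.Walk a b, w.length ≤ k := by
      refine ⟨(pa.mapLe hFG).append (pb.mapLe hFG).reverse, ?_⟩
      simp only [SimpleGraph.Walk.mapLe, SimpleGraph.Walk.length_append,
        SimpleGraph.Walk.length_reverse, SimpleGraph.Walk.length_map]
      omega
    obtain ⟨w, hwlen⟩ := hw
    exact ⟨a, ha, b, hb, fun h => Finset.disjoint_left.mp hAB ha (h ▸ hb), ⟨w⟩,
      (SimpleGraph.dist_le w).trans hwlen⟩
end

section
/- Let r, ℓ, s, h, d be positive integers with r ≤ ℓ and (2ℓ+1 choose r)·s-type Ramsey bounds satisfied: assume h is large enough that the Ramsey number of r-uniform cliques guarantees a monochromatic (2ℓ+1)-set among h+1 vertices in any s-colouring of r-sets. Let T be the complete binary ordered tree of height h, and colour all r-subsets of the leaves of T with s colours so that any two r-sets of leaves corresponding to isomorphic ordered subtrees receive the same colour. Then there exist pairwise disjoint sets X, Y, Z of leaves, each of size ℓ, such that the minimal subtrees of T spanned by X and by Z are isomorphic (as ordered trees) and vertex-disjoint, and every r-subset of X ∪ Y and every r-subset of Y ∪ Z has the same single colour. -/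
/-!
We model the complete binary ordered tree of height `h` by identifying its
leaves with the numbers `0, …, 2^h - 1` (their `h`-bit binary expansions are
the root-to-leaf paths, the left-to-right leaf order is the numerical order).

* `lcpDepth h a b` is the depth of the meet of leaves `a` and `b`, i.e. the
  length of the longest common prefix of their `h`-bit expansions.
* The ordered isomorphism type of the minimal subtree spanned by a set `X` of
  leaves is determined by the sequence of meet-depths of consecutive leaves
  (in order); this is `lcpSeq h X`.
* `spanTree h X` is the vertex set of the minimal subtree of the binary tree
  spanned by `X`; a vertex at depth `t` is coded by the pair
  `(t, prefix-of-length-t)`, a prefix being coded as `i / 2^(h-t)`.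
-/

/-- Depth of the meet of leaves `a, b < 2^h` in the complete binary tree of
height `h` (length of the longest common prefix of the `h`-bit expansions). -/
def lcpDepth (h a b : ℕ) : ℕ := h - Nat.size (a ^^^ b)

/-- The sequence of meet-depths of consecutive leaves of `X`, which encodes
the ordered isomorphism type of the minimal subtree spanned by `X`. -/
def lcpSeq (h : ℕ) (X : Finset ℕ) : List ℕ :=
  List.zipWith (lcpDepth h) (X.sort (· ≤ ·)) (X.sort (· ≤ ·)).tail

/-- The vertex set of the minimal subtree of the complete binary tree of
height `h` spanned by the leaf set `X`. -/
def spanTree (h : ℕ) (X : Finset ℕ) : Set (ℕ × ℕ) :=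
  {q | q.1 ≤ h ∧ (∃ a ∈ X, ∃ b ∈ X, lcpDepth h a b ≤ q.1) ∧
    ∃ i ∈ X, q.2 = i / 2 ^ (h - q.1)}



section core
lemma size_eq_succ {k x : ℕ} (h1 : 2 ^ k ≤ x) (h2 : x < 2 ^ (k + 1)) :
    Nat.size x = k + 1 :=
  le_antisymm (Nat.size_le.2 h2) (Nat.lt_size.2 h1)

lemma xor_add_add {m a w1 w2 : ℕ} (ha : 2 ^ m ∣ a) (h1 : w1 < 2 ^ m)
    (h2 : w2 < 2 ^ m) : (a + w1) ^^^ (a + w2) = w1 ^^^ w2 := by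
  obtain ⟨q, rfl⟩ := ha
  apply Nat.eq_of_testBit_eq
  intro i
  rw [Nat.testBit_xor, Nat.testBit_two_pow_mul_add _ h1,
    Nat.testBit_two_pow_mul_add _ h2]
  by_cases hi : i < m
  · simp [hi]
  · have : (w1 ^^^ w2).testBit i = false := by
      refine Nat.testBit_lt_two_pow ?_
      exact lt_of_lt_of_le (Nat.xor_lt_two_pow h1 h2)
        (Nat.pow_le_pow_right (by norm_num) (by omega))
    simp [hi, this]

lemma xor_lt_of_div_eq {a b m : ℕ} (h : a / 2 ^ m = b / 2 ^ m) :
    a ^^^ b < 2 ^ m := by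
  have hpos : 0 < (2:ℕ) ^ m := Nat.pow_pos (by norm_num)
  have ha : a = 2 ^ m * (a / 2 ^ m) + a % 2 ^ m := by
    rw [Nat.div_add_mod]
  have hb : b = 2 ^ m * (a / 2 ^ m) + b % 2 ^ m := by
    rw [h, Nat.div_add_mod]
  calc a ^^^ b
      = (2 ^ m * (a / 2 ^ m) + a % 2 ^ m) ^^^ (2 ^ m * (a / 2 ^ m) + b % 2 ^ m) := by
        rw [← ha, ← hb]
    _ = (a % 2 ^ m) ^^^ (b % 2 ^ m) :=
        xor_add_add ⟨_, rfl⟩ (Nat.mod_lt _ hpos) (Nat.mod_lt _ hpos)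
    _ < 2 ^ m := Nat.xor_lt_two_pow (Nat.mod_lt _ hpos) (Nat.mod_lt _ hpos)

lemma xor_mem_Ico {k x w : ℕ} (hx : x < 2 ^ k) (h1 : 2 ^ k ≤ w)
    (h2 : w < 2 ^ (k + 1)) : 2 ^ k ≤ x ^^^ w ∧ x ^^^ w < 2 ^ (k + 1) := by
  constructor
  · apply Nat.ge_two_pow_of_testBit (i := k)
    rw [Nat.testBit_xor, Nat.testBit_lt_two_pow hx]
    have hw : w.testBit k = true := by
      rw [Nat.testBit_eq_decide_div_mod_eq]
      have hd : w / 2 ^ k = 1 := by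
        have h3 : w / 2 ^ k < 2 := by
          rw [Nat.div_lt_iff_lt_mul (Nat.pow_pos (by norm_num))]
          rw [pow_succ] at h2; omega
        have h4 : 1 ≤ w / 2 ^ k := by
          rw [Nat.le_div_iff_mul_le (Nat.pow_pos (by norm_num))]; omega
        omega
      simp [hd]
    simp [hw]
  · exact Nat.xor_lt_two_pow
      (lt_of_lt_of_le hx (Nat.pow_le_pow_right (by norm_num) (Nat.le_succ k))) h2
end core

/-- leaf with prefix `1^α`, then zeros, then ones from depth `β` to `γ`. -/
def Fv (h α β γ : ℕ) : ℕ := (2 ^ h - 2 ^ (h - α)) + (2 ^ (h - β) - 2 ^ (h - γ))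

lemma pow_le_pow_tp {x y : ℕ} (hxy : x ≤ y) : (2:ℕ) ^ x ≤ 2 ^ y :=
  Nat.pow_le_pow_right (by norm_num) hxy

lemma lcpDepth_eq_of_xor {h t a b : ℕ} (ht : t < h)
    (h1 : 2 ^ (h - t - 1) ≤ a ^^^ b) (h2 : a ^^^ b < 2 ^ (h - t)) :
    lcpDepth h a b = t := by
  have hs : Nat.size (a ^^^ b) = (h - t - 1) + 1 :=
    size_eq_succ h1 (by rw [show h - t - 1 + 1 = h - t by omega]; exact h2)
  unfold lcpDepth
  rw [hs]; omega

lemma Fv_lt {h α β γ : ℕ} (hαβ : α ≤ β) (hβγ : β ≤ γ) (hγ : γ ≤ h) :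
    Fv h α β γ < 2 ^ h := by
  have p1 := pow_le_pow_tp (show h - β ≤ h - α by omega)
  have p2 := pow_le_pow_tp (show h - α ≤ h by omega)
  have p3 : 0 < (2:ℕ) ^ (h - γ) := Nat.pow_pos (by norm_num)
  have p4 : 0 < (2:ℕ) ^ h := Nat.pow_pos (by norm_num)
  have p5 := pow_le_pow_tp (show h - γ ≤ h - β by omega)
  unfold Fv; omega

lemma FvA {h α β γ α' β' γ' : ℕ} (hαα' : α < α') (hαβ : α < β) (hβγ : β ≤ γ)
    (hγ : γ ≤ h) (hα'β' : α' ≤ β') (hβ'γ' : β' ≤ γ') (hγ' : γ' ≤ h) :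
    Fv h α β γ < Fv h α' β' γ' ∧ lcpDepth h (Fv h α β γ) (Fv h α' β' γ') = α := by
  have hαh : α < h := by omega
  set a := 2 ^ h - 2 ^ (h - α) with ha_def
  set w1 := 2 ^ (h - β) - 2 ^ (h - γ) with hw1_def
  set w2 := (2 ^ (h - α) - 2 ^ (h - α')) + (2 ^ (h - β') - 2 ^ (h - γ')) with hw2_def
  have p0 : (2:ℕ) ^ (h - α) = 2 ^ (h - α - 1) + 2 ^ (h - α - 1) := by
    rw [← two_mul, ← pow_succ']; congr 1; omega
  have p1 := pow_le_pow_tp (show h - α' ≤ h - α - 1 by omega)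
  have p2 := pow_le_pow_tp (show h - β' ≤ h - α' by omega)
  have p3 := pow_le_pow_tp (show h - β ≤ h - α - 1 by omega)
  have p4 := pow_le_pow_tp (show h - α ≤ h by omega)
  have p5 := pow_le_pow_tp (show h - α' ≤ h - α by omega)
  have p6 : 0 < (2:ℕ) ^ (h - γ) := Nat.pow_pos (by norm_num)
  have p7 : 0 < (2:ℕ) ^ (h - γ') := Nat.pow_pos (by norm_num)
  have p8 := pow_le_pow_tp (show h - γ' ≤ h - β' by omega)
  have p9 := pow_le_pow_tp (show h - γ ≤ h - β by omega)
  have e1 : Fv h α β γ = a + w1 := rfl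
  have e2 : Fv h α' β' γ' = a + w2 := by unfold Fv; omega
  have hdvd : 2 ^ (h - α) ∣ a := Nat.dvd_sub (Nat.pow_dvd_pow 2 (by omega)) dvd_rfl
  have bw1 : w1 < 2 ^ (h - α - 1) := by omega
  have bw2l : 2 ^ (h - α - 1) ≤ w2 := by omega
  have bw2r : w2 < 2 ^ (h - α) := by omega
  have hxor : (a + w1) ^^^ (a + w2) = w1 ^^^ w2 :=
    xor_add_add hdvd (by omega) bw2r
  have hk : h - α - 1 + 1 = h - α := by omega
  have hico := xor_mem_Ico (k := h - α - 1) bw1 bw2l (by rw [hk]; exact bw2r)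
  constructor
  · omega
  · rw [e1, e2]
    exact lcpDepth_eq_of_xor hαh (by rw [hxor]; exact hico.1)
      (by rw [hxor, ← hk]; exact hico.2)

lemma FvB {h α β' γ' : ℕ} (h1 : α ≤ β') (h2 : β' < γ') (h3 : γ' ≤ h) :
    Fv h α h h < Fv h α β' γ' ∧ lcpDepth h (Fv h α h h) (Fv h α β' γ') = β' := by
  have hβh : β' < h := by omega
  set a := 2 ^ h - 2 ^ (h - α) with ha_def
  set w2 := 2 ^ (h - β') - 2 ^ (h - γ') with hw2_def
  have p0 : (2:ℕ) ^ (h - β') = 2 ^ (h - β' - 1) + 2 ^ (h - β' - 1) := by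
    rw [← two_mul, ← pow_succ']; congr 1; omega
  have p1 := pow_le_pow_tp (show h - γ' ≤ h - β' - 1 by omega)
  have p2 := pow_le_pow_tp (show h - β' ≤ h - α by omega)
  have p3 : 0 < (2:ℕ) ^ (h - γ') := Nat.pow_pos (by norm_num)
  have e1 : Fv h α h h = a + 0 := by unfold Fv; omega
  have e2 : Fv h α β' γ' = a + w2 := rfl
  have hdvd : 2 ^ (h - α) ∣ a := Nat.dvd_sub (Nat.pow_dvd_pow 2 (by omega)) dvd_rfl
  have hxor : (a + 0) ^^^ (a + w2) = 0 ^^^ w2 :=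
    xor_add_add hdvd (Nat.pow_pos (by norm_num)) (by omega)
  have hxor' : (a + 0) ^^^ (a + w2) = w2 := by rw [hxor]; simp
  constructor
  · omega
  · rw [e1, e2]
    exact lcpDepth_eq_of_xor hβh (by rw [hxor']; omega)
      (by rw [hxor']; omega)

lemma FvC {h α β γ γ' : ℕ} (hαβ : α ≤ β) (hβγ : β ≤ γ) (hγγ' : γ < γ')
    (hγ' : γ' ≤ h) :
    Fv h α β γ < Fv h α β γ' ∧ lcpDepth h (Fv h α β γ) (Fv h α β γ') = γ := by
  have hγh : γ < h := by omega
  set a := Fv h α β γ with ha_def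
  set w2 := 2 ^ (h - γ) - 2 ^ (h - γ') with hw2_def
  have p0 : (2:ℕ) ^ (h - γ) = 2 ^ (h - γ - 1) + 2 ^ (h - γ - 1) := by
    rw [← two_mul, ← pow_succ']; congr 1; omega
  have p1 := pow_le_pow_tp (show h - γ' ≤ h - γ - 1 by omega)
  have p2 := pow_le_pow_tp (show h - γ ≤ h - β by omega)
  have p3 : 0 < (2:ℕ) ^ (h - γ') := Nat.pow_pos (by norm_num)
  have p4 := pow_le_pow_tp (show h - γ' ≤ h - γ by omega)
  have e2 : Fv h α β γ' = a + w2 := by rw [ha_def]; unfold Fv; omega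
  have hdvd : 2 ^ (h - γ) ∣ a := by
    rw [ha_def]; unfold Fv
    refine dvd_add (Nat.dvd_sub (Nat.pow_dvd_pow 2 (by omega))
      (Nat.pow_dvd_pow 2 (by omega))) (Nat.dvd_sub (Nat.pow_dvd_pow 2 (by omega)) dvd_rfl)
  have hxor : (a + 0) ^^^ (a + w2) = 0 ^^^ w2 :=
    xor_add_add hdvd (Nat.pow_pos (by norm_num)) (by omega)
  have hxor' : a ^^^ (a + w2) = w2 := by
    have := hxor; rw [Nat.add_zero] at this; rw [this]; simp
  constructor
  · omega
  · rw [e2]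
    exact lcpDepth_eq_of_xor hγh (by rw [hxor']; omega) (by rw [hxor']; omega)


lemma injOn_of_mono {w : ℕ → ℕ} {I : Finset ℕ}
    (hw : ∀ a ∈ I, ∀ b ∈ I, a < b → w a < w b) : Set.InjOn w I := by
  intro a ha b hb hab
  rcases lt_trichotomy a b with hl | he | hl
  · exact absurd hab (ne_of_lt (hw a ha b hb hl))
  · exact he
  · exact absurd hab.symm (ne_of_lt (hw b hb a ha hl))

lemma sort_image (w : ℕ → ℕ) (I : Finset ℕ)
    (hw : ∀ a ∈ I, ∀ b ∈ I, a < b → w a < w b) :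
    (I.image w).sort (· ≤ ·) = (I.sort (· ≤ ·)).map w := by
  have hinj : Set.InjOn w I := injOn_of_mono hw
  refine (fun hp h1 h2 => List.Perm.eq_of_pairwise' (r := (· ≤ ·)) h1 h2 hp) ?_ ?_ ?_
  · rw [← Multiset.coe_eq_coe]
    push_cast [Finset.sort_eq]
    rw [Finset.image_val_of_injOn hinj, ← Multiset.map_coe,
      show ((Finset.sort I (· ≤ ·) : List ℕ) : Multiset ℕ) = I.val from Finset.sort_eq _ _]
  · exact Finset.pairwise_sort _ _
  · rw [List.pairwise_map]
    exact (Finset.sortedLT_sort I).pairwise.imp_of_mem (fun ha hb hab =>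
      le_of_lt (hw _ ((Finset.mem_sort _).1 ha) _ ((Finset.mem_sort _).1 hb) hab))

lemma zipWith_tail_congr {α β : Type*} (f g : α → α → β) :
    ∀ l : List α, l.Pairwise (fun a b => f a b = g a b) →
      List.zipWith f l l.tail = List.zipWith g l l.tail
  | [] => by simp
  | [a] => by simp
  | a :: b :: l => fun hp => by
    obtain ⟨hall, htl⟩ := List.pairwise_cons.1 hp
    have h1 : f a b = g a b := hall b List.mem_cons_self
    have h2 := zipWith_tail_congr f g (b :: l) htl
    simpa [h1] using h2

lemma lcpSeq_image_eq (h : ℕ) (I : Finset ℕ) (w w' : ℕ → ℕ)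
    (hw : ∀ a ∈ I, ∀ b ∈ I, a < b → w a < w b)
    (hw' : ∀ a ∈ I, ∀ b ∈ I, a < b → w' a < w' b)
    (hl : ∀ a ∈ I, ∀ b ∈ I, a < b → lcpDepth h (w a) (w b) = lcpDepth h (w' a) (w' b)) :
    lcpSeq h (I.image w) = lcpSeq h (I.image w') := by
  unfold lcpSeq
  rw [sort_image w I hw, sort_image w' I hw', ← List.map_tail, ← List.map_tail,
    List.zipWith_map, List.zipWith_map]
  exact zipWith_tail_congr _ _ _ ((Finset.sortedLT_sort I).pairwise.imp_of_mem
    (fun ha hb hab => hl _ ((Finset.mem_sort _).1 ha) _ ((Finset.mem_sort _).1 hb) hab))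


def yvf (h : ℕ) (t : ℕ → ℕ) (i : ℕ) : ℕ := 2 ^ h - 2 ^ (h - t i)
def zvf (h ℓ : ℕ) (t : ℕ → ℕ) (j : ℕ) : ℕ := Fv h (t (ℓ-1)) (t ℓ) (t (ℓ+1+j))
def xvf (h ℓ : ℕ) (t : ℕ → ℕ) (j : ℕ) : ℕ := Fv h (t (ℓ-1) + 1) (t ℓ) (t (ℓ+1+j))

lemma color_transfer {s : ℕ} (χ : Finset ℕ → Fin s) (h r : ℕ)
    (hiso : ∀ A B : Finset ℕ, A ⊆ Finset.range (2 ^ h) →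
      B ⊆ Finset.range (2 ^ h) → A.card = r → B.card = r →
      lcpSeq h A = lcpSeq h B → χ A = χ B)
    (I : Finset ℕ) (w w' : ℕ → ℕ)
    (hw : ∀ a ∈ I, ∀ b ∈ I, a < b → w a < w b)
    (hw' : ∀ a ∈ I, ∀ b ∈ I, a < b → w' a < w' b)
    (hwr : ∀ a ∈ I, w a < 2 ^ h) (hw'r : ∀ a ∈ I, w' a < 2 ^ h)
    (hl : ∀ a ∈ I, ∀ b ∈ I, a < b → lcpDepth h (w a) (w b) = lcpDepth h (w' a) (w' b))
    (col : Fin s)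
    (hcol : ∀ J ⊆ I, J.card = r → χ (J.image w') = col) :
    ∀ e ⊆ I.image w, e.card = r → χ e = col := by
  intro e he hcard
  classical
  set J := I.filter (fun i => w i ∈ e) with hJ
  have hJI : J ⊆ I := Finset.filter_subset _ _
  have him : J.image w = e := by
    apply Finset.Subset.antisymm
    · intro v hv; obtain ⟨i, hi, rfl⟩ := Finset.mem_image.1 hv
      exact (Finset.mem_filter.1 hi).2
    · intro v hv
      obtain ⟨i, hi, rfl⟩ := Finset.mem_image.1 (he hv)
      exact Finset.mem_image.2 ⟨i, Finset.mem_filter.2 ⟨hi, hv⟩, rfl⟩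
  have hm : ∀ a ∈ J, ∀ b ∈ J, a < b → w a < w b :=
    fun a ha b hb hab => hw a (hJI ha) b (hJI hb) hab
  have hm' : ∀ a ∈ J, ∀ b ∈ J, a < b → w' a < w' b :=
    fun a ha b hb hab => hw' a (hJI ha) b (hJI hb) hab
  have hJcard : J.card = r := by
    rw [← hcard, ← him]; exact (Finset.card_image_of_injOn (injOn_of_mono hm)).symm
  have h1 : χ e = χ (J.image w') := by
    rw [← him]
    apply hiso
    · intro v hv; obtain ⟨i, hi, rfl⟩ := Finset.mem_image.1 hv
      exact Finset.mem_range.2 (hwr _ (hJI hi))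
    · intro v hv; obtain ⟨i, hi, rfl⟩ := Finset.mem_image.1 hv
      exact Finset.mem_range.2 (hw'r _ (hJI hi))
    · rw [Finset.card_image_of_injOn (injOn_of_mono hm)]; exact hJcard
    · rw [Finset.card_image_of_injOn (injOn_of_mono hm')]; exact hJcard
    · exact lcpSeq_image_eq h J w w' hm hm'
        (fun a ha b hb hab => hl a (hJI ha) b (hJI hb) hab)
  rw [h1]; exact hcol J hJI hJcard

lemma construction (r ℓ s h : ℕ) (hr : 1 ≤ r) (hrl : r ≤ ℓ)
    (χ : Finset ℕ → Fin s)
    (hiso : ∀ A B : Finset ℕ, A ⊆ Finset.range (2 ^ h) →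
      B ⊆ Finset.range (2 ^ h) → A.card = r → B.card = r →
      lcpSeq h A = lcpSeq h B → χ A = χ B)
    (t : ℕ → ℕ) (ht : ∀ i j, i < j → j ≤ 2 * ℓ → t i < t j) (hth : t (2 * ℓ) ≤ h)
    (col : Fin s)
    (hcat : ∀ J ⊆ Finset.range (2 * ℓ + 1), J.card = r →
      χ (J.image (yvf h t)) = col) :
    ∃ X Y Z : Finset ℕ,
      X ⊆ Finset.range (2 ^ h) ∧ Y ⊆ Finset.range (2 ^ h) ∧
        Z ⊆ Finset.range (2 ^ h) ∧
      X.card = ℓ ∧ Y.card = ℓ ∧ Z.card = ℓ ∧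
      Disjoint X Y ∧ Disjoint X Z ∧ Disjoint Y Z ∧
      lcpSeq h X = lcpSeq h Z ∧
      Disjoint (spanTree h X) (spanTree h Z) ∧
      ∃ c : Fin s, (∀ e ⊆ X ∪ Y, e.card = r → χ e = c) ∧
        (∀ e ⊆ Y ∪ Z, e.card = r → χ e = c) := by
  classical
  have hl1 : 1 ≤ ℓ := le_trans hr hrl
  have htle : ∀ i j, i ≤ j → j ≤ 2 * ℓ → t i ≤ t j := by
    intro i j hij hj
    rcases eq_or_lt_of_le hij with rfl | hlt
    · exact le_rfl
    · exact le_of_lt (ht i j hlt hj)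
  have htleh : ∀ i, i ≤ 2 * ℓ → t i ≤ h := fun i hi => le_trans (htle i (2*ℓ) hi le_rfl) hth
  have hthi : ∀ i, i < 2 * ℓ → t i < h := fun i hi => lt_of_lt_of_le (ht i (2*ℓ) hi le_rfl) hth
  have hyF : ∀ i, yvf h t i = Fv h (t i) h h := by
    intro i; simp [yvf, Fv, Nat.sub_self]
  -- pairwise facts
  have hyy : ∀ i j, i < j → j ≤ 2 * ℓ →
      yvf h t i < yvf h t j ∧ lcpDepth h (yvf h t i) (yvf h t j) = t i := by
    intro i j hij hj
    rw [hyF i, hyF j]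
    exact FvA (ht i j hij hj) (lt_of_lt_of_le (ht i j hij hj) (htleh j hj))
      le_rfl le_rfl (htleh j hj) le_rfl le_rfl
  have hyx : ∀ i j, i < ℓ → j < ℓ →
      yvf h t i < xvf h ℓ t j ∧ lcpDepth h (yvf h t i) (xvf h ℓ t j) = t i := by
    intro i j hi hj
    rw [hyF i]; unfold xvf
    exact FvA (by have := htle i (ℓ-1) (by omega) (by omega); omega)
      (hthi i (by omega)) le_rfl le_rfl
      (ht (ℓ-1) ℓ (by omega) (by omega))
      (le_of_lt (ht ℓ (ℓ+1+j) (by omega) (by omega)))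
      (htleh (ℓ+1+j) (by omega))
  have hyz : ∀ i j, i < ℓ - 1 → j < ℓ →
      yvf h t i < zvf h ℓ t j ∧ lcpDepth h (yvf h t i) (zvf h ℓ t j) = t i := by
    intro i j hi hj
    rw [hyF i]; unfold zvf
    exact FvA (ht i (ℓ-1) hi (by omega)) (hthi i (by omega)) le_rfl le_rfl
      (le_of_lt (ht (ℓ-1) ℓ (by omega) (by omega)))
      (le_of_lt (ht ℓ (ℓ+1+j) (by omega) (by omega)))
      (htleh (ℓ+1+j) (by omega))
  have hyz' : ∀ j, j < ℓ →
      yvf h t (ℓ-1) < zvf h ℓ t j ∧ lcpDepth h (yvf h t (ℓ-1)) (zvf h ℓ t j) = t ℓ := by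
    intro j hj
    rw [hyF (ℓ-1)]; unfold zvf
    exact FvB (le_of_lt (ht (ℓ-1) ℓ (by omega) (by omega)))
      (ht ℓ (ℓ+1+j) (by omega) (by omega)) (htleh (ℓ+1+j) (by omega))
  have hzz : ∀ i j, i < j → j < ℓ →
      zvf h ℓ t i < zvf h ℓ t j ∧ lcpDepth h (zvf h ℓ t i) (zvf h ℓ t j) = t (ℓ+1+i) := by
    intro i j hij hj
    unfold zvf
    exact FvC (le_of_lt (ht (ℓ-1) ℓ (by omega) (by omega)))
      (le_of_lt (ht ℓ (ℓ+1+i) (by omega) (by omega)))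
      (ht (ℓ+1+i) (ℓ+1+j) (by omega) (by omega)) (htleh (ℓ+1+j) (by omega))
  have hxx : ∀ i j, i < j → j < ℓ →
      xvf h ℓ t i < xvf h ℓ t j ∧ lcpDepth h (xvf h ℓ t i) (xvf h ℓ t j) = t (ℓ+1+i) := by
    intro i j hij hj
    unfold xvf
    exact FvC (ht (ℓ-1) ℓ (by omega) (by omega))
      (le_of_lt (ht ℓ (ℓ+1+i) (by omega) (by omega)))
      (ht (ℓ+1+i) (ℓ+1+j) (by omega) (by omega)) (htleh (ℓ+1+j) (by omega))
  have hzx : ∀ i j, i < ℓ → j < ℓ →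
      zvf h ℓ t i < xvf h ℓ t j ∧ lcpDepth h (zvf h ℓ t i) (xvf h ℓ t j) = t (ℓ-1) := by
    intro i j hi hj
    unfold zvf xvf
    exact FvA (Nat.lt_succ_self _) (ht (ℓ-1) ℓ (by omega) (by omega))
      (le_of_lt (ht ℓ (ℓ+1+i) (by omega) (by omega))) (htleh (ℓ+1+i) (by omega))
      (ht (ℓ-1) ℓ (by omega) (by omega))
      (le_of_lt (ht ℓ (ℓ+1+j) (by omega) (by omega)))
      (htleh (ℓ+1+j) (by omega))
  -- ranges
  have hyr : ∀ i, i ≤ 2 * ℓ → yvf h t i < 2 ^ h := by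
    intro i hi; rw [hyF i]
    exact Fv_lt (htleh i hi) le_rfl le_rfl
  have hzr : ∀ j, j < ℓ → zvf h ℓ t j < 2 ^ h := by
    intro j hj; unfold zvf
    exact Fv_lt (le_of_lt (ht (ℓ-1) ℓ (by omega) (by omega)))
      (le_of_lt (ht ℓ (ℓ+1+j) (by omega) (by omega))) (htleh (ℓ+1+j) (by omega))
  have hxr : ∀ j, j < ℓ → xvf h ℓ t j < 2 ^ h := by
    intro j hj; unfold xvf
    exact Fv_lt (ht (ℓ-1) ℓ (by omega) (by omega))
      (le_of_lt (ht ℓ (ℓ+1+j) (by omega) (by omega))) (htleh (ℓ+1+j) (by omega))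
  -- the sets
  set X := (Finset.range ℓ).image (xvf h ℓ t) with hX
  set Y := (Finset.range ℓ).image (yvf h t) with hY
  set Z := (Finset.range ℓ).image (zvf h ℓ t) with hZ
  have hmemX : ∀ v, v ∈ X ↔ ∃ j, j < ℓ ∧ xvf h ℓ t j = v := by
    intro v; simp [hX, Finset.mem_image, Finset.mem_range]
  have hmemY : ∀ v, v ∈ Y ↔ ∃ j, j < ℓ ∧ yvf h t j = v := by
    intro v; simp [hY, Finset.mem_image, Finset.mem_range]
  have hmemZ : ∀ v, v ∈ Z ↔ ∃ j, j < ℓ ∧ zvf h ℓ t j = v := by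
    intro v; simp [hZ, Finset.mem_image, Finset.mem_range]
  have hmonoX : ∀ a ∈ Finset.range ℓ, ∀ b ∈ Finset.range ℓ, a < b →
      xvf h ℓ t a < xvf h ℓ t b := by
    intro a _ b hb hab
    exact (hxx a b hab (Finset.mem_range.1 hb)).1
  have hmonoY : ∀ a ∈ Finset.range ℓ, ∀ b ∈ Finset.range ℓ, a < b →
      yvf h t a < yvf h t b := by
    intro a _ b hb hab
    exact (hyy a b hab (by have := Finset.mem_range.1 hb; omega)).1
  have hmonoZ : ∀ a ∈ Finset.range ℓ, ∀ b ∈ Finset.range ℓ, a < b →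
      zvf h ℓ t a < zvf h ℓ t b := by
    intro a _ b hb hab
    exact (hzz a b hab (Finset.mem_range.1 hb)).1
  have hcardX : X.card = ℓ := by
    rw [hX, Finset.card_image_of_injOn (injOn_of_mono hmonoX), Finset.card_range]
  have hcardY : Y.card = ℓ := by
    rw [hY, Finset.card_image_of_injOn (injOn_of_mono hmonoY), Finset.card_range]
  have hcardZ : Z.card = ℓ := by
    rw [hZ, Finset.card_image_of_injOn (injOn_of_mono hmonoZ), Finset.card_range]
  have hXr : X ⊆ Finset.range (2 ^ h) := by
    intro v hv; obtain ⟨j, hj, rfl⟩ := (hmemX v).1 hv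
    exact Finset.mem_range.2 (hxr j hj)
  have hYr : Y ⊆ Finset.range (2 ^ h) := by
    intro v hv; obtain ⟨j, hj, rfl⟩ := (hmemY v).1 hv
    exact Finset.mem_range.2 (hyr j (by omega))
  have hZr : Z ⊆ Finset.range (2 ^ h) := by
    intro v hv; obtain ⟨j, hj, rfl⟩ := (hmemZ v).1 hv
    exact Finset.mem_range.2 (hzr j hj)
  -- order separation
  have hYZ : ∀ i j, i < ℓ → j < ℓ → yvf h t i < zvf h ℓ t j := by
    intro i j hi hj
    rcases lt_or_eq_of_le (show i ≤ ℓ - 1 by omega) with hlt | rfl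
    · exact (hyz i j hlt hj).1
    · exact (hyz' j hj).1
  have hdXY : Disjoint X Y := by
    rw [Finset.disjoint_left]
    intro v hvX hvY
    obtain ⟨i, hi, rfl⟩ := (hmemX _).1 hvX
    obtain ⟨j, hj, he⟩ := (hmemY _).1 hvY
    exact absurd he (ne_of_lt (hyx j i hj hi).1)
  have hdXZ : Disjoint X Z := by
    rw [Finset.disjoint_left]
    intro v hvX hvZ
    obtain ⟨i, hi, rfl⟩ := (hmemX _).1 hvX
    obtain ⟨j, hj, he⟩ := (hmemZ _).1 hvZ
    exact absurd he (ne_of_lt (hzx j i hj hi).1)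
  have hdYZ : Disjoint Y Z := by
    rw [Finset.disjoint_left]
    intro v hvY hvZ
    obtain ⟨i, hi, rfl⟩ := (hmemY _).1 hvY
    obtain ⟨j, hj, he⟩ := (hmemZ _).1 hvZ
    exact absurd he.symm (ne_of_lt (hYZ i j hi hj))
  have hseq : lcpSeq h X = lcpSeq h Z := by
    rw [hX, hZ]
    exact lcpSeq_image_eq h (Finset.range ℓ) (xvf h ℓ t) (zvf h ℓ t) hmonoX hmonoZ
      (fun a _ b hb hab => by
        rw [(hxx a b hab (Finset.mem_range.1 hb)).2,
          (hzz a b hab (Finset.mem_range.1 hb)).2])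
  have hspan : Disjoint (spanTree h X) (spanTree h Z) := by
    rw [Set.disjoint_left]
    rintro ⟨d, p⟩ ⟨hdh, ⟨a, haX, b, hbX, hab⟩, ⟨u, huX, hpu⟩⟩
      ⟨-, -, ⟨v, hvZ, hpv⟩⟩
    dsimp only at hdh hpu hpv
    obtain ⟨ia, hia, rfl⟩ := (hmemX _).1 haX
    obtain ⟨ib, hib, rfl⟩ := (hmemX _).1 hbX
    obtain ⟨iu, hiu, rfl⟩ := (hmemX _).1 huX
    obtain ⟨iv, hiv, rfl⟩ := (hmemZ _).1 hvZ
    have htll : t (ℓ-1) < t (ℓ+1) := ht (ℓ-1) (ℓ+1) (by omega) (by omega)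
    have htlh : t (ℓ+1) ≤ h := htleh (ℓ+1) (by omega)
    have hd1 : t (ℓ+1) ≤ d := by
      rcases lt_trichotomy ia ib with hlt | rfl | hlt
      · rw [(hxx ia ib hlt hib).2] at hab
        have : t (ℓ+1) ≤ t (ℓ+1+ia) := htle _ _ (by omega) (by omega)
        omega
      · have hz : lcpDepth h (xvf h ℓ t ia) (xvf h ℓ t ia) = h := by
          unfold lcpDepth; simp
        rw [hz] at hab; omega
      · have hc : lcpDepth h (xvf h ℓ t ia) (xvf h ℓ t ib)
            = lcpDepth h (xvf h ℓ t ib) (xvf h ℓ t ia) := by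
          unfold lcpDepth; rw [Nat.xor_comm]
        rw [hc, (hxx ib ia hlt hia).2] at hab
        have : t (ℓ+1) ≤ t (ℓ+1+ib) := htle _ _ (by omega) (by omega)
        omega
    have hlcpzx := (hzx iv iu hiv hiu).2
    have hxlt : zvf h ℓ t iv ^^^ xvf h ℓ t iu < 2 ^ h :=
      Nat.xor_lt_two_pow (hzr iv hiv) (hxr iu hiu)
    have ht1 : t (ℓ-1) < h := hthi (ℓ-1) (by omega)
    have hsz : Nat.size (zvf h ℓ t iv ^^^ xvf h ℓ t iu) = h - t (ℓ-1) := by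
      have h1 : Nat.size (zvf h ℓ t iv ^^^ xvf h ℓ t iu) ≤ h := Nat.size_le.2 hxlt
      unfold lcpDepth at hlcpzx
      omega
    have hlow : 2 ^ (h - t (ℓ-1) - 1) ≤ zvf h ℓ t iv ^^^ xvf h ℓ t iu := by
      apply Nat.lt_size.1
      rw [hsz]; omega
    have hdiv : xvf h ℓ t iu / 2 ^ (h - d) = zvf h ℓ t iv / 2 ^ (h - d) := by
      rw [← hpu, ← hpv]
    have hxor2 : xvf h ℓ t iu ^^^ zvf h ℓ t iv < 2 ^ (h - d) := xor_lt_of_div_eq hdiv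
    have hcomm : zvf h ℓ t iv ^^^ xvf h ℓ t iu = xvf h ℓ t iu ^^^ zvf h ℓ t iv :=
      Nat.xor_comm _ _
    have hb1 : (2:ℕ) ^ (h - d) ≤ 2 ^ (h - t (ℓ-1) - 1) :=
      pow_le_pow_tp (by omega)
    omega
  -- colour part
  set wXY : ℕ → ℕ := fun i => if i < ℓ then yvf h t i else xvf h ℓ t (i - ℓ) with hwXY
  set wYZ : ℕ → ℕ := fun i => if i < ℓ then yvf h t i else zvf h ℓ t (i - ℓ) with hwYZ
  set σXY : ℕ → ℕ := fun i => if i < ℓ then i else i + 1 with hσXY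
  set σYZ : ℕ → ℕ := fun i => if i < ℓ - 1 then i else i + 1 with hσYZ
  have hcolcat : ∀ (σ : ℕ → ℕ), (∀ i, i < 2*ℓ → σ i < 2*ℓ+1) →
      (∀ a b, a < b → σ a < σ b) →
      ∀ J ⊆ Finset.range (2*ℓ), J.card = r →
        χ (J.image (fun i => yvf h t (σ i))) = col := by
    intro σ hσb hσm J hJ hJc
    have h1 : J.image (fun i => yvf h t (σ i)) = (J.image σ).image (yvf h t) := by
      rw [Finset.image_image]; rfl
    rw [h1]
    apply hcat
    · intro v hv; obtain ⟨i, hi, rfl⟩ := Finset.mem_image.1 hv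
      exact Finset.mem_range.2 (hσb i (Finset.mem_range.1 (hJ hi)))
    · rw [Finset.card_image_of_injOn (injOn_of_mono (fun a _ b _ hab => hσm a b hab))]
      exact hJc
  have hcXY : ∀ e ⊆ X ∪ Y, e.card = r → χ e = col := by
    have hunion : X ∪ Y = (Finset.range (2*ℓ)).image wXY := by
      ext v
      simp only [Finset.mem_union, Finset.mem_image, Finset.mem_range]
      constructor
      · rintro (hv | hv)
        · obtain ⟨j, hj, rfl⟩ := (hmemX _).1 hv
          refine ⟨ℓ + j, by omega, ?_⟩
          rw [hwXY]; simp only []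
          rw [if_neg (by omega)]
          congr 1; omega
        · obtain ⟨j, hj, rfl⟩ := (hmemY _).1 hv
          refine ⟨j, by omega, ?_⟩
          rw [hwXY]; simp only []
          rw [if_pos hj]
      · rintro ⟨i, hi, rfl⟩
        by_cases hc : i < ℓ
        · right
          rw [hwXY]; simp only []
          rw [if_pos hc]
          exact (hmemY _).1 ((hmemY _).2 ⟨i, hc, rfl⟩) |> fun _ => (hmemY _).2 ⟨i, hc, rfl⟩
        · left
          rw [hwXY]; simp only []
          rw [if_neg hc]
          exact (hmemX _).2 ⟨i - ℓ, by omega, rfl⟩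
    intro e he hec
    refine color_transfer χ h r hiso (Finset.range (2*ℓ)) wXY
      (fun i => yvf h t (σXY i)) ?_ ?_ ?_ ?_ ?_ col ?_ e (by rw [← hunion]; exact he) hec
    · -- mono of wXY
      intro a ha b hb hab
      rw [hwXY]; simp only []
      have hb2 := Finset.mem_range.1 hb
      by_cases h1 : b < ℓ
      · rw [if_pos (by omega), if_pos h1]
        exact (hyy a b hab (by omega)).1
      · rw [if_neg h1]
        by_cases h2 : a < ℓ
        · rw [if_pos h2]
          exact (hyx a (b - ℓ) h2 (by omega)).1
        · rw [if_neg h2]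
          exact (hxx (a - ℓ) (b - ℓ) (by omega) (by omega)).1
    · -- mono of w'
      intro a ha b hb hab
      have hb2 := Finset.mem_range.1 hb
      have hσ : σXY a < σXY b := by rw [hσXY]; simp only []; split <;> split <;> omega
      have hσb : σXY b ≤ 2*ℓ := by rw [hσXY]; simp only []; split <;> omega
      exact (hyy _ _ hσ hσb).1
    · intro a ha
      have ha2 := Finset.mem_range.1 ha
      rw [hwXY]; simp only []
      by_cases h1 : a < ℓ
      · rw [if_pos h1]; exact hyr a (by omega)
      · rw [if_neg h1]; exact hxr (a - ℓ) (by omega)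
    · intro a ha
      have ha2 := Finset.mem_range.1 ha
      have : σXY a ≤ 2*ℓ := by rw [hσXY]; simp only []; split <;> omega
      exact hyr _ this
    · -- lcp equality
      intro a ha b hb hab
      have ha2 := Finset.mem_range.1 ha
      have hb2 := Finset.mem_range.1 hb
      rw [hwXY, hσXY]; simp only []
      by_cases h1 : b < ℓ
      · rw [if_pos (show a < ℓ by omega), if_pos h1, if_pos (show a < ℓ by omega), if_pos h1]
      · rw [if_neg h1, if_neg h1]
        by_cases h2 : a < ℓ
        · rw [if_pos h2, if_pos h2]
          rw [(hyx a (b - ℓ) h2 (by omega)).2, (hyy a (b+1) (by omega) (by omega)).2]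
        · rw [if_neg h2, if_neg h2]
          rw [(hxx (a - ℓ) (b - ℓ) (by omega) (by omega)).2,
            (hyy (a+1) (b+1) (by omega) (by omega)).2]
          congr 1; omega
    · exact hcolcat σXY (by intro i hi; rw [hσXY]; simp only []; split <;> omega)
        (by intro a b hab; rw [hσXY]; simp only []; split <;> split <;> omega)
  have hcYZ : ∀ e ⊆ Y ∪ Z, e.card = r → χ e = col := by
    have hunion : Y ∪ Z = (Finset.range (2*ℓ)).image wYZ := by
      ext v
      simp only [Finset.mem_union, Finset.mem_image, Finset.mem_range]
      constructor
      · rintro (hv | hv)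
        · obtain ⟨j, hj, rfl⟩ := (hmemY _).1 hv
          refine ⟨j, by omega, ?_⟩
          rw [hwYZ]; simp only []
          rw [if_pos hj]
        · obtain ⟨j, hj, rfl⟩ := (hmemZ _).1 hv
          refine ⟨ℓ + j, by omega, ?_⟩
          rw [hwYZ]; simp only []
          rw [if_neg (by omega)]
          congr 1; omega
      · rintro ⟨i, hi, rfl⟩
        by_cases hc : i < ℓ
        · left
          rw [hwYZ]; simp only []
          rw [if_pos hc]
          exact (hmemY _).2 ⟨i, hc, rfl⟩
        · right
          rw [hwYZ]; simp only []
          rw [if_neg hc]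
          exact (hmemZ _).2 ⟨i - ℓ, by omega, rfl⟩
    intro e he hec
    refine color_transfer χ h r hiso (Finset.range (2*ℓ)) wYZ
      (fun i => yvf h t (σYZ i)) ?_ ?_ ?_ ?_ ?_ col ?_ e (by rw [← hunion]; exact he) hec
    · intro a ha b hb hab
      rw [hwYZ]; simp only []
      have hb2 := Finset.mem_range.1 hb
      by_cases h1 : b < ℓ
      · rw [if_pos (by omega), if_pos h1]
        exact (hyy a b hab (by omega)).1
      · rw [if_neg h1]
        by_cases h2 : a < ℓ
        · rw [if_pos h2]
          exact hYZ a (b - ℓ) h2 (by omega)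
        · rw [if_neg h2]
          exact (hzz (a - ℓ) (b - ℓ) (by omega) (by omega)).1
    · intro a ha b hb hab
      have hb2 := Finset.mem_range.1 hb
      have hσ : σYZ a < σYZ b := by rw [hσYZ]; simp only []; split <;> split <;> omega
      have hσb : σYZ b ≤ 2*ℓ := by rw [hσYZ]; simp only []; split <;> omega
      exact (hyy _ _ hσ hσb).1
    · intro a ha
      have ha2 := Finset.mem_range.1 ha
      rw [hwYZ]; simp only []
      by_cases h1 : a < ℓ
      · rw [if_pos h1]; exact hyr a (by omega)
      · rw [if_neg h1]; exact hzr (a - ℓ) (by omega)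
    · intro a ha
      have ha2 := Finset.mem_range.1 ha
      have : σYZ a ≤ 2*ℓ := by rw [hσYZ]; simp only []; split <;> omega
      exact hyr _ this
    · intro a ha b hb hab
      have ha2 := Finset.mem_range.1 ha
      have hb2 := Finset.mem_range.1 hb
      rw [hwYZ, hσYZ]; simp only []
      by_cases h1 : b < ℓ
      · rw [if_pos (show a < ℓ by omega), if_pos h1,
          if_pos (show a < ℓ - 1 by omega)]
        by_cases h3 : b < ℓ - 1
        · rw [if_pos h3]
        · rw [if_neg h3]
          rw [(hyy a b hab (by omega)).2, (hyy a (b+1) (by omega) (by omega)).2]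
      · rw [if_neg h1]
        by_cases h2 : a < ℓ
        · rw [if_pos h2, if_neg (show ¬ b < ℓ - 1 by omega)]
          by_cases h3 : a < ℓ - 1
          · rw [if_pos h3]
            rw [(hyz a (b - ℓ) h3 (by omega)).2, (hyy a (b+1) (by omega) (by omega)).2]
          · rw [if_neg h3]
            have ha3 : a = ℓ - 1 := by omega
            subst ha3
            rw [(hyz' (b - ℓ) (by omega)).2,
              (hyy (ℓ - 1 + 1) (b+1) (by omega) (by omega)).2]
            congr 1; omega
        · rw [if_neg h2, if_neg (show ¬ a < ℓ - 1 by omega),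
            if_neg (show ¬ b < ℓ - 1 by omega)]
          rw [(hzz (a - ℓ) (b - ℓ) (by omega) (by omega)).2,
            (hyy (a+1) (b+1) (by omega) (by omega)).2]
          congr 1; omega
    · exact hcolcat σYZ (by intro i hi; rw [hσYZ]; simp only []; split <;> omega)
        (by intro a b hab; rw [hσYZ]; simp only []; split <;> split <;> omega)
  exact ⟨X, Y, Z, hXr, hYr, hZr, hcardX, hcardY, hcardZ, hdXY, hdXZ, hdYZ,
    hseq, hspan, col, hcXY, hcYZ⟩

/-- Given an s-colouring of the r-subsets of the leaves of the
complete binary ordered tree of height h that is invariant under ordered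
subtree isomorphism, and assuming the Ramsey hypothesis on h, there are
pairwise disjoint ℓ-sets of leaves X, Y, Z such that the minimal subtrees
spanned by X and Z are isomorphic ordered trees and vertex-disjoint, and all
r-subsets of X ∪ Y and of Y ∪ Z have one and the same colour. -/
theorem stmt5 (r ℓ s h d : ℕ) (hr : 1 ≤ r) (hs : 1 ≤ s) (hd : 1 ≤ d)
    (hrl : r ≤ ℓ)
    (hRamsey : ∀ c : Finset (Fin (h + 1)) → Fin s, ∃ A : Finset (Fin (h + 1)),
      A.card = 2 * ℓ + 1 ∧ ∃ col : Fin s, ∀ e ⊆ A, e.card = r → c e = col)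
    (χ : Finset ℕ → Fin s)
    (hiso : ∀ A B : Finset ℕ, A ⊆ Finset.range (2 ^ h) →
      B ⊆ Finset.range (2 ^ h) → A.card = r → B.card = r →
      lcpSeq h A = lcpSeq h B → χ A = χ B) :
    ∃ X Y Z : Finset ℕ,
      X ⊆ Finset.range (2 ^ h) ∧ Y ⊆ Finset.range (2 ^ h) ∧
        Z ⊆ Finset.range (2 ^ h) ∧
      X.card = ℓ ∧ Y.card = ℓ ∧ Z.card = ℓ ∧
      Disjoint X Y ∧ Disjoint X Z ∧ Disjoint Y Z ∧
      lcpSeq h X = lcpSeq h Z ∧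
      Disjoint (spanTree h X) (spanTree h Z) ∧
      ∃ c : Fin s, (∀ e ⊆ X ∪ Y, e.card = r → χ e = c) ∧
        (∀ e ⊆ Y ∪ Z, e.card = r → χ e = c) := by
  classical
  obtain ⟨A, hAcard, col, hcol⟩ :=
    hRamsey (fun E => χ (E.image (fun v : Fin (h+1) => 2 ^ h - 2 ^ (h - (v : ℕ)))))
  have h2l : 2 * ℓ + 1 ≤ h + 1 := by
    calc 2 * ℓ + 1 = A.card := hAcard.symm
      _ ≤ (Finset.univ : Finset (Fin (h+1))).card :=
          Finset.card_le_card (Finset.subset_univ A)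
      _ = h + 1 := by simp
  set tf : ℕ → Fin (h+1) := fun i => A.orderEmbOfFin hAcard ⟨min i (2*ℓ), by omega⟩
    with htf
  set t : ℕ → ℕ := fun i => (tf i : ℕ) with htdef
  have htmono : ∀ i j, i < j → j ≤ 2*ℓ → t i < t j := by
    intro i j hij hj
    have hlt : (⟨min i (2*ℓ), by omega⟩ : Fin (2*ℓ+1)) < ⟨min j (2*ℓ), by omega⟩ := by
      simp only [Fin.mk_lt_mk]; omega
    exact (A.orderEmbOfFin hAcard).strictMono hlt
  have hth : t (2*ℓ) ≤ h := Fin.is_le _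
  have hcat : ∀ J ⊆ Finset.range (2*ℓ+1), J.card = r → χ (J.image (yvf h t)) = col := by
    intro J hJ hJc
    have hinjtf : Set.InjOn tf J := by
      intro a ha b hb hab
      have ha2 : a < 2*ℓ+1 := Finset.mem_range.1 (hJ ha)
      have hb2 : b < 2*ℓ+1 := Finset.mem_range.1 (hJ hb)
      by_contra hne
      rcases lt_or_gt_of_ne hne with hl | hl
      · exact absurd (congrArg Fin.val hab) (ne_of_lt (htmono a b hl (by omega)))
      · exact absurd (congrArg Fin.val hab).symm (ne_of_lt (htmono b a hl (by omega)))
    have h1 : J.image (yvf h t)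
        = (J.image tf).image (fun v : Fin (h+1) => 2 ^ h - 2 ^ (h - (v : ℕ))) := by
      rw [Finset.image_image]; rfl
    rw [h1]
    refine hcol _ ?_ ?_
    · intro v hv; obtain ⟨i, hi, rfl⟩ := Finset.mem_image.1 hv
      exact Finset.orderEmbOfFin_mem A hAcard _
    · rw [Finset.card_image_of_injOn hinjtf]; exact hJc
  exact construction r ℓ s h hr hrl χ hiso t htmono hth col hcat
end

section
/- Let D ≥ 3d(h + 1) (more generally, d, h ≪ D). Let T₁ and T₂ be D-ary ordered trees of height h on (possibly overlapping) vertex sets, with distinct roots. Then there exist d-ary subtrees T₁' ⊆ T₁ and T₂' ⊆ T₂, each of height h, such that T₁' and T₂' are vertex-disjoint. -/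
/-- Positions (vertices) of the complete D-ary tree of height h: sequences
over `Fin D` of length at most `h`. -/
def TreePos (D h : ℕ) : Type := (k : Fin (h + 1)) × (Fin (k : ℕ) → Fin D)

/-- The root position. -/
def TreePos.root (D h : ℕ) : TreePos D h := ⟨⟨0, Nat.succ_pos h⟩, fun i => i.elim0⟩

/-- `p` is a prefix (ancestor-or-equal) of `q`. -/
def TreePos.Pfx {D h : ℕ} (p q : TreePos D h) : Prop :=
  ∃ hle : (p.1 : ℕ) ≤ (q.1 : ℕ), ∀ i : Fin (p.1 : ℕ), q.2 (Fin.castLE hle i) = p.2 i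

/-- A d-ary subtree of height h of the complete D-ary tree of height h,
given as a depth-preserving, ancestry-preserving (and hence injective)
embedding of positions. -/
structure SubtreeEmb (d D h : ℕ) where
  toFun : TreePos d h → TreePos D h
  depth_eq : ∀ p, ((toFun p).1 : ℕ) = (p.1 : ℕ)
  pfx_iff : ∀ p q, TreePos.Pfx p q ↔ TreePos.Pfx (toFun p) (toFun q)

namespace Stmt6Aux

/-- Extend addresses via a child-selection function `c` (at a node of depth `k`
with address `g`, the `a`-th selected child has index `c k g a`). -/
def extAddr {d D : ℕ} (c : (k : ℕ) → (Fin k → Fin D) → Fin d → Fin D) :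
    (k : ℕ) → (Fin k → Fin d) → Fin k → Fin D
  | 0, _ => Fin.elim0
  | (k+1), f => Fin.snoc (extAddr c k (Fin.init f))
      (c k (extAddr c k (Fin.init f)) (f (Fin.last k)))

theorem extAddr_restrict {d D : ℕ} (c : (k : ℕ) → (Fin k → Fin D) → Fin d → Fin D) :
    ∀ (k' k : ℕ) (hkk : k ≤ k') (f : Fin k' → Fin d) (i : Fin k),
      extAddr c k' f (Fin.castLE hkk i) = extAddr c k (fun j => f (Fin.castLE hkk j)) i := by
  intro k'
  induction k' with
  | zero =>
    intro k hkk f i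
    have := i.isLt; omega
  | succ m ih =>
    intro k hkk f i
    rcases Nat.lt_or_ge k (m+1) with hlt | hge
    · have hk : k ≤ m := by omega
      have h1 : Fin.castLE hkk i = Fin.castSucc (Fin.castLE hk i) := by ext; simp
      rw [h1]
      simp only [extAddr]
      rw [Fin.snoc_castSucc]
      rw [ih k hk (Fin.init f) i]
      have h2 : (fun j => Fin.init f (Fin.castLE hk j)) = (fun j => f (Fin.castLE hkk j)) := by
        funext j
        show f (Fin.castSucc (Fin.castLE hk j)) = f (Fin.castLE hkk j)
        have : Fin.castSucc (Fin.castLE hk j) = Fin.castLE hkk j := by ext; simp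
        rw [this]
      rw [h2]
    · have hkeq : k = m + 1 := le_antisymm hkk hge
      subst hkeq
      have h1 : Fin.castLE hkk i = i := by ext; simp
      have h2 : (fun j => f (Fin.castLE hkk j)) = f := by
        funext j
        have : Fin.castLE hkk j = j := by ext; simp
        rw [this]
      rw [h1, h2]

theorem extAddr_inj {d D : ℕ} (c : (k : ℕ) → (Fin k → Fin D) → Fin d → Fin D)
    (hc : ∀ k g, Function.Injective (c k g)) :
    ∀ (m k' k : ℕ) (hkk : k ≤ k') (f' : Fin k' → Fin d) (f : Fin k → Fin d),
      (∀ i : Fin k, extAddr c k' f' (Fin.castLE hkk i) = extAddr c k f i) →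
      ∀ j : Fin k, (j : ℕ) < m → f' (Fin.castLE hkk j) = f j := by
  intro m
  induction m with
  | zero => intro _ _ _ _ _ _ j hj; omega
  | succ m ih =>
    intro k' k hkk f' f hco j hj
    rcases Nat.lt_or_ge (j : ℕ) m with hlt | hge
    · exact ih k' k hkk f' f hco j hlt
    · have hjm : (j : ℕ) = m := by omega
      have hmk : m + 1 ≤ k := by omega
      have hmk' : m + 1 ≤ k' := le_trans hmk hkk
      set g : Fin (m+1) → Fin d := fun i => f (Fin.castLE hmk i) with hg
      set g' : Fin (m+1) → Fin d := fun i => f' (Fin.castLE hmk' i) with hg'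
      have e1 : extAddr c k f (Fin.castLE hmk (Fin.last m)) = extAddr c (m+1) g (Fin.last m) :=
        extAddr_restrict c k (m+1) hmk f (Fin.last m)
      have e2 : extAddr c k' f' (Fin.castLE hmk' (Fin.last m)) = extAddr c (m+1) g' (Fin.last m) :=
        extAddr_restrict c k' (m+1) hmk' f' (Fin.last m)
      have e3 : Fin.castLE hmk' (Fin.last m) = Fin.castLE hkk (Fin.castLE hmk (Fin.last m)) := by
        ext; simp
      have key : extAddr c (m+1) g' (Fin.last m) = extAddr c (m+1) g (Fin.last m) := by
        rw [← e1, ← e2, e3, hco]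
      have einit : Fin.init g' = Fin.init g := by
        funext i
        show f' (Fin.castLE hmk' (Fin.castSucc i)) = f (Fin.castLE hmk (Fin.castSucc i))
        have h4 : Fin.castLE hmk' (Fin.castSucc i) =
            Fin.castLE hkk (Fin.castLE hmk (Fin.castSucc i)) := by ext; simp
        rw [h4]
        exact ih k' k hkk f' f hco (Fin.castLE hmk (Fin.castSucc i)) (by simp)
      have key2 : c m (extAddr c m (Fin.init g)) (g' (Fin.last m)) =
          c m (extAddr c m (Fin.init g)) (g (Fin.last m)) := by
        have u1 : extAddr c (m+1) g' (Fin.last m) =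
            c m (extAddr c m (Fin.init g')) (g' (Fin.last m)) := by
          simp only [extAddr]
          rw [Fin.snoc_last]
        have u2 : extAddr c (m+1) g (Fin.last m) =
            c m (extAddr c m (Fin.init g)) (g (Fin.last m)) := by
          simp only [extAddr]
          rw [Fin.snoc_last]
        rw [u1, u2, einit] at key
        exact key
      have hlast : g' (Fin.last m) = g (Fin.last m) := hc m _ key2
      have hj1 : Fin.castLE hmk (Fin.last m) = j := by ext; simp [hjm]
      have hj2 : Fin.castLE hmk' (Fin.last m) = Fin.castLE hkk j := by ext; simp [hjm]
      rw [hg, hg'] at hlast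
      simp only [hj1, hj2] at hlast
      exact hlast

end Stmt6Aux
namespace Stmt6Aux

theorem treePos_ext {D h : ℕ} {k k' : Fin (h+1)} {f : Fin (k:ℕ) → Fin D}
    {f' : Fin (k':ℕ) → Fin D} (hk : (k:ℕ) = (k':ℕ)) (hf : HEq f f') :
    (⟨k, f⟩ : TreePos D h) = ⟨k', f'⟩ := by
  obtain ⟨kv, hkv⟩ := k
  obtain ⟨kv', hkv'⟩ := k'
  have hk2 : kv = kv' := hk
  subst hk2
  have : f = f' := eq_of_heq hf
  subst this
  rfl

/-- The subtree embedding determined by a selection function. -/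
def mkEmb {d D : ℕ} (h : ℕ) (c : (k : ℕ) → (Fin k → Fin D) → Fin d → Fin D)
    (hc : ∀ k g, Function.Injective (c k g)) : SubtreeEmb d D h where
  toFun p := ⟨p.1, extAddr c (p.1 : ℕ) p.2⟩
  depth_eq _ := rfl
  pfx_iff p q := by
    constructor
    · rintro ⟨hle, hco⟩
      refine ⟨hle, fun i => ?_⟩
      show extAddr c _ q.2 (Fin.castLE hle i) = extAddr c _ p.2 i
      rw [extAddr_restrict c _ _ hle q.2 i]
      have h2 : (fun j => q.2 (Fin.castLE hle j)) = p.2 := funext hco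
      rw [h2]
    · rintro ⟨hle, hco⟩
      exact ⟨hle, fun i => extAddr_inj c hc ((p.1 : ℕ)) _ _ hle q.2 p.2 hco i i.isLt⟩

/-- Internal (non-leaf) positions. -/
def Internal (D h : ℕ) : Type := (k : Fin h) × (Fin (k : ℕ) → Fin D)

instance (D h : ℕ) : DecidableEq (Internal D h) := by
  unfold Internal; infer_instance

/-- The `j`-th child of an internal position. -/
def chld {D h : ℕ} (p : Internal D h) (j : Fin D) : TreePos D h :=
  ⟨⟨(p.1 : ℕ) + 1, Nat.succ_lt_succ p.1.isLt⟩, Fin.snoc p.2 j⟩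

theorem chld_inj {D h : ℕ} {p p' : Internal D h} {j j' : Fin D}
    (he : chld p j = chld p' j') : p = p' ∧ j = j' := by
  obtain ⟨⟨k, hk⟩, f⟩ := p
  obtain ⟨⟨k', hk'⟩, f'⟩ := p'
  have h1 : k + 1 = k' + 1 := congrArg (fun q : TreePos D h => ((q.1 : Fin (h+1)) : ℕ)) he
  have hkk : k = k' := by omega
  subst hkk
  have h2 : (Fin.snoc f j : Fin (k+1) → Fin D) = (Fin.snoc f' j' : Fin (k+1) → Fin D) := by
    have := (Sigma.mk.inj_iff.mp he).2
    exact eq_of_heq this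
  have hf : f = f' := by
    funext i
    have := congrFun h2 (Fin.castSucc i)
    rwa [Fin.snoc_castSucc, Fin.snoc_castSucc] at this
  have hj : j = j' := by
    have := congrFun h2 (Fin.last k)
    rwa [Fin.snoc_last, Fin.snoc_last] at this
  subst hf
  exact ⟨rfl, hj⟩

theorem chld_ne_root {D h : ℕ} (p : Internal D h) (j : Fin D) :
    chld p j ≠ TreePos.root D h := by
  intro he
  have h1 : (p.1 : ℕ) + 1 = 0 := congrArg (fun q : TreePos D h => ((q.1 : Fin (h+1)) : ℕ)) he
  omega

/-- Candidate vertex sets for Hall's theorem. -/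
def hallSets {V : Type*} [DecidableEq V] (D h : ℕ) (t₁ t₂ : TreePos D h → V) :
    (Internal D h ⊕ Internal D h) → Finset V
  | Sum.inl p => (Finset.image (fun j => t₁ (chld p j)) Finset.univ).erase (t₂ (TreePos.root D h))
  | Sum.inr q => (Finset.image (fun j => t₂ (chld q j)) Finset.univ).erase (t₁ (TreePos.root D h))

end Stmt6Aux
namespace Stmt6Aux

theorem hallSets_card {V : Type*} [DecidableEq V] {D h : ℕ} (t₁ t₂ : TreePos D h → V)
    (h₁ : Function.Injective t₁) (h₂ : Function.Injective t₂)
    (x : Internal D h ⊕ Internal D h) : D - 1 ≤ (hallSets D h t₁ t₂ x).card := by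
  rcases x with p | q
  · calc D - 1 = (Finset.image (fun j => t₁ (chld p j)) Finset.univ).card - 1 := by
          rw [Finset.card_image_of_injective _
            (fun a b hab => (chld_inj (h₁ hab)).2), Finset.card_univ, Fintype.card_fin]
      _ ≤ _ := Finset.pred_card_le_card_erase
  · calc D - 1 = (Finset.image (fun j => t₂ (chld q j)) Finset.univ).card - 1 := by
          rw [Finset.card_image_of_injective _
            (fun a b hab => (chld_inj (h₂ hab)).2), Finset.card_univ, Fintype.card_fin]
      _ ≤ _ := Finset.pred_card_le_card_erase

theorem hall_cond {V : Type*} [DecidableEq V] {d D h : ℕ} (hd : 1 ≤ d) (h2d : 2 * d + 1 ≤ D)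
    (t₁ t₂ : TreePos D h → V) (h₁ : Function.Injective t₁) (h₂ : Function.Injective t₂)
    (s : Finset ((Internal D h ⊕ Internal D h) × Fin d)) :
    s.card ≤ (s.biUnion (fun x => hallSets D h t₁ t₂ x.1)).card := by
  classical
  set A0 : (Internal D h ⊕ Internal D h) → Finset V := hallSets D h t₁ t₂ with hA0
  set T : Finset (Internal D h ⊕ Internal D h) := s.image Prod.fst with hT
  have hcards : s.card ≤ T.card * d := by
    calc s.card ≤ (T ×ˢ (Finset.univ : Finset (Fin d))).card := by
          apply Finset.card_le_card
          intro x hx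
          exact Finset.mem_product.mpr ⟨Finset.mem_image_of_mem _ hx, Finset.mem_univ _⟩
      _ = T.card * d := by rw [Finset.card_product, Finset.card_univ, Fintype.card_fin]
  have hbi : s.biUnion (fun x => A0 x.1) = T.biUnion A0 := by
    rw [hT, Finset.image_biUnion]
  rw [hbi]
  -- the left parts of A0 are pairwise disjoint, similarly the right parts
  have hdisjL : ∀ x ∈ T.filter (fun x => x.isLeft = true),
      ∀ y ∈ T.filter (fun x => x.isLeft = true), x ≠ y → Disjoint (A0 x) (A0 y) := by
    rintro x hx y hy hxy
    rcases x with p | p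
    swap; · simp at hx
    rcases y with q | q
    swap; · simp at hy
    rw [Finset.disjoint_left]
    intro v hv hv'
    obtain ⟨j, -, hj⟩ := Finset.mem_image.mp (Finset.mem_of_mem_erase hv)
    obtain ⟨j', -, hj'⟩ := Finset.mem_image.mp (Finset.mem_of_mem_erase hv')
    exact hxy (by rw [(chld_inj (h₁ (hj.trans hj'.symm))).1])
  have hdisjR : ∀ x ∈ T.filter (fun x => ¬ x.isLeft = true),
      ∀ y ∈ T.filter (fun x => ¬ x.isLeft = true), x ≠ y → Disjoint (A0 x) (A0 y) := by
    rintro x hx y hy hxy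
    rcases x with p | p
    · simp at hx
    rcases y with q | q
    · simp at hy
    rw [Finset.disjoint_left]
    intro v hv hv'
    obtain ⟨j, -, hj⟩ := Finset.mem_image.mp (Finset.mem_of_mem_erase hv)
    obtain ⟨j', -, hj'⟩ := Finset.mem_image.mp (Finset.mem_of_mem_erase hv')
    exact hxy (by rw [(chld_inj (h₂ (hj.trans hj'.symm))).1])
  have hLbound : (T.filter (fun x => x.isLeft = true)).card * (D - 1) ≤ (T.biUnion A0).card := by
    calc (T.filter (fun x => x.isLeft = true)).card * (D - 1)
        ≤ ∑ x ∈ T.filter (fun x => x.isLeft = true), (A0 x).card := by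
          simpa [smul_eq_mul, mul_comm] using
            Finset.card_nsmul_le_sum (T.filter (fun x => x.isLeft = true))
              (fun x => (A0 x).card) (D - 1) (fun x _ => hallSets_card t₁ t₂ h₁ h₂ x)
      _ = ((T.filter (fun x => x.isLeft = true)).biUnion A0).card :=
          (Finset.card_biUnion hdisjL).symm
      _ ≤ (T.biUnion A0).card :=
          Finset.card_le_card (Finset.biUnion_subset_biUnion_of_subset_left _
            (Finset.filter_subset _ _))
  have hRbound : (T.filter (fun x => ¬ x.isLeft = true)).card * (D - 1) ≤ (T.biUnion A0).card := by
    calc (T.filter (fun x => ¬ x.isLeft = true)).card * (D - 1)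
        ≤ ∑ x ∈ T.filter (fun x => ¬ x.isLeft = true), (A0 x).card := by
          simpa [smul_eq_mul, mul_comm] using
            Finset.card_nsmul_le_sum (T.filter (fun x => ¬ x.isLeft = true))
              (fun x => (A0 x).card) (D - 1) (fun x _ => hallSets_card t₁ t₂ h₁ h₂ x)
      _ = ((T.filter (fun x => ¬ x.isLeft = true)).biUnion A0).card :=
          (Finset.card_biUnion hdisjR).symm
      _ ≤ (T.biUnion A0).card :=
          Finset.card_le_card (Finset.biUnion_subset_biUnion_of_subset_left _
            (Finset.filter_subset _ _))
  have hsplit : (T.filter (fun x => x.isLeft = true)).card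
      + (T.filter (fun x => ¬ x.isLeft = true)).card = T.card :=
    Finset.card_filter_add_card_filter_not _
  have hE : 2 * d ≤ D - 1 := by omega
  have hfin : s.card * 2 ≤ (T.biUnion A0).card * 2 := by
    calc s.card * 2 ≤ (T.card * d) * 2 := Nat.mul_le_mul_right 2 hcards
      _ = T.card * (2 * d) := by ring
      _ ≤ T.card * (D - 1) := Nat.mul_le_mul_left _ hE
      _ = (T.filter (fun x => x.isLeft = true)).card * (D - 1)
          + (T.filter (fun x => ¬ x.isLeft = true)).card * (D - 1) := by
            rw [← hsplit, add_mul]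
      _ ≤ (T.biUnion A0).card + (T.biUnion A0).card := add_le_add hLbound hRbound
      _ = (T.biUnion A0).card * 2 := by ring
  omega

end Stmt6Aux
namespace Stmt6Aux

/-- Selection function from a per-internal-node choice of child indices. -/
def mkSel {d D h : ℕ} (hdD : d ≤ D) (j : Internal D h → Fin d → Fin D) :
    (k : ℕ) → (Fin k → Fin D) → Fin d → Fin D := fun k g a =>
  if hk : k < h then j ⟨⟨k, hk⟩, g⟩ a else Fin.castLE hdD a

theorem mkSel_inj {d D h : ℕ} (hdD : d ≤ D) (j : Internal D h → Fin d → Fin D)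
    (hj : ∀ p, Function.Injective (j p)) :
    ∀ k g, Function.Injective (mkSel hdD j k g) := by
  intro k g a a' haa
  by_cases hk : k < h
  · simp only [mkSel, dif_pos hk] at haa
    exact hj _ haa
  · simp only [mkSel, dif_neg hk] at haa
    exact Fin.castLE_injective hdD haa

theorem mkEmb_range {d D h : ℕ} (hdD : d ≤ D) (j : Internal D h → Fin d → Fin D)
    (hc : ∀ k g, Function.Injective (mkSel hdD j k g)) (p : TreePos d h) :
    (mkEmb h (mkSel hdD j) hc).toFun p = TreePos.root D h ∨
      ∃ (q : Internal D h) (a : Fin d), (mkEmb h (mkSel hdD j) hc).toFun p = chld q (j q a) := by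
  obtain ⟨⟨k, hk⟩, g⟩ := p
  cases k with
  | zero =>
    left
    show (⟨⟨0, hk⟩, extAddr (mkSel hdD j) 0 g⟩ : TreePos D h) = TreePos.root D h
    exact treePos_ext rfl (heq_of_eq (funext fun i => i.elim0))
  | succ m =>
    right
    have hm : m < h := by omega
    refine ⟨⟨⟨m, hm⟩, extAddr (mkSel hdD j) m (Fin.init g)⟩, g (Fin.last m), ?_⟩
    show (⟨⟨m + 1, hk⟩, extAddr (mkSel hdD j) (m + 1) g⟩ : TreePos D h) = _
    refine treePos_ext rfl (heq_of_eq ?_)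
    simp only [extAddr, chld]

    simp only [mkSel, dif_pos hm]

end Stmt6Aux

open Stmt6Aux in
/-- If D ≥ 3d(h+1), then any two D-ary ordered trees of height h
(labelled injectively in a common vertex set, with distinct roots) contain
vertex-disjoint d-ary subtrees of height h. -/
theorem stmt6 {V : Type*} (d D h : ℕ) (hd : 1 ≤ d) (hD : 3 * d * (h + 1) ≤ D)
    (t₁ t₂ : TreePos D h → V)
    (h₁ : Function.Injective t₁) (h₂ : Function.Injective t₂)
    (hroot : t₁ (TreePos.root D h) ≠ t₂ (TreePos.root D h)) :
    ∃ e₁ e₂ : SubtreeEmb d D h,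
      Disjoint (Set.range (t₁ ∘ e₁.toFun)) (Set.range (t₂ ∘ e₂.toFun)) := by
  classical
  have hdD : d ≤ D := le_trans (by nlinarith) hD
  have h2d : 2 * d + 1 ≤ D := le_trans (by nlinarith) hD
  obtain ⟨f, hfinj, hfmem⟩ := (Finset.all_card_le_biUnion_card_iff_exists_injective
      (fun x : (Internal D h ⊕ Internal D h) × Fin d => hallSets D h t₁ t₂ x.1)).mp
      (hall_cond hd h2d t₁ t₂ h₁ h₂)
  have hch1 : ∀ (p : Internal D h) (a : Fin d), ∃ jj : Fin D,
      t₁ (chld p jj) = f (Sum.inl p, a) := by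
    intro p a
    have hm := hfmem (Sum.inl p, a)
    obtain ⟨jj, -, hjj⟩ := Finset.mem_image.mp (Finset.mem_of_mem_erase hm)
    exact ⟨jj, hjj⟩
  have hch2 : ∀ (q : Internal D h) (a : Fin d), ∃ jj : Fin D,
      t₂ (chld q jj) = f (Sum.inr q, a) := by
    intro q a
    have hm := hfmem (Sum.inr q, a)
    obtain ⟨jj, -, hjj⟩ := Finset.mem_image.mp (Finset.mem_of_mem_erase hm)
    exact ⟨jj, hjj⟩
  choose j₁ hj₁ using hch1
  choose j₂ hj₂ using hch2
  have hj₁inj : ∀ p, Function.Injective (j₁ p) := by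
    intro p a a' haa
    have : f (Sum.inl p, a) = f (Sum.inl p, a') := by
      rw [← hj₁ p a, ← hj₁ p a', haa]
    have := hfinj this
    simpa using congrArg Prod.snd this
  have hj₂inj : ∀ q, Function.Injective (j₂ q) := by
    intro q a a' haa
    have : f (Sum.inr q, a) = f (Sum.inr q, a') := by
      rw [← hj₂ q a, ← hj₂ q a', haa]
    have := hfinj this
    simpa using congrArg Prod.snd this
  refine ⟨mkEmb h (mkSel hdD j₁) (mkSel_inj hdD j₁ hj₁inj),
    mkEmb h (mkSel hdD j₂) (mkSel_inj hdD j₂ hj₂inj), ?_⟩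
  rw [Set.disjoint_left]
  rintro v ⟨p, rfl⟩ ⟨q, hq⟩
  simp only [Function.comp_apply] at hq
  rcases mkEmb_range hdD j₁ (mkSel_inj hdD j₁ hj₁inj) p with hp1 | ⟨P, a, hP⟩ <;>
    rcases mkEmb_range hdD j₂ (mkSel_inj hdD j₂ hj₂inj) q with hq1 | ⟨Q, b, hQ⟩
  · rw [hp1] at hq; rw [hq1] at hq
    exact hroot hq.symm
  · rw [hp1] at hq; rw [hQ] at hq
    rw [hj₂ Q b] at hq
    have hne : f (Sum.inr Q, b) ≠ t₁ (TreePos.root D h) :=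
      (Finset.mem_erase.mp (hfmem (Sum.inr Q, b))).1
    exact hne hq
  · rw [hq1] at hq; rw [hP, hj₁ P a] at hq
    have hne : f (Sum.inl P, a) ≠ t₂ (TreePos.root D h) :=
      (Finset.mem_erase.mp (hfmem (Sum.inl P, a))).1
    exact hne hq.symm
  · rw [hP, hj₁ P a, hQ, hj₂ Q b] at hq
    have := hfinj hq
    have := congrArg Prod.fst this
    simp at this
end

section
/- Let G be a graph with maximum degree Δ, and suppose d, h, Δ ≪ D (explicitly, it suffices that there is a chain d = d_{Δ+1} ≪ d_Δ ≪ ... ≪ d_0 = D where each step allows the two-tree untangling lemma). For each vertex u of G let T(u) be a D-ary ordered tree of height h with vertex set contained in some ground set, all roots distinct. Then there exist d-ary subtrees T'(u) ⊆ T(u) of height h such that for every edge uv of G, T'(u) and T'(v) are vertex-disjoint. -/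
namespace Stmt7Aux

/-- ℕ-indexed positions of a `D`-ary tree (of unbounded height). -/
abbrev Pos (D : ℕ) : Type := (m : ℕ) × (Fin m → Fin D)

lemma exists_inj_avoid {d D : ℕ} (B : Set (Pos D)) (hfin : B.Finite)
    (hcard : B.ncard + d ≤ D) (m : ℕ) (w : Fin m → Fin D) :
    ∃ g : Fin d → Fin D, Function.Injective g ∧
      ∀ j, (⟨m + 1, Fin.snoc w (g j)⟩ : Pos D) ∉ B := by
  classical
  haveI := hfin.fintype
  set P : Fin D → Prop := fun a => (⟨m + 1, Fin.snoc w a⟩ : Pos D) ∈ B with hP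
  have hinj : Function.Injective (fun a : {a : Fin D // P a} =>
      (⟨⟨m + 1, Fin.snoc w a.1⟩, a.2⟩ : B)) := by
    rintro ⟨a, ha⟩ ⟨b, hb⟩ hab
    simp only [Subtype.mk.injEq, Sigma.mk.inj_iff, heq_eq_eq, true_and] at hab
    have := congrFun hab (Fin.last m)
    simpa [Fin.snoc_last] using this
  have hcardP : Fintype.card {a : Fin D // P a} ≤ B.ncard := by
    have := Fintype.card_le_of_injective _ hinj
    calc Fintype.card {a : Fin D // P a} ≤ Fintype.card B := this
      _ = B.ncard := by rw [← Nat.card_coe_set_eq, Nat.card_eq_fintype_card]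
  have hcompl : d ≤ Fintype.card {a : Fin D // ¬ P a} := by
    rw [Fintype.card_subtype_compl]
    simp only [Fintype.card_fin]
    omega
  obtain ⟨g0⟩ := Function.Embedding.nonempty_of_card_le (by simpa using hcompl :
    Fintype.card (Fin d) ≤ Fintype.card {a : Fin D // ¬ P a})
  exact ⟨fun j => (g0 j).1, fun x y hxy => g0.injective (Subtype.ext hxy),
    fun j => (g0 j).2⟩

variable {d D : ℕ}

/-- The sequence of `D`-ary child indices along a `d`-ary path, given a choice
function `pick` of children at each node. -/
def img (pick : (m : ℕ) → (Fin m → Fin D) → Fin d → Fin D) :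
    (m : ℕ) → (Fin m → Fin d) → Fin m → Fin D
  | 0, _ => Fin.elim0
  | m + 1, u => Fin.snoc (img pick m (Fin.init u))
      (pick m (img pick m (Fin.init u)) (u (Fin.last m)))

lemma img_prefix (pick : (m : ℕ) → (Fin m → Fin D) → Fin d → Fin D) :
    ∀ (b a : ℕ) (hab : a ≤ b) (u : Fin b → Fin d) (i : Fin a),
      img pick b u (Fin.castLE hab i) = img pick a (fun j => u (Fin.castLE hab j)) i := by
  intro b
  induction b with
  | zero =>
    intro a hab u i
    interval_cases a
    exact i.elim0
  | succ b ih =>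
    intro a hab u i
    rcases Nat.lt_or_ge a (b+1) with h | h
    · have hab' : a ≤ b := by omega
      have h1 : (Fin.castLE hab i : Fin (b+1)) = Fin.castSucc (Fin.castLE hab' i) := by
        ext; simp
      rw [h1]
      simp only [img, Fin.snoc_castSucc]
      rw [ih a hab' (Fin.init u) i]
      have h3 : (fun j => Fin.init u (Fin.castLE hab' j)) = (fun j => u (Fin.castLE hab j)) := by
        funext j
        simp only [Fin.init]
        congr 1
      rw [h3]
    · have : a = b + 1 := by omega
      subst this
      have h1 : (Fin.castLE hab i : Fin (b+1)) = i := by ext; simp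
      have h2 : (fun j => u (Fin.castLE hab j)) = u := by
        funext j
        congr 1
      rw [h1, h2]

lemma img_inj (pick : (m : ℕ) → (Fin m → Fin D) → Fin d → Fin D)
    (hpick : ∀ m w, Function.Injective (pick m w)) :
    ∀ m : ℕ, Function.Injective (img pick m) := by
  intro m
  induction m with
  | zero => intro u v _; funext i; exact i.elim0
  | succ m ih =>
    intro u v huv
    have hinit : Fin.init u = Fin.init v := by
      apply ih
      funext i
      have := congrFun huv (Fin.castSucc i)
      simpa only [img, Fin.snoc_castSucc] using this
    have hlast : u (Fin.last m) = v (Fin.last m) := by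
      have := congrFun huv (Fin.last m)
      simp only [img, Fin.snoc_last, hinit] at this
      exact hpick m _ this
    funext i
    induction i using Fin.lastCases with
    | last => exact hlast
    | cast j => exact congrFun hinit j

lemma exists_emb_avoid (d D h : ℕ) (B : Set (Pos D))
    (hfin : B.Finite) (hcard : B.ncard + d ≤ D)
    (hroot : (⟨0, Fin.elim0⟩ : Pos D) ∉ B) :
    ∃ e : SubtreeEmb d D h, ∀ p : TreePos d h,
      (⟨((e.toFun p).1 : ℕ), (e.toFun p).2⟩ : Pos D) ∉ B := by
  classical
  choose pick hpick1 hpick2 using fun m w => exists_inj_avoid B hfin hcard m w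
  have havoid : ∀ (m : ℕ) (u : Fin m → Fin d), (⟨m, img pick m u⟩ : Pos D) ∉ B := by
    intro m u
    match m with
    | 0 =>
      have : img pick 0 u = Fin.elim0 := by funext i; exact i.elim0
      rw [this]; exact hroot
    | m + 1 =>
      show (⟨m + 1, Fin.snoc _ _⟩ : Pos D) ∉ B
      exact hpick2 m (img pick m (Fin.init u)) (u (Fin.last m))
  refine ⟨⟨fun p => ⟨p.1, img pick (p.1 : ℕ) p.2⟩, fun p => rfl, ?_⟩, ?_⟩
  · rintro ⟨kp, sp⟩ ⟨kq, sq⟩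
    constructor
    · rintro ⟨hle, hpq⟩
      refine ⟨hle, fun i => ?_⟩
      show img pick (kq : ℕ) sq (Fin.castLE hle i) = img pick (kp : ℕ) sp i
      rw [img_prefix pick (kq : ℕ) (kp : ℕ) hle sq i]
      congr 1
      funext j
      exact hpq j
    · rintro ⟨hle, hpq⟩
      refine ⟨hle, fun i => ?_⟩
      have key : img pick (kp : ℕ) (fun j => sq (Fin.castLE hle j)) = img pick (kp : ℕ) sp := by
        funext j
        rw [← img_prefix pick (kq : ℕ) (kp : ℕ) hle sq j]
        exact hpq j
      have := img_inj pick hpick1 (kp : ℕ) key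
      exact congrFun this i
  · rintro ⟨kp, sp⟩
    exact havoid (kp : ℕ) sp

end Stmt7Aux

open Stmt7Aux

/-- For all d, h, Δ there is a D₀ so that for all D ≥ D₀ the
following holds.  If G is a graph with maximum degree at most Δ and each
vertex u of G carries a D-ary ordered tree T(u) of height h (labelled
injectively in a common ground set, all roots distinct), then one can choose
d-ary subtrees T'(u) ⊆ T(u) of height h such that for every edge uv of G the
subtrees T'(u) and T'(v) are vertex-disjoint. -/
theorem stmt7 (d h Δ : ℕ) :
    ∃ D₀ : ℕ, ∀ D : ℕ, D₀ ≤ D →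
      ∀ (U W : Type) [Fintype U] (G : SimpleGraph U),
        (∀ u : U, (G.neighborSet u).ncard ≤ Δ) →
        ∀ t : U → TreePos D h → W,
          (∀ u, Function.Injective (t u)) →
          (∀ u v : U, u ≠ v → t u (TreePos.root D h) ≠ t v (TreePos.root D h)) →
          ∃ e : U → SubtreeEmb d D h,
            ∀ u v : U, G.Adj u v →
              Disjoint (Set.range (t u ∘ (e u).toFun))
                (Set.range (t v ∘ (e v).toFun)) := by
  classical
  haveI : Fintype (TreePos d h) :=
    inferInstanceAs (Fintype ((k : Fin (h + 1)) × (Fin (k : ℕ) → Fin d)))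
  refine ⟨Δ * Nat.card (TreePos d h) + Δ + d, ?_⟩
  intro D hD U W _ G hdeg t hinj hroots
  set N := Nat.card (TreePos d h) with hN
  obtain ⟨n, ⟨φ⟩⟩ : ∃ n, Nonempty (U ≃ Fin n) := ⟨Fintype.card U, ⟨Fintype.equivFin U⟩⟩
  have key : ∀ i : ℕ, ∃ f : ∀ j : Fin n, (j : ℕ) < i → SubtreeEmb d D h,
      (∀ (j k : Fin n) (hj : (j : ℕ) < i) (hk : (k : ℕ) < i), j ≠ k →
        G.Adj (φ.symm j) (φ.symm k) →
        Disjoint (Set.range (t (φ.symm j) ∘ (f j hj).toFun))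
          (Set.range (t (φ.symm k) ∘ (f k hk).toFun)))
      ∧ (∀ (j : Fin n) (hj : (j : ℕ) < i) (v : U), G.Adj (φ.symm j) v →
          ∀ p, t (φ.symm j) ((f j hj).toFun p) ≠ t v (TreePos.root D h)) := by
    intro i
    induction i with
    | zero =>
      exact ⟨fun j hj => absurd hj (Nat.not_lt_zero _), fun j k hj => by omega,
        fun j hj => by omega⟩
    | succ i ihm =>
      obtain ⟨f, hf1, hf2⟩ := ihm
      by_cases hin : i < n
      · set u : U := φ.symm ⟨i, hin⟩ with hu
        set J := {j : Fin n // (j : ℕ) < i ∧ G.Adj u (φ.symm j)} with hJ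
        haveI : Finite J :=
          inferInstanceAs (Finite {j : Fin n // (j : ℕ) < i ∧ G.Adj u (φ.symm j)})
        set L1 : Set W := Set.range
          (fun x : J × TreePos d h => t (φ.symm x.1.1) ((f x.1.1 x.1.2.1).toFun x.2)) with hL1
        set L2 : Set W := Set.range
          (fun v : G.neighborSet u => t v.1 (TreePos.root D h)) with hL2
        set L : Set W := L1 ∪ L2 with hL
        have hLfin : L.Finite := (Set.finite_range _).union (Set.finite_range _)
        -- card bounds
        have hJcard : Nat.card J ≤ Δ := by
          have hinjJ : Function.Injective
              (fun j : J => (⟨φ.symm j.1, j.2.2⟩ : G.neighborSet u)) := by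
            rintro ⟨a, ha⟩ ⟨b, hb⟩ hab
            simp only [Subtype.mk.injEq] at hab
            exact Subtype.ext (φ.symm.injective (congrArg Subtype.val hab))
          calc Nat.card J ≤ Nat.card (G.neighborSet u) :=
                Nat.card_le_card_of_injective _ hinjJ
            _ = (G.neighborSet u).ncard := Nat.card_coe_set_eq _
            _ ≤ Δ := hdeg u
        have hLcard : L.ncard ≤ Δ * N + Δ := by
          have h1 : L1.ncard ≤ Δ * N := by
            calc L1.ncard = Nat.card L1 := (Nat.card_coe_set_eq _).symm
              _ ≤ Nat.card (J × TreePos d h) := Finite.card_range_le _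
              _ = Nat.card J * N := by rw [Nat.card_prod]
              _ ≤ Δ * N := Nat.mul_le_mul_right _ hJcard
          have h2 : L2.ncard ≤ Δ := by
            calc L2.ncard = Nat.card L2 := (Nat.card_coe_set_eq _).symm
              _ ≤ Nat.card (G.neighborSet u) := Finite.card_range_le _
              _ = (G.neighborSet u).ncard := Nat.card_coe_set_eq _
              _ ≤ Δ := hdeg u
          calc L.ncard ≤ L1.ncard + L2.ncard := Set.ncard_union_le _ _
            _ ≤ Δ * N + Δ := by omega
        -- the bad position set
        set B : Set (Pos D) :=
          {x | ∃ hm : x.1 < h + 1, t u ⟨⟨x.1, hm⟩, x.2⟩ ∈ L} with hB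
        have hmapsTo : ∀ x ∈ B,
            (if hm : x.1 < h + 1 then t u ⟨⟨x.1, hm⟩, x.2⟩
              else t u (TreePos.root D h)) ∈ L := by
          rintro x ⟨hm, hx⟩
          rw [dif_pos hm]
          exact hx
        have hinjOn : Set.InjOn
            (fun x : Pos D => if hm : x.1 < h + 1 then t u ⟨⟨x.1, hm⟩, x.2⟩
              else t u (TreePos.root D h)) B := by
          rintro ⟨mx, sx⟩ ⟨hmx, _⟩ ⟨my, sy⟩ ⟨hmy, _⟩ hxy
          simp only [dif_pos hmx, dif_pos hmy] at hxy
          have hq := hinj u hxy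
          have h1 : mx = my := by
            have := congrArg (fun z : TreePos D h => ((z.1 : Fin (h+1)) : ℕ)) hq
            simpa using this
          subst h1
          have h2 : sx = sy := by
            have := (Sigma.mk.inj_iff.mp hq).2
            exact eq_of_heq this
          rw [h2]
        have hBfin : B.Finite := by
          apply Set.Finite.of_finite_image _ hinjOn
          exact hLfin.subset (Set.image_subset_iff.mpr hmapsTo)
        have hBcard : B.ncard ≤ L.ncard :=
          Set.ncard_le_ncard_of_injOn _ hmapsTo hinjOn hLfin
        have hrootL : t u (TreePos.root D h) ∉ L := by
          rintro (hmem | hmem)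
          · obtain ⟨⟨⟨j, hji, hadj⟩, p⟩, hp⟩ := hmem
            exact hf2 j hji u hadj.symm p hp
          · obtain ⟨⟨v, hv⟩, hp⟩ := hmem
            have hne : v ≠ u := G.ne_of_adj (G.mem_neighborSet u v |>.mp hv).symm
            exact hroots v u hne hp
        have hrootB : (⟨0, Fin.elim0⟩ : Pos D) ∉ B := by
          rintro ⟨hm, hmem⟩
          apply hrootL
          have : (⟨⟨0, hm⟩, Fin.elim0⟩ : TreePos D h) = TreePos.root D h := by
            apply Sigma.ext
            · rfl
            · exact heq_of_eq (funext fun i => i.elim0)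
          rwa [this] at hmem
        have hBD : B.ncard + d ≤ D := by
          have : Δ * N + Δ + d ≤ D := hD
          omega
        obtain ⟨e0, he0⟩ := exists_emb_avoid d D h B hBfin hBD hrootB
        have he0' : ∀ p, t u (e0.toFun p) ∉ L := by
          intro p hmem
          exact he0 p ⟨(e0.toFun p).1.isLt, hmem⟩
        refine ⟨fun j hj => if hji : (j : ℕ) < i then f j hji else e0, ?_, ?_⟩
        · intro j k hj hk hne hadj
          by_cases hji : (j : ℕ) < i <;> by_cases hki : (k : ℕ) < i
          · simp only [dif_pos hji, dif_pos hki]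
            exact hf1 j k hji hki hne hadj
          · have hk' : k = ⟨i, hin⟩ := Fin.ext (show (k : ℕ) = i by omega)
            subst hk'
            simp only [dif_pos hji, dif_neg hki]
            rw [Set.disjoint_right]
            rintro x ⟨p, hp⟩ ⟨q, hq⟩
            apply he0' p
            left
            exact ⟨⟨⟨j, hji, hadj.symm⟩, q⟩, hq.trans hp.symm⟩
          · have hj' : j = ⟨i, hin⟩ := Fin.ext (show (j : ℕ) = i by omega)
            subst hj'
            simp only [dif_neg hji, dif_pos hki]
            rw [Set.disjoint_left]
            rintro x ⟨p, hp⟩ ⟨q, hq⟩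
            apply he0' p
            left
            exact ⟨⟨⟨k, hki, hadj⟩, q⟩, hq.trans hp.symm⟩
          · exact absurd (Fin.ext (show (j : ℕ) = (k : ℕ) by omega)) hne
        · intro j hj v hadj p
          by_cases hji : (j : ℕ) < i
          · simp only [dif_pos hji]
            exact hf2 j hji v hadj p
          · have hj' : j = ⟨i, hin⟩ := Fin.ext (show (j : ℕ) = i by omega)
            subst hj'
            simp only [dif_neg hji]
            intro hEq
            apply he0' p
            right
            exact ⟨⟨v, (G.mem_neighborSet u v).mpr hadj⟩, hEq.symm⟩
      · refine ⟨fun j hj => f j (by omega : (j : ℕ) < i), ?_, ?_⟩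
        · intro j k hj hk hne hadj
          exact hf1 j k _ _ hne hadj
        · intro j hj v hadj p
          exact hf2 j _ v hadj p
  obtain ⟨f, h1, h2⟩ := key n
  refine ⟨fun u => f (φ u) (φ u).isLt, ?_⟩
  intro u v hadj
  have hne : φ u ≠ φ v := fun hEq => (G.ne_of_adj hadj) (φ.injective hEq)
  have hadj' : G.Adj (φ.symm (φ u)) (φ.symm (φ v)) := by simpa using hadj
  have := h1 (φ u) (φ v) (φ u).isLt (φ v).isLt hne hadj'
  simpa using this
end

section
/- Every connected r-uniform tree T on n vertices with maximum degree at most d admits a (graph) tree S on n+1 vertices with maximum degree at most d·r such that every edge of T is a set of r vertices of S that pairwise have distance at most d+1 in S; in other words, T is a subhypergraph of K_r(S^{d+1}). -/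
/-- Every connected r-uniform tree T on a vertex set V with
maximum degree at most d admits a (graph) tree S on V ∪ {x} (that is, on
n + 1 vertices) with maximum degree at most d·r such that every edge of T is
an r-set of vertices of S of pairwise distance at most d+1 in S, i.e.
T ⊆ K_r(S^{d+1}).

The r-uniform tree is given by its ordered edge list e 0, …, e (m-1), each an
r-set, where each edge beyond the first meets the union of the previous edges
in a nonempty set of at most r-1 vertices contained in a single previous
edge. -/
theorem stmt8 {V : Type*} [Fintype V] [DecidableEq V] (r d m : ℕ) (hr : 1 ≤ r)
    (e : Fin m → Finset V)
    (huniform : ∀ i, (e i).card = r)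
    (hcover : ∀ v : V, ∃ i, v ∈ e i)
    (htree : ∀ i : Fin m, 0 < (i : ℕ) →
      (e i ∩ (Finset.univ.filter (fun j => j < i)).biUnion e).card ≤ r - 1 ∧
      ∃ i₀, i₀ < i ∧ e i ∩ (Finset.univ.filter (fun j => j < i)).biUnion e ⊆ e i₀)
    (hconn : ∀ i : Fin m, 0 < (i : ℕ) →
      (e i ∩ (Finset.univ.filter (fun j => j < i)).biUnion e).Nonempty)
    (hdeg : ∀ v : V, (Finset.univ.filter (fun i => v ∈ e i)).card ≤ d) :
    ∃ S : SimpleGraph (Option V), S.IsTree ∧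
      (∀ v, (S.neighborSet v).ncard ≤ d * r) ∧
      ∀ i : Fin m, ∀ u ∈ e i, ∀ w ∈ e i, S.dist (some u) (some w) ≤ d + 1 := by
  classical
  rcases isEmpty_or_nonempty V with hV | hV
  · -- trivial case: V is empty
    have hsub : Subsingleton (Option V) := by
      constructor; rintro (_ | a) (_ | b) <;> first | rfl | exact (hV.false ‹V›).elim
    have hbot : (⊥ : SimpleGraph (Option V)).Connected := by
      constructor
      intro a b
      rw [Subsingleton.elim a b]
    refine ⟨⊥, ⟨hbot, SimpleGraph.isAcyclic_bot⟩, ?_, ?_⟩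
    · intro v
      simp [SimpleGraph.neighborSet]
    · intro i u hu
      exact (hV.false u).elim
  obtain ⟨v₀⟩ := hV
  have hm : 0 < m := by
    obtain ⟨i, _⟩ := hcover v₀; exact i.pos
  have hd : 1 ≤ d := by
    obtain ⟨i, hi⟩ := hcover v₀
    have h1 : 0 < (Finset.univ.filter (fun j => v₀ ∈ e j)).card :=
      Finset.card_pos.2 ⟨i, by simp [hi]⟩
    exact h1.trans_le (hdeg v₀)
  -- edges indexed by ℕ
  set E : ℕ → Finset V := fun j => if h : j < m then e ⟨j, h⟩ else ∅ with hEdef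
  have hElt : ∀ (j) (h : j < m), E j = e ⟨j, h⟩ := fun j h => dif_pos h
  have hEge : ∀ j, m ≤ j → E j = ∅ := fun j h => dif_neg (Nat.not_lt.2 h)
  have hEcard : ∀ j, j < m → (E j).card = r := fun j h => by
    rw [hElt j h]; exact huniform _
  set prevU : ℕ → Finset V := fun j => (Finset.range j).biUnion E with hprevdef
  have hprev_mem : ∀ {v : V} {j : ℕ}, v ∈ prevU j ↔ ∃ k, k < j ∧ v ∈ E k := by
    intro v j
    simp [hprevdef, Finset.mem_biUnion, Finset.mem_range]
  have hbiUeq : ∀ (j) (h : j < m),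
      (Finset.univ.filter (fun i => i < (⟨j, h⟩ : Fin m))).biUnion e = prevU j := by
    intro j h
    ext v
    simp only [Finset.mem_biUnion, Finset.mem_filter, Finset.mem_univ, true_and, hprev_mem]
    constructor
    · rintro ⟨i, hij, hv⟩
      refine ⟨i.1, hij, ?_⟩
      rw [hElt i.1 i.2]
      simpa [Fin.eta] using hv
    · rintro ⟨k, hk, hv⟩
      exact ⟨⟨k, hk.trans h⟩, hk, by rwa [hElt k (hk.trans h)] at hv⟩
  have htree' : ∀ j, 0 < j → j < m → ∃ j₀, j₀ < j ∧ E j ∩ prevU j ⊆ E j₀ := by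
    intro j hj hjm
    obtain ⟨-, i₀, hi₀, hsub⟩ := htree ⟨j, hjm⟩ hj
    refine ⟨i₀.1, hi₀, ?_⟩
    rw [hElt j hjm, hElt i₀.1 i₀.2, ← hbiUeq j hjm]
    simpa [Fin.eta] using hsub
  have hconn' : ∀ j, 0 < j → j < m → (E j ∩ prevU j).Nonempty := by
    intro j hj hjm
    have := hconn ⟨j, hjm⟩ hj
    rwa [← hElt j hjm, hbiUeq j hjm] at this
  -- first edge of a vertex
  have hfvex : ∀ v : V, ∃ j, j < m ∧ v ∈ E j := by
    intro v
    obtain ⟨i, hi⟩ := hcover v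
    exact ⟨i.1, i.2, by rw [hElt i.1 i.2]; simpa [Fin.eta] using hi⟩
  set fv : V → ℕ := fun v => Nat.find (hfvex v) with hfvdef
  have hfv_lt : ∀ v, fv v < m := fun v => (Nat.find_spec (hfvex v)).1
  have hfv_mem : ∀ v, v ∈ E (fv v) := fun v => (Nat.find_spec (hfvex v)).2
  have hfv_min : ∀ v k, k < m → v ∈ E k → fv v ≤ k := fun v k h1 h2 =>
    Nat.find_min' _ ⟨h1, h2⟩
  -- anchors
  have hanchex : ∀ j : ℕ, ∃ a : V, 0 < j → j < m →
      a ∈ E j ∩ prevU j ∧ ∀ y ∈ E j ∩ prevU j, fv y ≤ fv a := by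
    intro j
    by_cases h : 0 < j ∧ j < m
    · obtain ⟨a, ha, hmax⟩ := (E j ∩ prevU j).exists_max_image fv (hconn' j h.1 h.2)
      exact ⟨a, fun _ _ => ⟨ha, hmax⟩⟩
    · exact ⟨v₀, fun h1 h2 => absurd ⟨h1, h2⟩ h⟩
  choose anchor hanchor using hanchex
  have hanch_E : ∀ j, 0 < j → j < m → anchor j ∈ E j :=
    fun j h1 h2 => (Finset.mem_inter.1 (hanchor j h1 h2).1).1
  have hanch_fvlt : ∀ j, 0 < j → j < m → fv (anchor j) < j := by
    intro j h1 h2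
    obtain ⟨k, hk, hmem⟩ := hprev_mem.1 (Finset.mem_inter.1 (hanchor j h1 h2).1).2
    exact lt_of_le_of_lt (hfv_min _ k (hk.trans h2) hmem) hk
  -- parent map
  set par : V → Option V := fun v => if 0 < fv v then some (anchor (fv v)) else none
    with hpardef
  have hpar_pos : ∀ v, 0 < fv v → par v = some (anchor (fv v)) := by
    intro v h; simp only [hpardef]; rw [if_pos h]
  have hpar_zero : ∀ v, fv v = 0 → par v = none := by
    intro v h; simp only [hpardef]; rw [if_neg (by omega)]
  have hpar_ne : ∀ v, par v ≠ some v := by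
    intro v h
    by_cases h0 : 0 < fv v
    · rw [hpar_pos v h0] at h
      have h2 : anchor (fv v) = v := Option.some_injective _ h
      have h3 := hanch_fvlt (fv v) h0 (hfv_lt v)
      rw [h2] at h3
      omega
    · rw [hpar_zero v (by omega)] at h
      exact absurd h (by simp)
  -- the tree S
  set S : SimpleGraph (Option V) :=
    SimpleGraph.fromRel (fun x y => ∃ v : V, x = some v ∧ y = par v) with hSdef
  have hadj_par : ∀ v : V, S.Adj (some v) (par v) := by
    intro v
    rw [hSdef, SimpleGraph.fromRel_adj]
    exact ⟨fun h => hpar_ne v h.symm, Or.inl ⟨v, rfl, rfl⟩⟩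
  have hadj_char : ∀ x y, S.Adj x y →
      (∃ v, x = some v ∧ y = par v) ∨ (∃ v, y = some v ∧ x = par v) := by
    intro x y h
    rw [hSdef, SimpleGraph.fromRel_adj] at h
    exact h.2
  -- rank function
  set ρ : Option V → ℕ := fun x => match x with | none => 0 | some v => fv v + 1 with hρdef
  have hρ_par : ∀ v, ρ (par v) < ρ (some v) := by
    intro v
    by_cases h0 : 0 < fv v
    · rw [hpar_pos v h0]
      simp only [hρdef]
      exact Nat.succ_lt_succ (hanch_fvlt _ h0 (hfv_lt v))
    · rw [hpar_zero v (by omega)]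
      simp [hρdef]
  have hadj_cases : ∀ x y, S.Adj x y →
      (∃ v, x = some v ∧ y = par v ∧ ρ y < ρ x) ∨
      (∃ v, y = some v ∧ x = par v ∧ ρ x < ρ y) := by
    intro x y h
    rcases hadj_char x y h with ⟨v, hx, hy⟩ | ⟨v, hy, hx⟩
    · exact Or.inl ⟨v, hx, hy, by rw [hx, hy]; exact hρ_par v⟩
    · exact Or.inr ⟨v, hy, hx, by rw [hx, hy]; exact hρ_par v⟩
  -- connectivity
  have hreach : ∀ v : V, S.Reachable (some v) none := by
    have H : ∀ n, ∀ v : V, fv v = n → S.Reachable (some v) none := by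
      intro n
      induction n using Nat.strong_induction_on with
      | _ n ih =>
        intro v hn
        by_cases h0 : 0 < fv v
        · have h1 : S.Adj (some v) (some (anchor (fv v))) := by
            have := hadj_par v
            rwa [hpar_pos v h0] at this
          exact h1.reachable.trans
            (ih (fv (anchor (fv v))) (by rw [← hn]; exact hanch_fvlt _ h0 (hfv_lt v)) _ rfl)
        · have h1 : S.Adj (some v) none := by
            have := hadj_par v
            rwa [hpar_zero v (by omega)] at this
          exact h1.reachable
    exact fun v => H (fv v) v rfl
  have hpre : S.Preconnected := by
    intro x y
    have hx : S.Reachable x none := by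
      cases x with
      | none => exact SimpleGraph.Reachable.refl none
      | some v => exact hreach v
    have hy : S.Reachable y none := by
      cases y with
      | none => exact SimpleGraph.Reachable.refl none
      | some v => exact hreach v
    exact hx.trans hy.symm
  have hconnS : S.Connected := ⟨hpre⟩
  -- acyclicity
  have hacyc : S.IsAcyclic := by
    have nocyc : ∀ (w : Option V) (q : S.Walk w w),
        (∀ z ∈ q.support, ρ z ≤ ρ w) → ¬q.IsCycle := by
      intro w q hmax hq
      cases q with
      | nil => exact SimpleGraph.Walk.IsCycle.not_of_nil hq
      | @cons _ y _ hadj p =>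
        have hcyc := (SimpleGraph.Walk.cons_isCycle_iff p hadj).1 hq
        have hlen : 2 ≤ p.length := by
          have := hq.three_le_length
          simp only [SimpleGraph.Walk.length_cons] at this
          omega
        cases hrev : p.reverse with
        | nil =>
          exfalso
          have := congrArg SimpleGraph.Walk.length hrev
          simp only [SimpleGraph.Walk.length_reverse, SimpleGraph.Walk.length_nil] at this
          omega
        | @cons _ z _ hadj2 p2 =>
          -- hadj2 : S.Adj w z, p2 : S.Walk z y
          have hsupp_rev : p.support.reverse = w :: p2.support := by
            rw [← SimpleGraph.Walk.support_reverse, hrev, SimpleGraph.Walk.support_cons]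
          have hsupp : p.support = p2.support.tail.reverse ++ [z, w] := by
            have h1 : p.support = (w :: p2.support).reverse := by
              rw [← hsupp_rev, List.reverse_reverse]
            rw [h1, List.reverse_cons, p2.support_eq_cons, List.reverse_cons]
            simp
          -- y and z are both "parents" of w
          have hyz : y = z := by
            have hy_mem : y ∈ (SimpleGraph.Walk.cons hadj p).support := by
              rw [SimpleGraph.Walk.support_cons]
              exact List.mem_cons_of_mem _ p.start_mem_support
            have hz_mem : z ∈ (SimpleGraph.Walk.cons hadj p).support := by
              rw [SimpleGraph.Walk.support_cons]
              refine List.mem_cons_of_mem _ ?_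
              rw [hsupp]
              simp
            have hy_le := hmax y hy_mem
            have hz_le := hmax z hz_mem
            rcases hadj_cases w y hadj with ⟨v, hw1, hy1, -⟩ | ⟨v, hy1, hw1, hlt⟩
            · rcases hadj_cases w z hadj2 with ⟨v', hw2, hz1, -⟩ | ⟨v', hz1, hw2, hlt⟩
              · rw [hw1] at hw2
                have : v = v' := Option.some_injective _ hw2
                rw [hy1, hz1, this]
              · exact absurd hz_le (by omega)
            · exact absurd hy_le (by omega)
          -- but y ≠ z since p is a path of length ≥ 2
          have hnodup : p.support.Nodup := hcyc.1.support_nodup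
          have hlen_supp : p.support.length = p.length + 1 := p.length_support
          have hA_ne : p2.support.tail.reverse ≠ [] := by
            intro h
            rw [hsupp, h] at hlen_supp
            simp at hlen_supp
            omega
          obtain ⟨a, A', hA⟩ := List.exists_cons_of_ne_nil hA_ne
          have hy_head : y = a := by
            have h2 : p.support = y :: p.support.tail := p.support_eq_cons
            rw [hsupp, hA] at h2
            simpa using h2.symm
          have : y ∈ p2.support.tail.reverse := by rw [hA, hy_head]; simp
          rw [hsupp] at hnodup
          rw [List.nodup_append] at hnodup
          exact hnodup.2.2 y this y (by rw [hyz]; simp) rfl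
    intro x c hc
    obtain ⟨w, hw_mem, hw_max⟩ :=
      c.support.toFinset.exists_max_image ρ ⟨x, List.mem_toFinset.2 c.start_mem_support⟩
    rw [List.mem_toFinset] at hw_mem
    refine nocyc w (c.rotate w hw_mem) ?_ (hc.rotate hw_mem)
    intro z hz
    have hz' : z ∈ c.support := by
      rcases List.eq_or_mem_of_mem_cons ((c.rotate w hw_mem).support_eq_cons ▸ hz) with h | h
      · rw [h]; exact hw_mem
      · have hrot := c.support_rotate w hw_mem
        have := (hrot.mem_iff).1 h
        exact List.mem_of_mem_tail this
    exact hw_max z (List.mem_toFinset.2 hz')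
  -- chain lemma
  have chainlem : ∀ j, j < m → ∀ x w : V, x ∈ E j → w ∈ E j → fv w ≤ fv x →
      w ∈ E (fv x) := by
    intro j
    induction j using Nat.strong_induction_on with
    | _ j ih =>
      intro hjm x w hxj hwj hfwx
      by_cases hfx : fv x = j
      · rwa [hfx]
      · have hfx_lt : fv x < j := lt_of_le_of_ne (hfv_min x j hjm hxj) hfx
        have hj0 : 0 < j := by omega
        obtain ⟨j₀, hj₀_lt, hsub⟩ := htree' j hj0 hjm
        have hx' : x ∈ E j₀ :=
          hsub (Finset.mem_inter.2 ⟨hxj, hprev_mem.2 ⟨fv x, hfx_lt, hfv_mem x⟩⟩)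
        have hw' : w ∈ E j₀ :=
          hsub (Finset.mem_inter.2
            ⟨hwj, hprev_mem.2 ⟨fv w, lt_of_le_of_lt hfwx hfx_lt, hfv_mem w⟩⟩)
        exact ih j₀ hj₀_lt (hj₀_lt.trans hjm) x w hx' hw' hfwx
  -- main distance lemma
  have hdist_adj : ∀ x y, S.Adj x y → S.dist x y ≤ 1 := by
    intro x y h
    have := S.dist_le h.toWalk
    simpa using this
  have main : ∀ j, j < m → ∀ u w : V, u ∈ E j → fv u = j → w ∈ E j →
      S.dist (some u) (some w) ≤
        ((Finset.range (j + 1)).filter (fun k => w ∈ E k)).card + 1 := by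
    intro j
    induction j using Nat.strong_induction_on with
    | _ j ih =>
      intro hjm u w huj hfuj hwj
      have hcnt1 : 1 ≤ ((Finset.range (j + 1)).filter (fun k => w ∈ E k)).card :=
        Finset.card_pos.2 ⟨j, Finset.mem_filter.2 ⟨Finset.mem_range.2 (Nat.lt_succ_self j), hwj⟩⟩
      by_cases huw : u = w
      · rw [huw, SimpleGraph.dist_self]; omega
      by_cases hfwj : fv w = j
      · -- both are new vertices of edge j : common parent
        have hpar_eq : par u = par w := by
          simp only [hpardef, hfuj, hfwj]
        have h1 : S.dist (some u) (some w) ≤ 2 := by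
          calc S.dist (some u) (some w)
              ≤ S.dist (some u) (par u) + S.dist (par u) (some w) := hconnS.dist_triangle
            _ ≤ 1 + 1 := add_le_add (hdist_adj _ _ (hadj_par u))
                (by rw [hpar_eq, SimpleGraph.dist_comm]; exact hdist_adj _ _ (hadj_par w))
        omega
      · have hfw_lt : fv w < j := lt_of_le_of_ne (hfv_min w j hjm hwj) hfwj
        have hj0 : 0 < j := by omega
        have hwint : w ∈ E j ∩ prevU j :=
          Finset.mem_inter.2 ⟨hwj, hprev_mem.2 ⟨fv w, hfw_lt, hfv_mem w⟩⟩
        have hfa_lt : fv (anchor j) < j := hanch_fvlt j hj0 hjm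
        have hfw_le_fa : fv w ≤ fv (anchor j) := (hanchor j hj0 hjm).2 w hwint
        have hwEfa : w ∈ E (fv (anchor j)) :=
          chainlem j hjm (anchor j) w (hanch_E j hj0 hjm) hwj hfw_le_fa
        have hadj_ua : S.Adj (some u) (some (anchor j)) := by
          have := hadj_par u
          rwa [hpar_pos u (by omega), hfuj] at this
        have hIH := ih (fv (anchor j)) hfa_lt (hfv_lt _) (anchor j) w
          (hfv_mem (anchor j)) rfl hwEfa
        have hsub : (Finset.range (fv (anchor j) + 1)).filter (fun k => w ∈ E k) ⊂
            (Finset.range (j + 1)).filter (fun k => w ∈ E k) := by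
          refine ⟨Finset.filter_subset_filter _ (Finset.range_subset_range.2 (by omega)), ?_⟩
          intro hcon
          have : j ∈ (Finset.range (fv (anchor j) + 1)).filter (fun k => w ∈ E k) :=
            hcon (Finset.mem_filter.2 ⟨Finset.mem_range.2 (Nat.lt_succ_self j), hwj⟩)
          have := Finset.mem_range.1 (Finset.mem_filter.1 this).1
          omega
        have hlt := Finset.card_lt_card hsub
        calc S.dist (some u) (some w)
            ≤ S.dist (some u) (some (anchor j)) + S.dist (some (anchor j)) (some w) :=
              hconnS.dist_triangle
          _ ≤ 1 + (((Finset.range (fv (anchor j) + 1)).filter (fun k => w ∈ E k)).card + 1) :=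
              add_le_add (hdist_adj _ _ hadj_ua) hIH
          _ ≤ ((Finset.range (j + 1)).filter (fun k => w ∈ E k)).card + 1 := by omega
  -- degree count conversion : counting in ℕ vs Fin m
  have hcount : ∀ (w : V) (j : ℕ),
      ((Finset.range (j + 1)).filter (fun k => w ∈ E k)).card ≤ d := by
    intro w j
    refine le_trans ?_ (hdeg w)
    refine Finset.card_le_card_of_injOn
      (fun k => (⟨k % m, Nat.mod_lt k hm⟩ : Fin m)) ?_ ?_
    · intro k hk
      have hkE : w ∈ E k := (Finset.mem_filter.1 hk).2
      have hkm : k < m := by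
        by_contra h
        rw [hEge k (by omega)] at hkE
        exact absurd hkE (Finset.notMem_empty w)
      have hkeq : (fun k => (⟨k % m, Nat.mod_lt k hm⟩ : Fin m)) k = ⟨k, hkm⟩ :=
        Fin.ext (by simp [Nat.mod_eq_of_lt hkm])
      rw [hkeq]
      simp only [Finset.mem_coe, Finset.mem_filter, Finset.mem_univ, true_and]
      rwa [← hElt k hkm]
    · intro k1 hk1 k2 hk2 heq
      have h1 : w ∈ E k1 := (Finset.mem_filter.1 hk1).2
      have h2 : w ∈ E k2 := (Finset.mem_filter.1 hk2).2
      have hk1m : k1 < m := by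
        by_contra h; rw [hEge k1 (by omega)] at h1; exact absurd h1 (Finset.notMem_empty w)
      have hk2m : k2 < m := by
        by_contra h; rw [hEge k2 (by omega)] at h2; exact absurd h2 (Finset.notMem_empty w)
      have hval : k1 % m = k2 % m := congrArg Fin.val heq
      rw [Nat.mod_eq_of_lt hk1m, Nat.mod_eq_of_lt hk2m] at hval
      exact hval
  refine ⟨S, ⟨hconnS, hacyc⟩, ?_, ?_⟩
  · -- degree bound
    intro x
    cases x with
    | none =>
      have hsub : S.neighborSet none ⊆ ↑((E 0).image some) := by
        intro y hy
        rcases hadj_char none y hy with ⟨v, hx, -⟩ | ⟨v, hy1, hx⟩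
        · exact absurd hx (by simp)
        · have h0 : fv v = 0 := by
            by_contra h
            rw [hpar_pos v (by omega)] at hx
            exact absurd hx (by simp)
          have : v ∈ E 0 := h0 ▸ hfv_mem v
          rw [hy1]
          simp only [Finset.coe_image, Set.mem_image, Finset.mem_coe]
          exact ⟨v, this, rfl⟩
      calc (S.neighborSet none).ncard ≤ ((E 0).image some).card := by
            rw [← Set.ncard_coe_finset]
            exact Set.ncard_le_ncard hsub (Finset.finite_toSet _)
        _ ≤ (E 0).card := Finset.card_image_le
        _ = r := hEcard 0 hm
        _ ≤ d * r := Nat.le_mul_of_pos_left r hd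
    | some v =>
      set J : Finset ℕ :=
        (Finset.range m).filter (fun j => 0 < j ∧ anchor j = v) with hJdef
      have hsub : S.neighborSet (some v) ⊆
          ↑(insert (par v) ((J.biUnion (fun j => E j \ prevU j)).image some)) := by
        intro y hy
        rcases hadj_char (some v) y hy with ⟨v', hx, hy1⟩ | ⟨u, hy1, hx⟩
        · have : v' = v := (Option.some_injective _ hx.symm)
          rw [hy1, this]
          simp
        · -- some v = par u, so u is a child of v
          have h0 : 0 < fv u := by
            by_contra h
            rw [hpar_zero u (by omega)] at hx
            exact absurd hx (by simp)
          rw [hpar_pos u h0] at hx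
          have hanchv : anchor (fv u) = v := (Option.some_injective _ hx).symm
          have hmem : u ∈ E (fv u) \ prevU (fv u) := by
            refine Finset.mem_sdiff.2 ⟨hfv_mem u, ?_⟩
            intro hcon
            obtain ⟨k, hk, hkE⟩ := hprev_mem.1 hcon
            have := hfv_min u k (hk.trans (hfv_lt u)) hkE
            omega
          have hJmem : fv u ∈ J := by
            rw [hJdef]
            exact Finset.mem_filter.2 ⟨Finset.mem_range.2 (hfv_lt u), h0, hanchv⟩
          rw [hy1]
          simp only [Finset.coe_insert, Set.mem_insert_iff, Finset.coe_image, Set.mem_image,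
            Finset.mem_coe]
          exact Or.inr ⟨u, Finset.mem_biUnion.2 ⟨fv u, hJmem, hmem⟩, rfl⟩
      have hJcard : J.card ≤ d - 1 := by
        have hstep : J.card ≤
            ((Finset.univ.filter (fun i : Fin m => v ∈ e i)).erase ⟨fv v, hfv_lt v⟩).card := by
          refine Finset.card_le_card_of_injOn
            (fun k => (⟨k % m, Nat.mod_lt k hm⟩ : Fin m)) ?_ ?_
          · intro k hk
            rw [hJdef] at hk
            have hk' := Finset.mem_filter.1 hk
            have hkr : k < m := Finset.mem_range.1 hk'.1
            have hk0 : 0 < k := hk'.2.1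
            have hkanch : anchor k = v := hk'.2.2
            have hvE : v ∈ E k := hkanch ▸ hanch_E k hk0 hkr
            have hkfv : fv v < k := hkanch ▸ hanch_fvlt k hk0 hkr
            have hkeq : (fun k => (⟨k % m, Nat.mod_lt k hm⟩ : Fin m)) k = ⟨k, hkr⟩ :=
              Fin.ext (by simp [Nat.mod_eq_of_lt hkr])
            rw [hkeq]
            refine Finset.mem_erase.2 ⟨?_, ?_⟩
            · intro hcon
              have := Fin.mk.inj_iff.1 hcon
              omega
            · simp only [Finset.mem_filter, Finset.mem_univ, true_and]
              rwa [← hElt k hkr]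
          · intro k1 hk1 k2 hk2 heq
            rw [hJdef] at hk1 hk2
            have h1 : k1 < m := Finset.mem_range.1 (Finset.mem_filter.1 hk1).1
            have h2 : k2 < m := Finset.mem_range.1 (Finset.mem_filter.1 hk2).1
            have hval : k1 % m = k2 % m := congrArg Fin.val heq
            rw [Nat.mod_eq_of_lt h1, Nat.mod_eq_of_lt h2] at hval
            exact hval
        refine hstep.trans ?_
        rw [Finset.card_erase_of_mem (by
          simp only [Finset.mem_filter, Finset.mem_univ, true_and]
          rw [← hElt (fv v) (hfv_lt v)]
          exact hfv_mem v)]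
        exact Nat.sub_le_sub_right (hdeg v) 1
      have hEdiff : ∀ j ∈ J, (E j \ prevU j).card ≤ r - 1 := by
        intro j hj
        rw [hJdef] at hj
        have h1 : j < m := Finset.mem_range.1 (Finset.mem_filter.1 hj).1
        have h0 : 0 < j := (Finset.mem_filter.1 hj).2.1
        have hne := hconn' j h0 h1
        have hcard := Finset.card_sdiff_add_card_inter (E j) (prevU j)
        have hpos : 1 ≤ (E j ∩ prevU j).card := Finset.card_pos.2 hne
        have := hEcard j h1
        omega
      calc (S.neighborSet (some v)).ncard
          ≤ (insert (par v) ((J.biUnion (fun j => E j \ prevU j)).image some)).card := by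
            rw [← Set.ncard_coe_finset]
            exact Set.ncard_le_ncard hsub (Finset.finite_toSet _)
        _ ≤ ((J.biUnion (fun j => E j \ prevU j)).image some).card + 1 :=
            Finset.card_insert_le _ _
        _ ≤ (J.biUnion (fun j => E j \ prevU j)).card + 1 :=
            Nat.add_le_add_right Finset.card_image_le 1
        _ ≤ (∑ j ∈ J, (E j \ prevU j).card) + 1 :=
            Nat.add_le_add_right (Finset.card_biUnion_le) 1
        _ ≤ (∑ _j ∈ J, (r - 1)) + 1 :=
            Nat.add_le_add_right (Finset.sum_le_sum hEdiff) 1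
        _ = J.card * (r - 1) + 1 := by rw [Finset.sum_const, smul_eq_mul]
        _ ≤ (d - 1) * (r - 1) + 1 :=
            Nat.add_le_add_right (Nat.mul_le_mul_right _ hJcard) 1
        _ ≤ d * r := by
            obtain ⟨d', rfl⟩ := Nat.exists_eq_add_of_le hd
            obtain ⟨r', rfl⟩ := Nat.exists_eq_add_of_le hr
            simp only [Nat.add_sub_cancel_left]
            ring_nf
            nlinarith
  · -- distance bound
    intro i u hu w hw
    have hui : u ∈ E i.1 := by rw [hElt i.1 i.2]; simpa [Fin.eta] using hu
    have hwi : w ∈ E i.1 := by rw [hElt i.1 i.2]; simpa [Fin.eta] using hw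
    have key : ∀ u' w' : V, u' ∈ E i.1 → w' ∈ E i.1 → fv w' ≤ fv u' →
        S.dist (some u') (some w') ≤ d + 1 := by
      intro u' w' hu' hw' hle
      have hwE : w' ∈ E (fv u') := chainlem i.1 i.2 u' w' hu' hw' hle
      have := main (fv u') (hfv_lt u') u' w' (hfv_mem u') rfl hwE
      have hc := hcount w' (fv u')
      omega
    rcases le_total (fv w) (fv u) with h | h
    · exact key u w hui hwi h
    · rw [SimpleGraph.dist_comm]
      exact key w u hwi hui h
end

section
/- In the construction of the tree S from a connected r-uniform tree T with edges e₁,…,e_m (where S₁ is a star with root x and leaves e₁, and S_i is formed from S_{i−1} by attaching the vertices of e_i \ e_{f(i)} as leaves to a chosen vertex p_i ∈ e_i ∩ e_{f(i)}), the degree of every vertex u of T in S_i satisfies deg_{S_i}(u) ≤ r · deg_{T_i}(u), where T_i is the subhypergraph of T spanned by e₁,…,e_i and deg_{T_i}(u) is the number of edges among e₁,…,e_i containing u. -/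
/-- In the iterative construction of the tree S from a connected
r-uniform tree T with edges e 0, …, e (m-1) (S 0 is a star with root `none`
and leaves e 0; S i is S (i-1) with the vertices of e i \ e (f i) attached as
leaves to p i ∈ e i ∩ e (f i)), the degree of every vertex u of T in S i is at
most r times the number of edges among e 0, …, e i containing u. -/
theorem stmt10 {V : Type*} [Fintype V] [DecidableEq V] (r m : ℕ) (hm : 1 ≤ m)
    (e : ℕ → Finset V) (f : ℕ → ℕ) (p : ℕ → V)
    (S : ℕ → SimpleGraph (Option V))
    (huniform : ∀ i < m, (e i).card = r)
    (hf : ∀ i, 1 ≤ i → i < m → f i < i ∧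
      e i ∩ (Finset.range i).biUnion e ⊆ e (f i) ∧
      1 ≤ (e i ∩ (Finset.range i).biUnion e).card ∧
      (e i ∩ (Finset.range i).biUnion e).card ≤ r - 1)
    (hp : ∀ i, 1 ≤ i → i < m →
      p i ∈ e i ∩ e (f i) ∧ (1 ≤ f i → p i ∉ e (f (f i))))
    (hS0 : ∀ a b : Option V, (S 0).Adj a b ↔
      ((a = none ∧ ∃ v ∈ e 0, b = some v) ∨ (b = none ∧ ∃ v ∈ e 0, a = some v)))
    (hSsucc : ∀ i, 1 ≤ i → i < m → ∀ a b : Option V, (S i).Adj a b ↔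
      ((S (i - 1)).Adj a b ∨
        (a = some (p i) ∧ ∃ v ∈ e i \ e (f i), b = some v) ∨
        (b = some (p i) ∧ ∃ v ∈ e i \ e (f i), a = some v))) :
    ∀ i < m, ∀ u : V,
      ((S i).neighborSet (some u)).ncard ≤
        r * ((Finset.range (i + 1)).filter (fun j => u ∈ e j)).card := by
  intro i
  induction i with
  | zero =>
    intro _ u
    by_cases hu : u ∈ e 0
    · have hr : 1 ≤ r := by
        have h0 := huniform 0 (by omega)
        have hpos := Finset.card_pos.mpr ⟨u, hu⟩
        omega
      have hsub : (S 0).neighborSet (some u) ⊆ {none} := by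
        intro b hb
        rw [SimpleGraph.mem_neighborSet, hS0] at hb
        rcases hb with ⟨h, _⟩ | ⟨h, _⟩
        · exact absurd h (by simp)
        · simp [h]
      have h1 : ((S 0).neighborSet (some u)).ncard ≤ 1 := by
        calc ((S 0).neighborSet (some u)).ncard
            ≤ ({none} : Set (Option V)).ncard :=
              Set.ncard_le_ncard hsub (Set.finite_singleton _)
          _ = 1 := Set.ncard_singleton _
      have hc : ((Finset.range 1).filter (fun j => u ∈ e j)).card = 1 := by
        simp [Finset.range_one, Finset.filter_singleton, hu]
      rw [hc]
      omega
    · have hempty : (S 0).neighborSet (some u) = ∅ := by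
        ext b
        simp only [SimpleGraph.mem_neighborSet, hS0, Set.mem_empty_iff_false, iff_false]
        rintro (⟨h, _⟩ | ⟨_, v, hv, h⟩)
        · simp at h
        · cases Option.some.inj h; exact hu hv
      simp [hempty]
  | succ i ih =>
    intro him u
    have hi1 : 1 ≤ i + 1 := by omega
    have hpi := hp (i + 1) hi1 him
    have hprev := ih (by omega) u
    have hAdj : ∀ a b : Option V, (S (i + 1)).Adj a b ↔
        ((S i).Adj a b ∨
          (a = some (p (i + 1)) ∧ ∃ v ∈ e (i + 1) \ e (f (i + 1)), b = some v) ∨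
          (b = some (p (i + 1)) ∧ ∃ v ∈ e (i + 1) \ e (f (i + 1)), a = some v)) := by
      intro a b
      have h := hSsucc (i + 1) hi1 him a b
      simpa using h
    have hrangesub : (Finset.range (i + 1)).filter (fun j => u ∈ e j) ⊆
        (Finset.range (i + 2)).filter (fun j => u ∈ e j) :=
      Finset.filter_subset_filter _ (Finset.range_subset_range.mpr (by omega))
    by_cases hup : u = p (i + 1)
    · have hue : u ∈ e (i + 1) := by
        rw [hup]; exact (Finset.mem_inter.mp hpi.1).1
      have hcard : ((Finset.range (i + 2)).filter (fun j => u ∈ e j)).card =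
          ((Finset.range (i + 1)).filter (fun j => u ∈ e j)).card + 1 := by
        rw [Finset.range_add_one, Finset.filter_insert, if_pos hue,
          Finset.card_insert_of_notMem (by simp)]
      have hsub : (S (i + 1)).neighborSet (some u) ⊆
          (S i).neighborSet (some u) ∪
            (fun v => (some v : Option V)) '' ↑(e (i + 1) \ e (f (i + 1))) := by
        intro b hb
        rw [SimpleGraph.mem_neighborSet, hAdj] at hb
        rcases hb with h | ⟨_, v, hv, hbv⟩ | ⟨_, v, hv, hav⟩
        · exact Or.inl h
        · exact Or.inr ⟨v, by simpa using hv, hbv.symm⟩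
        · exfalso
          cases Option.some.inj hav
          rw [Finset.mem_sdiff] at hv
          exact hv.2 (hup ▸ (Finset.mem_inter.mp hpi.1).2)
      have hextra : ((fun v => (some v : Option V)) '' ↑(e (i + 1) \ e (f (i + 1)))).ncard ≤ r := by
        rw [Set.ncard_image_of_injective _ (fun a b h => Option.some.inj h),
          Set.ncard_coe_finset]
        calc (e (i + 1) \ e (f (i + 1))).card ≤ (e (i + 1)).card :=
              Finset.card_le_card Finset.sdiff_subset
          _ = r := huniform (i + 1) him
      calc ((S (i + 1)).neighborSet (some u)).ncard
          ≤ ((S i).neighborSet (some u) ∪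
              (fun v => (some v : Option V)) '' ↑(e (i + 1) \ e (f (i + 1)))).ncard :=
            Set.ncard_le_ncard hsub (Set.toFinite _)
        _ ≤ ((S i).neighborSet (some u)).ncard +
              ((fun v => (some v : Option V)) '' ↑(e (i + 1) \ e (f (i + 1)))).ncard :=
            Set.ncard_union_le _ _
        _ ≤ r * ((Finset.range (i + 1)).filter (fun j => u ∈ e j)).card + r :=
            add_le_add hprev hextra
        _ = r * (((Finset.range (i + 1)).filter (fun j => u ∈ e j)).card + 1) := by ring
        _ = r * ((Finset.range (i + 2)).filter (fun j => u ∈ e j)).card := by rw [hcard]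
    · by_cases hud : u ∈ e (i + 1) \ e (f (i + 1))
      · have hue : u ∈ e (i + 1) := (Finset.mem_sdiff.mp hud).1
        have hr : 1 ≤ r := by
          have h0 := huniform (i + 1) him
          have hpos := Finset.card_pos.mpr ⟨u, hue⟩
          omega
        have hcard : ((Finset.range (i + 2)).filter (fun j => u ∈ e j)).card =
            ((Finset.range (i + 1)).filter (fun j => u ∈ e j)).card + 1 := by
          rw [Finset.range_add_one, Finset.filter_insert, if_pos hue,
            Finset.card_insert_of_notMem (by simp)]
        have hsub : (S (i + 1)).neighborSet (some u) ⊆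
            (S i).neighborSet (some u) ∪ {some (p (i + 1))} := by
          intro b hb
          rw [SimpleGraph.mem_neighborSet, hAdj] at hb
          rcases hb with h | ⟨ha, _⟩ | ⟨hb, _⟩
          · exact Or.inl h
          · exact absurd (Option.some.inj ha) hup
          · exact Or.inr (by simp [hb])
        calc ((S (i + 1)).neighborSet (some u)).ncard
            ≤ ((S i).neighborSet (some u) ∪ {some (p (i + 1))}).ncard :=
              Set.ncard_le_ncard hsub (Set.toFinite _)
          _ ≤ ((S i).neighborSet (some u)).ncard + ({some (p (i + 1))} : Set (Option V)).ncard :=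
              Set.ncard_union_le _ _
          _ = ((S i).neighborSet (some u)).ncard + 1 := by rw [Set.ncard_singleton]
          _ ≤ r * ((Finset.range (i + 1)).filter (fun j => u ∈ e j)).card + r :=
              add_le_add hprev hr
          _ = r * (((Finset.range (i + 1)).filter (fun j => u ∈ e j)).card + 1) := by ring
          _ = r * ((Finset.range (i + 2)).filter (fun j => u ∈ e j)).card := by rw [hcard]
      · have hsub : (S (i + 1)).neighborSet (some u) ⊆ (S i).neighborSet (some u) := by
          intro b hb
          rw [SimpleGraph.mem_neighborSet, hAdj] at hb
          rcases hb with h | ⟨ha, _⟩ | ⟨_, v, hv, hav⟩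
          · exact h
          · exact absurd (Option.some.inj ha) hup
          · exfalso; cases Option.some.inj hav; exact hud hv
        calc ((S (i + 1)).neighborSet (some u)).ncard
            ≤ ((S i).neighborSet (some u)).ncard :=
              Set.ncard_le_ncard hsub (Set.toFinite _)
          _ ≤ r * ((Finset.range (i + 1)).filter (fun j => u ∈ e j)).card := hprev
          _ ≤ r * ((Finset.range (i + 2)).filter (fun j => u ∈ e j)).card :=
              Nat.mul_le_mul_left _ (Finset.card_le_card hrangesub)
end

section
/- With the same construction of S from a connected r-uniform tree T (edges e₁,…,e_m, function f, attachment vertices p_i ∈ e_i ∩ e_{f(i)}): for every i ≥ 2, every u ∈ e_i \ e_{f(i)}, and every w ∈ e_i, the distance in S between u and w is at most deg_{T_i}(w) + 1, where deg_{T_i}(w) is the number of edges among e₁,…,e_i containing w. -/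
/-- In the iterative construction of the tree S from a connected
r-uniform tree T with edges e 0, …, e (m-1) (S 0 a star with root `none` and
leaves e 0; S i obtained from S (i-1) by attaching the vertices of
e i \ e (f i) as leaves to p i ∈ e i ∩ e (f i)), for every i ≥ 1, every
u ∈ e i \ e (f i) and every w ∈ e i, the distance in the final tree S (m-1)
between u and w is at most deg_{T_i}(w) + 1, where deg_{T_i}(w) is the number
of edges among e 0, …, e i containing w. -/
theorem stmt11 {V : Type*} [Fintype V] [DecidableEq V] (r m : ℕ) (hm : 1 ≤ m)
    (e : ℕ → Finset V) (f : ℕ → ℕ) (p : ℕ → V)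
    (S : ℕ → SimpleGraph (Option V))
    (huniform : ∀ i < m, (e i).card = r)
    (hf : ∀ i, 1 ≤ i → i < m → f i < i ∧
      e i ∩ (Finset.range i).biUnion e ⊆ e (f i) ∧
      1 ≤ (e i ∩ (Finset.range i).biUnion e).card ∧
      (e i ∩ (Finset.range i).biUnion e).card ≤ r - 1)
    (hp : ∀ i, 1 ≤ i → i < m →
      p i ∈ e i ∩ e (f i) ∧ (1 ≤ f i → p i ∉ e (f (f i))))
    (hS0 : ∀ a b : Option V, (S 0).Adj a b ↔
      ((a = none ∧ ∃ v ∈ e 0, b = some v) ∨ (b = none ∧ ∃ v ∈ e 0, a = some v)))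
    (hSsucc : ∀ i, 1 ≤ i → i < m → ∀ a b : Option V, (S i).Adj a b ↔
      ((S (i - 1)).Adj a b ∨
        (a = some (p i) ∧ ∃ v ∈ e i \ e (f i), b = some v) ∨
        (b = some (p i) ∧ ∃ v ∈ e i \ e (f i), a = some v))) :
    ∀ i, 1 ≤ i → i < m → ∀ u ∈ e i \ e (f i), ∀ w ∈ e i,
      (S (m - 1)).Reachable (some u) (some w) ∧
      (S (m - 1)).dist (some u) (some w) ≤
        ((Finset.range (i + 1)).filter (fun j => w ∈ e j)).card + 1 := by

  -- monotonicity of adjacency along the construction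
  have mono : ∀ k, k < m → ∀ j ≤ k, ∀ a b, (S j).Adj a b → (S k).Adj a b := by
    intro k
    induction k with
    | zero => intro _ j hj a b h; interval_cases j; exact h
    | succ k ih =>
      intro hk j hj a b h
      rcases Nat.lt_or_ge j (k+1) with hlt | hge
      · have : (S k).Adj a b := ih (by omega) j (by omega) a b h
        exact (hSsucc (k+1) (by omega) hk a b).mpr (Or.inl (by simpa using this))
      · have : j = k + 1 := by omega
        subst this; exact h
  have lift : ∀ j, j < m → ∀ a b, (S j).Adj a b → (S (m-1)).Adj a b := by
    intro j hj a b h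
    exact mono (m-1) (by omega) j (by omega) a b h
  have h0 : ∀ v ∈ e 0, (S (m-1)).Adj none (some v) := by
    intro v hv
    exact lift 0 (by omega) _ _ ((hS0 none (some v)).mpr (Or.inl ⟨rfl, v, hv, rfl⟩))
  have hpi : ∀ i, 1 ≤ i → i < m → ∀ v ∈ e i \ e (f i),
      (S (m-1)).Adj (some (p i)) (some v) := by
    intro i hi1 him v hv
    exact lift i him _ _
      ((hSsucc i hi1 him _ _).mpr (Or.inr (Or.inl ⟨rfl, v, hv, rfl⟩)))
  intro i
  induction i using Nat.strong_induction_on with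
  | _ i IH =>
    intro hi1 him u hu w hw
    have hui : (S (m-1)).Adj (some (p i)) (some u) := hpi i hi1 him u hu
    by_cases hwf : w ∈ e (f i)
    · -- w is in the previous edge e (f i)
      have hpmem := (hp i hi1 him).1
      have hpe : p i ∈ e (f i) := (Finset.mem_inter.mp hpmem).2
      rcases Nat.eq_zero_or_pos (f i) with hf0 | hf1
      · -- f i = 0 : go through the root `none`
        rw [hf0] at hwf hpe
        let w1 : (S (m-1)).Walk (some u) (some w) :=
          .cons hui.symm (.cons (h0 (p i) hpe).symm (.cons (h0 w hwf) .nil))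
        refine ⟨w1.reachable, ?_⟩
        have hd := SimpleGraph.dist_le w1
        simp only [w1, SimpleGraph.Walk.length_cons, SimpleGraph.Walk.length_nil] at hd
        have hcard : 2 ≤ ((Finset.range (i + 1)).filter (fun j => w ∈ e j)).card := by
          refine Finset.one_lt_card.mpr ⟨0, ?_, i, ?_, by omega⟩
          · exact Finset.mem_filter.mpr ⟨Finset.mem_range.mpr (by omega), hwf⟩
          · exact Finset.mem_filter.mpr ⟨Finset.mem_range.mpr (by omega), hw⟩
        omega
      · -- f i ≥ 1 : use induction hypothesis at f i with u := p i
        have hfi : f i < i := (hf i hi1 him).1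
        have hpnot : p i ∉ e (f (f i)) := (hp i hi1 him).2 hf1
        have hpu : p i ∈ e (f i) \ e (f (f i)) := Finset.mem_sdiff.mpr ⟨hpe, hpnot⟩
        obtain ⟨hreach, hdist⟩ := IH (f i) hfi hf1 (by omega) (p i) hpu w hwf
        obtain ⟨W, hWlen⟩ := hreach.exists_walk_length_eq_dist
        let w1 : (S (m-1)).Walk (some u) (some w) := .cons hui.symm W
        refine ⟨w1.reachable, ?_⟩
        have hd := SimpleGraph.dist_le w1
        simp only [w1, SimpleGraph.Walk.length_cons, hWlen] at hd
        have hsub : insert i ((Finset.range (f i + 1)).filter (fun j => w ∈ e j)) ⊆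
            (Finset.range (i + 1)).filter (fun j => w ∈ e j) := by
          intro x hx
          rcases Finset.mem_insert.mp hx with rfl | hx
          · exact Finset.mem_filter.mpr ⟨Finset.mem_range.mpr (by omega), hw⟩
          · obtain ⟨hx1, hx2⟩ := Finset.mem_filter.mp hx
            exact Finset.mem_filter.mpr
              ⟨Finset.mem_range.mpr (by have := Finset.mem_range.mp hx1; omega), hx2⟩
        have hnotmem : i ∉ (Finset.range (f i + 1)).filter (fun j => w ∈ e j) := by
          intro hmem
          have := Finset.mem_range.mp (Finset.mem_filter.mp hmem).1
          omega
        have hcard := Finset.card_le_card hsub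
        rw [Finset.card_insert_of_notMem hnotmem] at hcard
        omega
    · -- w is also a new leaf attached to p i
      have hwi : (S (m-1)).Adj (some (p i)) (some w) :=
        hpi i hi1 him w (Finset.mem_sdiff.mpr ⟨hw, hwf⟩)
      let w1 : (S (m-1)).Walk (some u) (some w) := .cons hui.symm (.cons hwi .nil)
      refine ⟨w1.reachable, ?_⟩
      have hd := SimpleGraph.dist_le w1
      simp only [w1, SimpleGraph.Walk.length_cons, SimpleGraph.Walk.length_nil] at hd
      have hcard : 1 ≤ ((Finset.range (i + 1)).filter (fun j => w ∈ e j)).card :=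
        Finset.card_pos.mpr ⟨i, Finset.mem_filter.mpr ⟨Finset.mem_range.mpr (by omega), hw⟩⟩
      omega
end

section
/- Consequence of the construction: for every connected r-uniform tree T on n vertices with maximum degree at most d, and every edge e of T, any two vertices u, w ∈ e satisfy dist_S(u, w) ≤ d + 1 in the constructed graph tree S on n+1 vertices. -/
/-- For a connected r-uniform tree T on V with maximum degree at
most d (edges e 0, …, e (m-1)) and the tree S on V ∪ {x} obtained by the
iterative star-attachment construction (S 0 a star with root `none` and
leaves e 0; S i obtained from S (i-1) by attaching the vertices of
e i \ e (f i) as leaves to p i ∈ e i ∩ e (f i)): any two vertices u, w of a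
common edge e i of T satisfy dist_S(u, w) ≤ d + 1 in the final tree
S = S (m-1). -/
theorem stmt12 {V : Type*} [Fintype V] [DecidableEq V] (r d m : ℕ) (hm : 1 ≤ m)
    (e : ℕ → Finset V) (f : ℕ → ℕ) (p : ℕ → V)
    (S : ℕ → SimpleGraph (Option V))
    (huniform : ∀ i < m, (e i).card = r)
    (hdeg : ∀ v : V, ((Finset.range m).filter (fun j => v ∈ e j)).card ≤ d)
    (hf : ∀ i, 1 ≤ i → i < m → f i < i ∧
      e i ∩ (Finset.range i).biUnion e ⊆ e (f i) ∧
      1 ≤ (e i ∩ (Finset.range i).biUnion e).card ∧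
      (e i ∩ (Finset.range i).biUnion e).card ≤ r - 1)
    (hp : ∀ i, 1 ≤ i → i < m →
      p i ∈ e i ∩ e (f i) ∧ (1 ≤ f i → p i ∉ e (f (f i))))
    (hS0 : ∀ a b : Option V, (S 0).Adj a b ↔
      ((a = none ∧ ∃ v ∈ e 0, b = some v) ∨ (b = none ∧ ∃ v ∈ e 0, a = some v)))
    (hSsucc : ∀ i, 1 ≤ i → i < m → ∀ a b : Option V, (S i).Adj a b ↔
      ((S (i - 1)).Adj a b ∨
        (a = some (p i) ∧ ∃ v ∈ e i \ e (f i), b = some v) ∨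
        (b = some (p i) ∧ ∃ v ∈ e i \ e (f i), a = some v))) :
    ∀ i < m, ∀ u ∈ e i, ∀ w ∈ e i,
      (S (m - 1)).Reachable (some u) (some w) ∧
      (S (m - 1)).dist (some u) (some w) ≤ d + 1 := by
  classical
  -- abbreviation: number of edges among e 0, ..., e i containing w
  set cnt : ℕ → V → ℕ := fun i w => ((Finset.range (i+1)).filter (fun j => w ∈ e j)).card with hcnt
  -- cnt is bounded by d
  have hcnt_le : ∀ i, i < m → ∀ w : V, cnt i w ≤ d := by
    intro i hi w
    refine le_trans (Finset.card_le_card ?_) (hdeg w)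
    intro j hj
    simp only [Finset.mem_filter, Finset.mem_range] at hj ⊢
    exact ⟨by omega, hj.2⟩
  have hcnt_lt : ∀ i, 1 ≤ i → i < m → ∀ w : V, w ∈ e i → cnt (f i) w + 1 ≤ cnt i w := by
    intro i hi1 him w hw
    have hfi : f i < i := (hf i hi1 him).1
    have : ((Finset.range (f i + 1)).filter (fun j => w ∈ e j)) ⊂
        ((Finset.range (i + 1)).filter (fun j => w ∈ e j)) := by
      constructor
      · intro j hj
        simp only [Finset.mem_filter, Finset.mem_range] at hj ⊢
        exact ⟨by omega, hj.2⟩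
      · intro hsub
        have : i ∈ (Finset.range (f i + 1)).filter (fun j => w ∈ e j) := by
          apply hsub
          simp only [Finset.mem_filter, Finset.mem_range]
          exact ⟨by omega, hw⟩
        simp only [Finset.mem_filter, Finset.mem_range] at this
        omega
    have h2 := Finset.card_lt_card this
    simp only [hcnt]
    omega
  have hcnt_pos : ∀ i : ℕ, ∀ w : V, w ∈ e i → 1 ≤ cnt i w := by
    intro i w hw
    apply Finset.card_pos.mpr
    exact ⟨i, by simp only [Finset.mem_filter, Finset.mem_range]; exact ⟨by omega, hw⟩⟩
  -- monotonicity of the graphs S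
  have hmono : ∀ j, j < m → ∀ i, i ≤ j → ∀ a b, (S i).Adj a b → (S j).Adj a b := by
    intro j
    induction j with
    | zero => intro _ i hi a b h; interval_cases i; exact h
    | succ j ih =>
      intro hj i hi a b h
      rcases Nat.lt_or_ge i (j+1) with hij | hij
      · have h' : (S j).Adj a b := ih (by omega) i (by omega) a b h
        refine (hSsucc (j+1) (by omega) hj a b).mpr ?_
        left
        simpa using h'
      · have : i = j + 1 := by omega
        subst this; exact h
  have hfinal : ∀ i, i < m → ∀ a b, (S i).Adj a b → (S (m-1)).Adj a b := by
    intro i hi a b h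
    exact hmono (m-1) (by omega) i (by omega) a b h
  -- adjacency facts in the final graph
  have adj0 : ∀ v : V, v ∈ e 0 → (S (m-1)).Adj none (some v) := by
    intro v hv
    exact hfinal 0 (by omega) _ _ ((hS0 none (some v)).mpr (Or.inl ⟨rfl, v, hv, rfl⟩))
  have adjP : ∀ i, 1 ≤ i → i < m → ∀ v, v ∈ e i → v ∉ e (f i) →
      (S (m-1)).Adj (some (p i)) (some v) := by
    intro i hi1 him v hv hv'
    refine hfinal i him _ _ ((hSsucc i hi1 him (some (p i)) (some v)).mpr ?_)
    exact Or.inr (Or.inl ⟨rfl, v, Finset.mem_sdiff.mpr ⟨hv, hv'⟩, rfl⟩)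
  -- key lemma: if u is "new" at step i, then dist(u, w) ≤ cnt i w + 1 for all w ∈ e i
  have L : ∀ i, i < m → ∀ u, u ∈ e i → (i = 0 ∨ u ∉ e (f i)) → ∀ w, w ∈ e i →
      ∃ pw : (S (m-1)).Walk (some u) (some w), pw.length ≤ cnt i w + 1 := by
    intro i
    induction i using Nat.strong_induction_on with
    | _ i IH =>
      intro him u hu hnew w hw
      rcases Nat.eq_zero_or_pos i with hi0 | hi1
      · subst hi0
        refine ⟨SimpleGraph.Walk.cons (adj0 u hu).symm
          (SimpleGraph.Walk.cons (adj0 w hw) SimpleGraph.Walk.nil), ?_⟩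
        have := hcnt_pos 0 w hw
        simp only [SimpleGraph.Walk.length_cons, SimpleGraph.Walk.length_nil]
        omega
      · have hnew' : u ∉ e (f i) := by
          rcases hnew with h | h
          · omega
          · exact h
        have hpi := hp i hi1 him
        have hpmem : p i ∈ e i := (Finset.mem_inter.mp hpi.1).1
        have hpmem' : p i ∈ e (f i) := (Finset.mem_inter.mp hpi.1).2
        have hadju : (S (m-1)).Adj (some u) (some (p i)) := (adjP i hi1 him u hu hnew').symm
        by_cases hwold : w ∈ e (f i)
        · -- recurse at f i with new vertex p i
          have hfi : f i < i := (hf i hi1 him).1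
          have hpnew : f i = 0 ∨ p i ∉ e (f (f i)) := by
            rcases Nat.eq_zero_or_pos (f i) with h | h
            · exact Or.inl h
            · exact Or.inr (hpi.2 h)
          obtain ⟨q, hq⟩ := IH (f i) hfi (by omega) (p i) hpmem' hpnew w hwold
          refine ⟨SimpleGraph.Walk.cons hadju q, ?_⟩
          have := hcnt_lt i hi1 him w hw
          simp only [SimpleGraph.Walk.length_cons]
          omega
        · -- w is also new: go u - p i - w
          refine ⟨SimpleGraph.Walk.cons hadju
            (SimpleGraph.Walk.cons (adjP i hi1 him w hw hwold) SimpleGraph.Walk.nil), ?_⟩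
          have := hcnt_pos i w hw
          simp only [SimpleGraph.Walk.length_cons, SimpleGraph.Walk.length_nil]
          omega
  -- main walk lemma
  have M : ∀ i, i < m → ∀ u, u ∈ e i → ∀ w, w ∈ e i →
      ∃ pw : (S (m-1)).Walk (some u) (some w), pw.length ≤ d + 1 := by
    intro i
    induction i using Nat.strong_induction_on with
    | _ i IH =>
      intro him u hu w hw
      rcases Nat.eq_zero_or_pos i with hi0 | hi1
      · subst hi0
        obtain ⟨pw, hpw⟩ := L 0 him u hu (Or.inl rfl) w hw
        exact ⟨pw, le_trans hpw (by have := hcnt_le 0 him w; omega)⟩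
      · by_cases huold : u ∈ e (f i)
        · by_cases hwold : w ∈ e (f i)
          · exact IH (f i) (hf i hi1 him).1 (by have := (hf i hi1 him).1; omega) u huold w hwold
          · obtain ⟨pw, hpw⟩ := L i him w hw (Or.inr hwold) u hu
            refine ⟨pw.reverse, ?_⟩
            rw [SimpleGraph.Walk.length_reverse]
            exact le_trans hpw (by have := hcnt_le i him u; omega)
        · obtain ⟨pw, hpw⟩ := L i him u hu (Or.inr huold) w hw
          exact ⟨pw, le_trans hpw (by have := hcnt_le i him w; omega)⟩
  intro i hi u hu w hw
  obtain ⟨pw, hpw⟩ := M i hi u hu w hw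
  exact ⟨pw.reachable, le_trans (SimpleGraph.dist_le pw) hpw⟩
end

section
/- For every ε with 0 < ε < 1/(2e) and all sufficiently large n, there exists a graph on exactly n vertices with maximum degree at most 80·(1/ε)·log(1/ε) which is an ε-expander, i.e., between every two disjoint sets of at least εn vertices there is an edge. -/
open Finset

-- Lemma A: m^m ≤ m! e^m
lemma auxA (m : ℕ) : (m:ℝ)^m ≤ (m.factorial : ℝ) * Real.exp 1 ^ m := by
  induction m with
  | zero => simp
  | succ k ih =>
    have hstep : ((k:ℝ)+1)^k ≤ (k:ℝ)^k * Real.exp 1 := by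
      rcases Nat.eq_zero_or_pos k with hk | hk
      · subst hk; simpa using Real.one_le_exp (by norm_num)
      · have hkpos : (0:ℝ) < k := by exact_mod_cast hk
        have h1 : (k:ℝ)+1 = (k:ℝ) * (1 + 1/k) := by field_simp
        have h2 : (1 + 1/(k:ℝ))^k ≤ Real.exp 1 := by
          have := Real.add_one_le_exp (1/(k:ℝ))
          calc (1 + 1/(k:ℝ))^k ≤ (Real.exp (1/k))^k := by
                apply pow_le_pow_left₀ (by positivity) (by linarith)
            _ = Real.exp 1 := by
                rw [← Real.exp_nat_mul]
                congr 1; field_simp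
        calc ((k:ℝ)+1)^k = (k:ℝ)^k * (1+1/(k:ℝ))^k := by rw [h1, mul_pow]
          _ ≤ (k:ℝ)^k * Real.exp 1 := by
              apply mul_le_mul_of_nonneg_left h2 (by positivity)
    have he : (0:ℝ) < Real.exp 1 := Real.exp_pos 1
    have hk1 : (0:ℝ) ≤ (k:ℝ) + 1 := by positivity
    calc ((k+1:ℕ):ℝ)^(k+1) = ((k:ℝ)+1)^k * ((k:ℝ)+1) := by push_cast; ring
      _ ≤ ((k:ℝ)^k * Real.exp 1) * ((k:ℝ)+1) := by
          apply mul_le_mul_of_nonneg_right hstep hk1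
      _ ≤ ((k.factorial:ℝ) * Real.exp 1 ^ k * Real.exp 1) * ((k:ℝ)+1) := by
          apply mul_le_mul_of_nonneg_right _ hk1
          apply mul_le_mul_of_nonneg_right ih he.le
      _ = ((k+1).factorial : ℝ) * Real.exp 1 ^ (k+1) := by
          rw [Nat.factorial_succ]; push_cast; ring

-- choose bound
lemma auxChoose (n m : ℕ) (hm : 0 < m) :
    (n.choose m : ℝ) ≤ (Real.exp 1 * n / m)^m := by
  have h1 : (n.choose m : ℝ) ≤ (n:ℝ)^m / m.factorial := by
    simpa using Nat.choose_le_pow_div m n (α := ℝ)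
  have hmpos : (0:ℝ) < m := by exact_mod_cast hm
  have hfac : (0:ℝ) < m.factorial := by exact_mod_cast m.factorial_pos
  have key := auxA m
  calc (n.choose m : ℝ) ≤ (n:ℝ)^m / m.factorial := h1
    _ ≤ (Real.exp 1 * n / m)^m := by
        rw [div_pow, mul_pow, div_le_div_iff₀ hfac (by positivity)]
        have hn : (0:ℝ) ≤ (n:ℝ)^m := by positivity
        nlinarith [mul_le_mul_of_nonneg_left key hn]

-- Lemma B: descFactorial ratio
lemma auxB (n m : ℕ) (hm2 : m ≤ n) :
    ((n-m).descFactorial m : ℝ) * (n:ℝ)^m ≤ ((n:ℝ) - m)^m * (n.descFactorial m : ℝ) := by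
  rw [Nat.descFactorial_eq_prod_range, Nat.descFactorial_eq_prod_range]
  push_cast
  rw [show ((n:ℝ))^m = ∏ _i ∈ range m, (n:ℝ) by rw [Finset.prod_const, card_range],
      show ((n:ℝ) - m)^m = ∏ _i ∈ range m, ((n:ℝ) - m) by rw [Finset.prod_const, card_range],
      ← Finset.prod_mul_distrib, ← Finset.prod_mul_distrib]
  apply Finset.prod_le_prod
  · intro i _; positivity
  · intro i _
    by_cases h : m + i ≤ n
    · have h1 : ((n - m - i : ℕ) : ℝ) = (n:ℝ) - m - i := by
        have : i ≤ n - m := by omega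
        push_cast [Nat.cast_sub this, Nat.cast_sub hm2]
        ring
      have h2 : ((n - i : ℕ) : ℝ) = (n:ℝ) - i := by
        have : i ≤ n := by omega
        push_cast [Nat.cast_sub this]; ring
      rw [h1, h2]
      have hi : (0:ℝ) ≤ i := by positivity
      have hm' : (0:ℝ) ≤ m := by positivity
      nlinarith
    · have h1 : (n - m - i : ℕ) = 0 := by omega
      rw [h1]
      have : (0:ℝ) ≤ (n:ℝ) - m := by
        have : (m:ℝ) ≤ n := by exact_mod_cast hm2
        linarith
      simp only [Nat.cast_zero, zero_mul]
      exact mul_nonneg this (Nat.cast_nonneg _)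

lemma fiber_bound {n m : ℕ} (A S : Finset (Fin n)) (hA : A.card = m) (hS : S.card = m)
    (F : Finset (Equiv.Perm (Fin n))) (hF : ∀ π ∈ F, A.image π = S) :
    F.card ≤ m.factorial * (n - m).factorial := by
  classical
  have hmemS : ∀ π ∈ F, ∀ a ∈ A, π a ∈ S := by
    intro π hπ a ha
    rw [← hF π hπ]
    exact Finset.mem_image_of_mem π ha
  have hmemSc : ∀ π ∈ F, ∀ x ∉ A, π x ∉ S := by
    intro π hπ x hx hS'
    rw [← hF π hπ] at hS'
    obtain ⟨a, ha, hax⟩ := Finset.mem_image.mp hS'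
    exact hx (by rwa [π.injective hax] at ha)
  have hinj : ∃ Φ : {π // π ∈ F} → ((A ↪ S) × ((Aᶜ : Finset (Fin n)) ↪ (Sᶜ : Finset (Fin n)))),
      Function.Injective Φ := by
    refine ⟨fun π => (⟨fun a => ⟨π.1 a.1, hmemS π.1 π.2 a.1 a.2⟩, ?_⟩,
      ⟨fun x => ⟨π.1 x.1, Finset.mem_compl.mpr (hmemSc π.1 π.2 x.1 (Finset.mem_compl.mp x.2))⟩, ?_⟩), ?_⟩
    · intro a b hab
      exact Subtype.ext (π.1.injective (congrArg Subtype.val hab))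
    · intro a b hab
      exact Subtype.ext (π.1.injective (congrArg Subtype.val hab))
    · rintro ⟨π, hπ⟩ ⟨π', hπ'⟩ heq
      have h1 := congrArg Prod.fst heq
      have h2 := congrArg Prod.snd heq
      simp only at h1 h2
      refine Subtype.ext (Equiv.ext fun x => ?_)
      by_cases hx : x ∈ A
      · have := DFunLike.congr_fun h1 ⟨x, hx⟩
        exact congrArg Subtype.val this
      · have := DFunLike.congr_fun h2 ⟨x, Finset.mem_compl.mpr hx⟩
        exact congrArg Subtype.val this
  obtain ⟨Φ, hΦ⟩ := hinj
  have hcard := Fintype.card_le_of_injective Φ hΦ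
  rw [Fintype.card_coe] at hcard
  have hAc : (Aᶜ : Finset (Fin n)).card = n - m := by
    rw [Finset.card_compl, hA, Fintype.card_fin]
  have hSc : (Sᶜ : Finset (Fin n)).card = n - m := by
    rw [Finset.card_compl, hS, Fintype.card_fin]
  rw [Fintype.card_prod, Fintype.card_embedding_eq, Fintype.card_embedding_eq,
      Fintype.card_coe, Fintype.card_coe, Fintype.card_coe, Fintype.card_coe,
      hA, hS, hAc, hSc, Nat.descFactorial_self, Nat.descFactorial_self] at hcard
  exact hcard

lemma card_bad {n m : ℕ} (A B : Finset (Fin n)) (hA : A.card = m) (hB : B.card = m) :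
    (univ.filter (fun π : Equiv.Perm (Fin n) => ∀ a ∈ A, π a ∉ B)).card
      ≤ (n - m).choose m * (m.factorial * (n - m).factorial) := by
  classical
  set bad := univ.filter (fun π : Equiv.Perm (Fin n) => ∀ a ∈ A, π a ∉ B) with hbad
  have hmaps : ∀ π ∈ bad, A.image π ∈ (Bᶜ : Finset (Fin n)).powersetCard m := by
    intro π hπ
    rw [Finset.mem_powersetCard]
    constructor
    · intro x hx
      obtain ⟨a, ha, rfl⟩ := Finset.mem_image.mp hx
      exact Finset.mem_compl.mpr ((Finset.mem_filter.mp hπ).2 a ha)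
    · rw [Finset.card_image_of_injective _ π.injective, hA]
  have h1 := Finset.card_eq_sum_card_fiberwise (f := fun π : Equiv.Perm (Fin n) => A.image ⇑π) (t := (Bᶜ : Finset (Fin n)).powersetCard m) hmaps
  rw [h1]
  have h2 : ∀ S ∈ (Bᶜ : Finset (Fin n)).powersetCard m,
      (bad.filter fun π : Equiv.Perm (Fin n) => A.image ⇑π = S).card ≤ m.factorial * (n - m).factorial := by
    intro S hSmem
    obtain ⟨-, hS⟩ := Finset.mem_powersetCard.mp hSmem
    exact fiber_bound A S hA hS _ (fun π hπ => (Finset.mem_filter.mp hπ).2)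
  calc ∑ S ∈ (Bᶜ : Finset (Fin n)).powersetCard m, (bad.filter fun π : Equiv.Perm (Fin n) => A.image ⇑π = S).card
      ≤ ∑ _S ∈ (Bᶜ : Finset (Fin n)).powersetCard m, m.factorial * (n - m).factorial :=
        Finset.sum_le_sum h2
    _ = (n - m).choose m * (m.factorial * (n - m).factorial) := by
        rw [Finset.sum_const, smul_eq_mul, Finset.card_powersetCard, Finset.card_compl,
          hB, Fintype.card_fin]


set_option maxHeartbeats 1000000 in
lemma core (ε : ℝ) (hε0 : 0 < ε) (n m d : ℕ) (hn : 0 < n) (hm0 : 0 < m)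
    (hm1 : ε * n ≤ m) (hm2 : m ≤ n) (hL : 1 < Real.log (1/ε))
    (hd : 5/ε * Real.log (1/ε) ≤ d) :
    ((n.choose m : ℝ))^2 * (((n-m).choose m : ℝ) * ((m.factorial : ℝ) * ((n-m).factorial : ℝ)))^d
      < ((n.factorial : ℝ))^d := by
  have hNpos : (0:ℝ) < (n:ℝ) := by exact_mod_cast hn
  have hMpos : (0:ℝ) < (m:ℝ) := by exact_mod_cast hm0
  have hM1 : (1:ℝ) ≤ (m:ℝ) := by exact_mod_cast hm0
  have hMN : (m:ℝ) ≤ (n:ℝ) := by exact_mod_cast hm2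
  have hD0 : (0:ℝ) ≤ (d:ℝ) := by positivity
  set L := Real.log (1/ε) with hLdef
  set c := (n.choose m : ℝ) with hcdef
  set c' := ((n-m).choose m : ℝ) with hc'def
  set F := ((m.factorial : ℝ) * ((n-m).factorial : ℝ)) with hFdef
  have hF : (0:ℝ) < F := by
    have h1 := m.factorial_pos; have h2 := (n-m).factorial_pos
    have h1' : (0:ℝ) < (m.factorial:ℝ) := by exact_mod_cast h1
    have h2' : (0:ℝ) < ((n-m).factorial:ℝ) := by exact_mod_cast h2
    exact mul_pos h1' h2'
  have hc1 : (1:ℝ) ≤ c := by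
    rw [hcdef]; exact_mod_cast (Nat.choose_pos hm2)
  have hc'0 : (0:ℝ) ≤ c' := by rw [hc'def]; positivity
  have hfact : ((n.factorial : ℝ)) = c * F := by
    have h := Nat.choose_mul_factorial_mul_factorial hm2
    rw [hcdef, hFdef, ← h]; push_cast; ring
  rw [hfact]
  set q := (((n:ℝ) - m)/n)^m with hqdef
  have hb0 : (0:ℝ) ≤ ((n:ℝ) - m)/n := div_nonneg (by linarith) hNpos.le
  have hq0 : (0:ℝ) ≤ q := by rw [hqdef]; positivity
  have key1 : c' ≤ q * c := by
    have hB := auxB n m hm2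
    rw [Nat.descFactorial_eq_factorial_mul_choose, Nat.descFactorial_eq_factorial_mul_choose] at hB
    push_cast at hB
    have hfm : (0:ℝ) < (m.factorial : ℝ) := by exact_mod_cast m.factorial_pos
    have h2 : c' * (n:ℝ)^m ≤ ((n:ℝ) - m)^m * c := by
      rw [hcdef, hc'def]
      nlinarith [hB, hfm, pow_nonneg (by linarith : (0:ℝ) ≤ (n:ℝ) - m) m]
    rw [hqdef, div_pow, div_mul_eq_mul_div, le_div_iff₀ (by positivity : (0:ℝ) < (n:ℝ)^m)]
    linarith [h2]
  have key2 : c'^d ≤ q^d * c^d := by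
    rw [← mul_pow]
    exact pow_le_pow_left₀ hc'0 key1 d
  have hcd : (0:ℝ) < c^d := by positivity
  have hsmall : c^2 * q^d < 1 := by
    have hE : (0:ℝ) < Real.exp 1 := Real.exp_pos 1
    have hEnm : (0:ℝ) < Real.exp 1 * n / m := by positivity
    set y := Real.log (Real.exp 1 * n / m) with hydef
    have hcy : c ≤ Real.exp y ^ m := by
      rw [hydef, Real.exp_log hEnm, hcdef]
      exact auxChoose n m hm0
    have hc2 : c^2 ≤ (Real.exp y ^ m)^2 := pow_le_pow_left₀ (by linarith) hcy 2
    have hbe : ((n:ℝ) - m)/n ≤ Real.exp (-((m:ℝ)/n)) := by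
      have h := Real.add_one_le_exp (-((m:ℝ)/n))
      have heq : ((n:ℝ) - m)/n = 1 - (m:ℝ)/n := by field_simp
      rw [heq]; linarith
    have hqd : q^d ≤ Real.exp (-((m:ℝ)/n)) ^ (m * d) := by
      rw [hqdef, ← pow_mul]
      exact pow_le_pow_left₀ hb0 hbe (m * d)
    have hprod : c^2 * q^d ≤ Real.exp y ^ (m * 2) * Real.exp (-((m:ℝ)/n)) ^ (m * d) := by
      rw [pow_mul]
      exact mul_le_mul hc2 hqd (pow_nonneg hq0 d) (by positivity)
    have hy : y ≤ 1 + L := by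
      rw [hydef]
      have hNM : (n:ℝ) / m ≤ 1/ε := by
        rw [div_le_div_iff₀ hMpos hε0]
        linarith [hm1]
      have h1 : Real.exp 1 * n / m ≤ Real.exp 1 * (1/ε) := by
        rw [mul_div_assoc]
        exact mul_le_mul_of_nonneg_left hNM hE.le
      calc Real.log (Real.exp 1 * n / m) ≤ Real.log (Real.exp 1 * (1/ε)) :=
            Real.log_le_log hEnm h1
        _ = 1 + L := by
            rw [Real.log_mul (ne_of_gt hE) (by positivity), Real.log_exp]
    have hMNe : ε ≤ (m:ℝ) / n := by
      rw [le_div_iff₀ hNpos]; linarith [hm1]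
    have h5 : 5 * L ≤ ε * d := by
      have h := mul_le_mul_of_nonneg_left hd hε0.le
      calc 5 * L = ε * (5/ε * L) := by field_simp
        _ ≤ ε * d := h
    have hL0 : (0:ℝ) < L := by linarith
    have harith : ((m * 2 : ℕ) : ℝ) * y + ((m * d : ℕ) : ℝ) * (-((m:ℝ)/n)) < 0 := by
      push_cast
      have t1 : (m:ℝ) * 2 * y ≤ (m:ℝ) * 2 * (1 + L) := by nlinarith
      have t2 : (m:ℝ) * (5 * L) ≤ (m:ℝ) * ((d:ℝ) * ((m:ℝ)/n)) := by
        have s1 : ε * d ≤ (d:ℝ) * ((m:ℝ)/n) := by nlinarith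
        nlinarith
      nlinarith
    calc c^2 * q^d ≤ Real.exp y ^ (m * 2) * Real.exp (-((m:ℝ)/n)) ^ (m * d) := hprod
      _ = Real.exp (((m * 2 : ℕ) : ℝ) * y + ((m * d : ℕ) : ℝ) * (-((m:ℝ)/n))) := by
          rw [← Real.exp_nat_mul, ← Real.exp_nat_mul, ← Real.exp_add]
      _ < 1 := by
          rw [← Real.exp_zero]
          exact Real.exp_lt_exp.mpr harith
  calc c^2 * (c' * F)^d = (c^2 * c'^d) * F^d := by rw [mul_pow]; ring
    _ ≤ (c^2 * (q^d * c^d)) * F^d := by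
        apply mul_le_mul_of_nonneg_right _ (by positivity)
        apply mul_le_mul_of_nonneg_left key2 (by positivity)
    _ = ((c^2 * q^d) * c^d) * F^d := by ring
    _ < (1 * c^d) * F^d := by
        apply mul_lt_mul_of_pos_right _ (by positivity)
        exact mul_lt_mul_of_pos_right hsmall hcd
    _ = (c * F)^d := by rw [mul_pow]; ring


/-- For every ε with 0 < ε < 1/(2e) and all sufficiently large
n, there exists a graph on exactly n vertices with maximum degree at most
80·(1/ε)·log(1/ε) which is an ε-expander: between every two disjoint sets of
at least εn vertices there is an edge. -/
theorem stmt16 (ε : ℝ) (hε0 : 0 < ε) (hε1 : ε < 1 / (2 * Real.exp 1)) :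
    ∃ n₀ : ℕ, ∀ n : ℕ, n₀ ≤ n → ∃ G : SimpleGraph (Fin n),
      (∀ v, ((G.neighborSet v).ncard : ℝ) ≤ 80 * (1 / ε) * Real.log (1 / ε)) ∧
      ∀ A B : Finset (Fin n), Disjoint A B →
        ε * n ≤ A.card → ε * n ≤ B.card → ∃ a ∈ A, ∃ b ∈ B, G.Adj a b := by
  classical
  set L := Real.log (1/ε) with hLdef
  have hE : (0:ℝ) < Real.exp 1 := Real.exp_pos 1
  have hεinv : 2 * Real.exp 1 < 1/ε := by
    rw [lt_div_iff₀ hε0]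
    calc 2 * Real.exp 1 * ε < 2 * Real.exp 1 * (1 / (2 * Real.exp 1)) := by
          apply mul_lt_mul_of_pos_left hε1 (by positivity)
      _ = 1 := by field_simp
  have hL1 : 1 < L := by
    rw [hLdef]
    have h1 : Real.log (2 * Real.exp 1) < L := by
      apply Real.log_lt_log (by positivity) hεinv
    have h2 : Real.log (2 * Real.exp 1) = Real.log 2 + 1 := by
      rw [Real.log_mul (by norm_num) (ne_of_gt hE), Real.log_exp]
    have h3 : (0:ℝ) < Real.log 2 := Real.log_pos (by norm_num)
    linarith
  have hE1 : (1:ℝ) < Real.exp 1 := by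
    have := Real.exp_one_gt_d9
    norm_num at this
    linarith
  have hε1' : ε < 1 := by
    by_contra h
    push_neg at h
    have h2 : 1/ε ≤ 1 := by
      rw [div_le_one hε0]; linarith
    linarith
  set d := ⌈5/ε * L⌉₊ with hddef
  have hdL : 5/ε * L ≤ (d:ℝ) := Nat.le_ceil _
  have hd1 : (d:ℝ) < 5/ε * L + 1 := Nat.ceil_lt_add_one (by positivity)
  have hd0 : 0 < d := by
    rw [hddef, Nat.ceil_pos]
    positivity
  refine ⟨1, fun n hn => ?_⟩
  have hn0 : 0 < n := hn
  have hnR : (0:ℝ) < n := by exact_mod_cast hn0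
  set m := ⌈ε * n⌉₊ with hmdef
  have hm1 : ε * n ≤ (m:ℝ) := Nat.le_ceil _
  have hm0 : 0 < m := by
    rw [hmdef, Nat.ceil_pos]; positivity
  have hm2 : m ≤ n := by
    rw [hmdef, Nat.ceil_le]
    calc ε * n ≤ 1 * n := by nlinarith
      _ = (n:ℝ) := by ring
  -- existence of a good tuple of permutations
  set K := (n - m).choose m * (m.factorial * (n - m).factorial) with hKdef
  set Bad : Finset (Fin d → Equiv.Perm (Fin n)) :=
    ((univ.powersetCard m) ×ˢ (univ.powersetCard m)).biUnion
      (fun p => univ.filter (fun σ : Fin d → Equiv.Perm (Fin n) =>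
        ∀ t, ∀ a ∈ p.1, σ t a ∉ p.2)) with hBadDef
  have hcardBad : Bad.card < Fintype.card (Fin d → Equiv.Perm (Fin n)) := by
    have h1 : Bad.card ≤ (n.choose m)^2 * K^d := by
      calc Bad.card ≤ ∑ p ∈ (univ.powersetCard m) ×ˢ (univ.powersetCard m),
            (univ.filter (fun σ : Fin d → Equiv.Perm (Fin n) =>
              ∀ t, ∀ a ∈ p.1, σ t a ∉ p.2)).card := Finset.card_biUnion_le
        _ ≤ ∑ _p ∈ (univ.powersetCard m) ×ˢ (univ.powersetCard m), K^d := by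
            apply Finset.sum_le_sum
            rintro ⟨A, B⟩ hp
            rw [Finset.mem_product, Finset.mem_powersetCard_univ, Finset.mem_powersetCard_univ] at hp
            have heq : (univ.filter (fun σ : Fin d → Equiv.Perm (Fin n) =>
                ∀ t, ∀ a ∈ A, σ t a ∉ B))
                = Fintype.piFinset (fun _ : Fin d =>
                  univ.filter (fun π : Equiv.Perm (Fin n) => ∀ a ∈ A, π a ∉ B)) := by
              ext σ
              simp [Fintype.mem_piFinset]
            rw [heq, Fintype.card_piFinset]
            rw [Finset.prod_const, Finset.card_univ, Fintype.card_fin]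
            exact Nat.pow_le_pow_left (card_bad A B hp.1 hp.2) d
        _ = (n.choose m)^2 * K^d := by
            rw [Finset.sum_const, smul_eq_mul, Finset.card_product,
              Finset.card_powersetCard, Finset.card_univ, Fintype.card_fin]
            ring
    have h2 : (n.choose m)^2 * K^d < (n.factorial)^d := by
      have := core ε hε0 n m d hn0 hm0 hm1 hm2 hL1 hdL
      have hKc : (K:ℝ) = ((n-m).choose m : ℝ) * ((m.factorial:ℝ) * ((n-m).factorial:ℝ)) := by
        rw [hKdef]; push_cast; ring
      have hcast : ((n.choose m)^2 * K^d : ℕ) < ((n.factorial)^d : ℕ) := by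
        rw [← Nat.cast_lt (α := ℝ)]
        push_cast
        rw [hKc]
        exact this
      exact_mod_cast hcast
    rw [Fintype.card_fun, Fintype.card_perm, Fintype.card_fin, Fintype.card_fin]
    omega
  obtain ⟨σ, hσ⟩ : ∃ σ : Fin d → Equiv.Perm (Fin n), σ ∉ Bad := by
    by_contra h
    push_neg at h
    have : (univ : Finset (Fin d → Equiv.Perm (Fin n))) ⊆ Bad := fun x _ => h x
    have := Finset.card_le_card this
    rw [Finset.card_univ] at this
    omega
  have hgood : ∀ A B : Finset (Fin n), A.card = m → B.card = m →
      ∃ t, ∃ a ∈ A, σ t a ∈ B := by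
    intro A B hA hB
    by_contra hcon
    push_neg at hcon
    apply hσ
    rw [hBadDef]
    apply Finset.mem_biUnion.mpr
    refine ⟨(A, B), ?_, ?_⟩
    · rw [Finset.mem_product, Finset.mem_powersetCard_univ, Finset.mem_powersetCard_univ]
      exact ⟨hA, hB⟩
    · rw [Finset.mem_filter]
      exact ⟨Finset.mem_univ _, fun t a ha => hcon t a ha⟩
  -- build the graph
  refine ⟨SimpleGraph.fromRel (fun x y => ∃ t, σ t x = y), ?_, ?_⟩
  · intro v
    have hsub : (SimpleGraph.fromRel (fun x y => ∃ t, σ t x = y)).neighborSet v ⊆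
        ((univ.image fun t => σ t v) ∪ (univ.image fun t => (σ t).symm v) : Finset (Fin n)) := by
      intro w hw
      rw [SimpleGraph.mem_neighborSet, SimpleGraph.fromRel_adj] at hw
      obtain ⟨-, h | h⟩ := hw
      · obtain ⟨t, ht⟩ := h
        apply Finset.mem_coe.mpr
        apply Finset.mem_union_left
        exact Finset.mem_image.mpr ⟨t, Finset.mem_univ t, ht⟩
      · obtain ⟨t, ht⟩ := h
        apply Finset.mem_coe.mpr
        apply Finset.mem_union_right
        apply Finset.mem_image.mpr
        exact ⟨t, Finset.mem_univ t, by rw [← ht]; exact (σ t).symm_apply_apply w⟩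
    have hn1 : ((SimpleGraph.fromRel (fun x y => ∃ t, σ t x = y)).neighborSet v).ncard
        ≤ ((univ.image fun t => σ t v) ∪ (univ.image fun t => (σ t).symm v) : Finset (Fin n)).card := by
      rw [← Set.ncard_coe_finset]
      exact Set.ncard_le_ncard hsub (Finset.finite_toSet _)
    have hn2 : ((univ.image fun t => σ t v) ∪ (univ.image fun t => (σ t).symm v) : Finset (Fin n)).card
        ≤ 2 * d := by
      calc _ ≤ (univ.image fun t => σ t v).card + (univ.image fun t => (σ t).symm v).card :=
            Finset.card_union_le _ _
        _ ≤ d + d := by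
            apply Nat.add_le_add
            · calc _ ≤ (univ : Finset (Fin d)).card := Finset.card_image_le
                _ = d := by rw [Finset.card_univ, Fintype.card_fin]
            · calc _ ≤ (univ : Finset (Fin d)).card := Finset.card_image_le
                _ = d := by rw [Finset.card_univ, Fintype.card_fin]
        _ = 2 * d := by ring
    have : (((SimpleGraph.fromRel (fun x y => ∃ t, σ t x = y)).neighborSet v).ncard : ℝ)
        ≤ 2 * d := by exact_mod_cast le_trans hn1 hn2
    have hfin : (2:ℝ) * d ≤ 80 * (1/ε) * L := by
      have hie : (1:ℝ) < 1/ε := by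
        rw [lt_div_iff₀ hε0]; linarith
      have h1 : (2:ℝ) * d < 10 * (1/ε) * L + 2 := by
        have h1' : (5:ℝ)/ε * L = 5 * (1/ε) * L := by ring
        rw [h1'] at hd1
        linarith
      have h2 : (2:ℝ) ≤ 70 * (1/ε) * L := by nlinarith [hie, hL1]
      linarith
    linarith
  · intro A B hAB hA hB
    have hmA : m ≤ A.card := by
      rw [hmdef, Nat.ceil_le]; exact hA
    have hmB : m ≤ B.card := by
      rw [hmdef, Nat.ceil_le]; exact hB
    obtain ⟨A', hA'sub, hA'⟩ := Finset.exists_subset_card_eq hmA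
    obtain ⟨B', hB'sub, hB'⟩ := Finset.exists_subset_card_eq hmB
    obtain ⟨t, a, ha, hab⟩ := hgood A' B' hA' hB'
    refine ⟨a, hA'sub ha, σ t a, hB'sub hab, ?_⟩
    rw [SimpleGraph.fromRel_adj]
    constructor
    · intro h
      have haA : a ∈ A := hA'sub ha
      have haB : a ∈ B := by rw [h]; exact hB'sub hab
      exact (Finset.disjoint_left.mp hAB haA) haB
    · exact Or.inl ⟨t, rfl⟩
end
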